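/- arXiv:2110.12658 — 8 statements merged into one kernel-verified Lean document; each statement's English description precedes it below -/
import Mathlib

section
/- Let P ∈ ℝ^{N×N} be row-stochastic with rows p_1ᵀ, …, p_Nᵀ, let γ ∈ (0,1), and set A = I − γP (which is invertible). Let P̂ be a random N×N matrix whose rows p̂_1, …, p̂_N (viewed as random vectors in ℝ^N) are pairwise independent, square-integrable, and satisfy E[p̂_i] = p_i for every i. Set Ẑ = γ(P − P̂) and Ŷ = Ẑ A^{-1}. Then for any fixed matrix M ∈ ℝ^{N×N}, E[Ŷᵀ M Ŷ] = γ² A^{-T} (Σ_{i=1}^{N} M_{ii} · cov[p̂_i]) A^{-1}, where cov[p̂_i] = E[(p̂_i − p_i)(p̂_i − p_i)ᵀ]. -/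
open MeasureTheory ProbabilityTheory Matrix BigOperators

/-- Let `P` be row-stochastic with rows `p_i`, `γ ∈ (0,1)`, `A = I − γP`.
Let `P̂` be a random matrix whose rows `p̂_i` are pairwise independent, square-integrable and
satisfy `E[p̂_i] = p_i`. Set `Ẑ = γ(P − P̂)` and `Ŷ = Ẑ A⁻¹`. Then for any fixed `M`,
`E[Ŷᵀ M Ŷ] = γ² A⁻ᵀ (Σ_i M_{ii} cov[p̂_i]) A⁻¹`. -/
theorem stmt3 {N : ℕ} {Ω : Type*} [MeasurableSpace Ω] (μ : Measure Ω) [IsProbabilityMeasure μ]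
    (P : Matrix (Fin N) (Fin N) ℝ) (hP0 : ∀ i j, 0 ≤ P i j) (hP1 : ∀ i, ∑ j, P i j = 1)
    (γ : ℝ) (hγ : γ ∈ Set.Ioo (0 : ℝ) 1)
    (phat : Fin N → Ω → (Fin N → ℝ))
    (hmeas : ∀ i, Measurable (phat i))
    (h2 : ∀ i j, MemLp (fun ω => phat i ω j) 2 μ)
    (hmean : ∀ i j, ∫ ω, phat i ω j ∂μ = P i j)
    (hindep : ∀ i j, i ≠ j → IndepFun (phat i) (phat j) μ)
    (M : Matrix (Fin N) (Fin N) ℝ) :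
    letI A : Matrix (Fin N) (Fin N) ℝ := 1 - γ • P
    letI Yhat : Ω → Matrix (Fin N) (Fin N) ℝ :=
      fun ω => (γ • (P - Matrix.of fun i j => phat i ω j)) * A⁻¹
    (Matrix.of fun j k => ∫ ω, ((Yhat ω)ᵀ * M * Yhat ω) j k ∂μ)
      = γ ^ 2 • ((A⁻¹)ᵀ *
          (∑ i, M i i •
            (Matrix.of fun j k => ∫ ω, (phat i ω j - P i j) * (phat i ω k - P i k) ∂μ))
          * A⁻¹) := by
  beta_reduce
  set B : Matrix (Fin N) (Fin N) ℝ := (1 - γ • P)⁻¹ with hB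
  set Yhat : Ω → Matrix (Fin N) (Fin N) ℝ :=
    fun ω => (γ • (P - Matrix.of fun i j => phat i ω j)) * B with hYdef
  set f : Fin N → Fin N → Ω → ℝ := fun s a ω => phat s ω a - P s a with hfdef
  have hf2 : ∀ s a, MemLp (f s a) 2 μ := fun s a => (h2 s a).sub (memLp_const _)
  have hfint : ∀ s a, Integrable (f s a) μ := fun s a => (hf2 s a).integrable one_le_two
  have hmul : ∀ s a t b, Integrable (fun ω => f s a ω * f t b ω) μ := by
    intro s a t b
    have h := ((hf2 t b).smul (hf2 s a)
      (p := 2) (q := 2) (r := 1) (hpqr := ⟨by simp [ENNReal.inv_two_add_inv_two]⟩) : MemLp (f s a • f t b) 1 μ)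
    exact memLp_one_iff_integrable.mp h
  have hmean0 : ∀ s a, ∫ ω, f s a ω ∂μ = 0 := by
    intro s a
    simp only [hfdef]
    rw [integral_sub ((h2 s a).integrable one_le_two) (integrable_const _),
      hmean, integral_const, probReal_univ, one_smul, sub_self]
  set g : Fin N → Fin N → Fin N → Fin N → ℝ :=
    fun s a t b => ∫ ω, f s a ω * f t b ω ∂μ with hgdef
  have hcross : ∀ s a t b, s ≠ t → g s a t b = 0 := by
    intro s a t b hst
    have hind : IndepFun (f s a) (f t b) μ :=
      (hindep s t hst).comp ((measurable_pi_apply a).sub measurable_const)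
        ((measurable_pi_apply b).sub measurable_const)
    have h0 : ∫ ω, (f s a * f t b) ω ∂μ = 0 := by
      rw [hind.integral_mul_eq_mul_integral (hfint s a).1 (hfint t b).1, hmean0, zero_mul]
    simpa only [hgdef, Pi.mul_apply] using h0
  ext j k
  simp only [Matrix.of_apply]
  have hentry : ∀ ω, ((Yhat ω)ᵀ * M * Yhat ω) j k
      = ∑ s, ∑ t, ∑ a, ∑ b,
          ((γ * B a j) * (γ * B b k) * M s t) * (f s a ω * f t b ω) := by
    intro ω
    have hY : ∀ s c, Yhat ω s c = ∑ a, (-(γ * B a c)) * f s a ω := by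
      intro s c
      simp only [Yhat, Matrix.mul_apply, Matrix.smul_apply, Matrix.sub_apply,
        Matrix.of_apply, smul_eq_mul, hfdef, ← hB]
      exact Finset.sum_congr rfl fun a _ => by ring
    calc ((Yhat ω)ᵀ * M * Yhat ω) j k
        = ∑ s, ∑ t, Yhat ω s j * M s t * Yhat ω t k := by
          simp only [Matrix.mul_apply, Matrix.transpose_apply, Finset.sum_mul]
          exact Finset.sum_comm
      _ = _ := by
          refine Finset.sum_congr rfl fun s _ => Finset.sum_congr rfl fun t _ => ?_
          rw [hY s j, hY t k, Finset.sum_mul, Finset.sum_mul]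
          refine Finset.sum_congr rfl fun a _ => ?_
          rw [Finset.mul_sum]
          exact Finset.sum_congr rfl fun b _ => by ring
  have hLHS : ∫ ω, ((Yhat ω)ᵀ * M * Yhat ω) j k ∂μ
      = ∑ s, ∑ t, ∑ a, ∑ b, ((γ * B a j) * (γ * B b k) * M s t) * g s a t b := by
    rw [integral_congr_ae (Filter.Eventually.of_forall hentry)]
    rw [integral_finset_sum _ fun s _ => (integrable_finset_sum _ fun t _ =>
      integrable_finset_sum _ fun a _ => integrable_finset_sum _ fun b _ =>
        Integrable.const_mul (hmul s a t b) _)]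
    refine Finset.sum_congr rfl fun s _ => ?_
    rw [integral_finset_sum _ fun t _ => (integrable_finset_sum _ fun a _ =>
      integrable_finset_sum _ fun b _ => Integrable.const_mul (hmul s a t b) _)]
    refine Finset.sum_congr rfl fun t _ => ?_
    rw [integral_finset_sum _ fun a _ => (integrable_finset_sum _ fun b _ =>
      Integrable.const_mul (hmul s a t b) _)]
    refine Finset.sum_congr rfl fun a _ => ?_
    rw [integral_finset_sum _ fun b _ => (hmul s a t b).const_mul _]
    exact Finset.sum_congr rfl fun b _ => integral_const_mul _ _
  rw [hLHS]
  have hdiag : ∑ s, ∑ t, ∑ a, ∑ b, ((γ * B a j) * (γ * B b k) * M s t) * g s a t b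
      = ∑ s, ∑ a, ∑ b, ((γ * B a j) * (γ * B b k) * M s s) * g s a s b := by
    refine Finset.sum_congr rfl fun s _ => ?_
    rw [Finset.sum_eq_single s (fun t _ hts => ?_) (fun h => absurd (Finset.mem_univ s) h)]
    refine Finset.sum_eq_zero fun a _ => Finset.sum_eq_zero fun b _ => ?_
    rw [hcross s a t b (Ne.symm hts), mul_zero]
  rw [hdiag]
  have reorder : ∀ F : Fin N → Fin N → Fin N → ℝ,
      ∑ s, ∑ a, ∑ b, F s a b = ∑ s, ∑ b, ∑ a, F s a b := fun F =>
    Finset.sum_congr rfl fun _ _ => Finset.sum_comm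
  rw [reorder]
  simp only [Matrix.smul_apply, Matrix.mul_apply, Matrix.transpose_apply, Matrix.sum_apply,
    Matrix.smul_apply, Matrix.of_apply, smul_eq_mul, Finset.mul_sum, Finset.sum_mul, ← hB]
  refine Finset.sum_congr rfl fun b _ => Finset.sum_congr rfl fun a _ =>
    Finset.sum_congr rfl fun s _ => ?_
  simp only [hgdef, hfdef]
  ring
end

section
/- Let P ∈ ℝ^{N×N} be row-stochastic with rows p_1ᵀ, …, p_Nᵀ, let γ ∈ (0,1), and set A = I − γP (which is invertible). Let P̂ be a random N×N matrix whose rows p̂_1, …, p̂_N are pairwise independent, square-integrable, and satisfy E[p̂_i] = p_i for every i. Set Ẑ = γ(P − P̂) and Ŷ = Ẑ A^{-1}. Then E[Ŷ²] = γ² Σ_{i=1}^{N} diag(e_i) A^{-T} cov[p̂_i] A^{-1} and E[(Ŷᵀ)²] = γ² Σ_{i=1}^{N} A^{-T} cov[p̂_i] A^{-1} diag(e_i), where cov[p̂_i] = E[(p̂_i − p_i)(p̂_i − p_i)ᵀ]. -/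
open MeasureTheory ProbabilityTheory Matrix BigOperators

/-- In the setting of Statement 3 (`P` row-stochastic with rows `p_i`,
`γ ∈ (0,1)`, `A = I − γP`, rows `p̂_i` of `P̂` pairwise independent, square-integrable, with
mean `p_i`; `Ẑ = γ(P − P̂)`, `Ŷ = Ẑ A⁻¹`), one has
`E[Ŷ²] = γ² Σ_i diag(e_i) A⁻ᵀ cov[p̂_i] A⁻¹` and
`E[(Ŷᵀ)²] = γ² Σ_i A⁻ᵀ cov[p̂_i] A⁻¹ diag(e_i)`. -/
theorem stmt4 {N : ℕ} {Ω : Type*} [MeasurableSpace Ω] (μ : Measure Ω) [IsProbabilityMeasure μ]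
    (P : Matrix (Fin N) (Fin N) ℝ) (hP0 : ∀ i j, 0 ≤ P i j) (hP1 : ∀ i, ∑ j, P i j = 1)
    (γ : ℝ) (hγ : γ ∈ Set.Ioo (0 : ℝ) 1)
    (phat : Fin N → Ω → (Fin N → ℝ))
    (hmeas : ∀ i, Measurable (phat i))
    (h2 : ∀ i j, MemLp (fun ω => phat i ω j) 2 μ)
    (hmean : ∀ i j, ∫ ω, phat i ω j ∂μ = P i j)
    (hindep : ∀ i j, i ≠ j → IndepFun (phat i) (phat j) μ) :
    letI A : Matrix (Fin N) (Fin N) ℝ := 1 - γ • P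
    letI Yhat : Ω → Matrix (Fin N) (Fin N) ℝ :=
      fun ω => (γ • (P - Matrix.of fun i j => phat i ω j)) * A⁻¹
    letI cov : Fin N → Matrix (Fin N) (Fin N) ℝ :=
      fun i => Matrix.of fun j k => ∫ ω, (phat i ω j - P i j) * (phat i ω k - P i k) ∂μ
    ((Matrix.of fun j k => ∫ ω, (Yhat ω ^ 2) j k ∂μ)
        = γ ^ 2 • ∑ i, Matrix.single i i (1 : ℝ) * (A⁻¹)ᵀ * cov i * A⁻¹)
    ∧ ((Matrix.of fun j k => ∫ ω, ((Yhat ω)ᵀ ^ 2) j k ∂μ)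
        = γ ^ 2 • ∑ i, (A⁻¹)ᵀ * cov i * A⁻¹ * Matrix.single i i (1 : ℝ)) := by
  beta_reduce
  set A : Matrix (Fin N) (Fin N) ℝ := 1 - γ • P with hA
  -- basic facts about the centered rows
  have hq2 : ∀ i a, MemLp (fun ω => phat i ω a - P i a) 2 μ :=
    fun i a => (h2 i a).sub (memLp_const _)
  have hqint : ∀ i a, Integrable (fun ω => phat i ω a - P i a) μ :=
    fun i a => (hq2 i a).integrable one_le_two
  have hqmean : ∀ i a, ∫ ω, (phat i ω a - P i a) ∂μ = 0 := by
    intro i a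
    rw [integral_sub ((h2 i a).integrable one_le_two) (integrable_const _), hmean,
      integral_const, probReal_univ]
    simp
  have hmulint : ∀ i a b c,
      Integrable (fun ω => (phat i ω a - P i a) * (phat b ω c - P b c)) μ := by
    intro i a b c
    have h := ((hq2 b c).smul (hq2 i a)
      (p := 2) (q := 2) (r := 1)).integrable le_rfl
    exact h
  have hzero : ∀ i a b c, i ≠ b →
      ∫ ω, (phat i ω a - P i a) * (phat b ω c - P b c) ∂μ = 0 := by
    intro i a b c hib
    have hind : IndepFun (fun ω => phat i ω a - P i a) (fun ω => phat b ω c - P b c) μ :=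
      (hindep i b hib).comp ((measurable_pi_apply a).sub measurable_const)
        ((measurable_pi_apply c).sub measurable_const)
    rw [hind.integral_fun_mul_eq_mul_integral (hqint i a).aestronglyMeasurable (hqint b c).aestronglyMeasurable,
      hqmean, hqmean, mul_zero]
  -- entrywise expansion of `(γ • (P - Matrix.of fun i j => phat i ω j) * A⁻¹) ^ 2`
  have hYsq : ∀ (j k : Fin N) (ω : Ω), ((γ • (P - Matrix.of fun i j => phat i ω j) * A⁻¹) ^ 2) j k
      = ∑ b, ∑ a, ∑ c, (γ * A⁻¹ a b * (γ * A⁻¹ c k)) *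
          ((phat j ω a - P j a) * (phat b ω c - P b c)) := by
    intro j k ω
    have hY : ∀ u v, (γ • (P - Matrix.of fun i j => phat i ω j) * A⁻¹) u v
        = ∑ a, (γ * (P u a - phat u ω a)) * A⁻¹ a v := by
      intro u v
      simp [Matrix.mul_apply, Matrix.smul_apply, Matrix.sub_apply, smul_eq_mul]
    rw [pow_two, Matrix.mul_apply]
    refine Finset.sum_congr rfl fun b _ => ?_
    rw [hY, hY, Finset.sum_mul_sum]
    refine Finset.sum_congr rfl fun a _ => Finset.sum_congr rfl fun c _ => ?_
    ring
  -- the expectation of an entry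
  have hLHS : ∀ j k : Fin N, ∫ ω, ((γ • (P - Matrix.of fun i j => phat i ω j) * A⁻¹) ^ 2) j k ∂μ
      = ∑ a, ∑ c, (γ * A⁻¹ a j * (γ * A⁻¹ c k)) * ((Matrix.of fun a c => ∫ ω, (phat j ω a - P j a) * (phat j ω c - P j c) ∂μ : Matrix (Fin N) (Fin N) ℝ) a c) := by
    intro j k
    have h1 : ∫ ω, ((γ • (P - Matrix.of fun i j => phat i ω j) * A⁻¹) ^ 2) j k ∂μ
        = ∑ b, ∑ a, ∑ c, (γ * A⁻¹ a b * (γ * A⁻¹ c k)) *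
            ∫ ω, (phat j ω a - P j a) * (phat b ω c - P b c) ∂μ := by
      simp_rw [hYsq]
      rw [integral_finset_sum _ (fun b _ => by
        exact integrable_finset_sum _ (fun a _ => integrable_finset_sum _
          (fun c _ => (hmulint j a b c).const_mul _)))]
      refine Finset.sum_congr rfl fun b _ => ?_
      rw [integral_finset_sum _ (fun a _ => integrable_finset_sum _
        (fun c _ => (hmulint j a b c).const_mul _))]
      refine Finset.sum_congr rfl fun a _ => ?_
      rw [integral_finset_sum _ (fun c _ => (hmulint j a b c).const_mul _)]
      refine Finset.sum_congr rfl fun c _ => ?_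
      exact integral_const_mul _ _
    rw [h1, Finset.sum_eq_single j]
    · rfl
    · intro b _ hbj
      refine Finset.sum_eq_zero fun a _ => Finset.sum_eq_zero fun c _ => ?_
      rw [hzero j a b c (Ne.symm hbj), mul_zero]
    · intro h; exact absurd (Finset.mem_univ j) h
  -- entrywise value of the right-hand side of the first identity
  have hstd : ∀ (i : Fin N) (M : Matrix (Fin N) (Fin N) ℝ) (j k : Fin N),
      (Matrix.single i i (1 : ℝ) * M) j k = if j = i then M i k else 0 := by
    intro i M j k
    simp [Matrix.mul_apply, Matrix.single, ite_and, eq_comm]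
  have hRHS : ∀ j k : Fin N,
      (γ ^ 2 • ∑ i, Matrix.single i i (1 : ℝ) * (A⁻¹)ᵀ * (Matrix.of fun j k => ∫ ω, (phat i ω j - P i j) * (phat i ω k - P i k) ∂μ : Matrix (Fin N) (Fin N) ℝ) * A⁻¹) j k
      = ∑ a, ∑ c, (γ * A⁻¹ a j * (γ * A⁻¹ c k)) * ((Matrix.of fun a c => ∫ ω, (phat j ω a - P j a) * (phat j ω c - P j c) ∂μ : Matrix (Fin N) (Fin N) ℝ) a c) := by
    intro j k
    have : ∀ i : Fin N, (Matrix.single i i (1 : ℝ) * (A⁻¹)ᵀ * (Matrix.of fun j k => ∫ ω, (phat i ω j - P i j) * (phat i ω k - P i k) ∂μ : Matrix (Fin N) (Fin N) ℝ) * A⁻¹) j k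
        = if j = i then ((A⁻¹)ᵀ * ((Matrix.of fun j k => ∫ ω, (phat i ω j - P i j) * (phat i ω k - P i k) ∂μ : Matrix (Fin N) (Fin N) ℝ) * A⁻¹)) i k else 0 := by
      intro i
      rw [mul_assoc, mul_assoc]
      exact hstd i _ j k
    simp only [Matrix.smul_apply, Matrix.sum_apply, smul_eq_mul, this]
    rw [Finset.sum_ite_eq Finset.univ j
      (fun i => ((A⁻¹)ᵀ * ((Matrix.of fun j k => ∫ ω, (phat i ω j - P i j) * (phat i ω k - P i k) ∂μ : Matrix (Fin N) (Fin N) ℝ) * A⁻¹)) i k), if_pos (Finset.mem_univ j)]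
    simp only [Matrix.mul_apply, Matrix.transpose_apply, Finset.mul_sum]
    refine Finset.sum_congr rfl fun a _ => Finset.sum_congr rfl fun c _ => ?_
    ring
  constructor
  · ext j k
    rw [Matrix.of_apply, hLHS, hRHS]
  · -- the transposed identity
    have hcovsym : ∀ (i : Fin N) (a c : Fin N), (Matrix.of fun j k => ∫ ω, (phat i ω j - P i j) * (phat i ω k - P i k) ∂μ : Matrix (Fin N) (Fin N) ℝ) a c = (Matrix.of fun j k => ∫ ω, (phat i ω j - P i j) * (phat i ω k - P i k) ∂μ : Matrix (Fin N) (Fin N) ℝ) c a := by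
      intro i a c
      show (∫ ω, (phat i ω a - P i a) * (phat i ω c - P i c) ∂μ)
        = ∫ ω, (phat i ω c - P i c) * (phat i ω a - P i a) ∂μ
      exact congrArg (integral μ) (funext fun ω => mul_comm _ _)
    have hstd' : ∀ (i : Fin N) (M : Matrix (Fin N) (Fin N) ℝ) (j k : Fin N),
        (M * Matrix.single i i (1 : ℝ)) j k = if k = i then M j i else 0 := by
      intro i M j k
      simp [Matrix.mul_apply, Matrix.single, ite_and, eq_comm]
    ext j k
    rw [Matrix.of_apply]
    have hT : ∀ ω : Ω, ((γ • (P - Matrix.of fun i j => phat i ω j) * A⁻¹)ᵀ ^ 2) j k = ((γ • (P - Matrix.of fun i j => phat i ω j) * A⁻¹) ^ 2) k j := by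
      intro ω
      rw [← Matrix.transpose_pow, Matrix.transpose_apply]
    simp_rw [hT]
    rw [hLHS k j]
    have : ∀ i : Fin N, ((A⁻¹)ᵀ * (Matrix.of fun j k => ∫ ω, (phat i ω j - P i j) * (phat i ω k - P i k) ∂μ : Matrix (Fin N) (Fin N) ℝ) * A⁻¹ * Matrix.single i i (1 : ℝ)) j k
        = if k = i then ((A⁻¹)ᵀ * ((Matrix.of fun j k => ∫ ω, (phat i ω j - P i j) * (phat i ω k - P i k) ∂μ : Matrix (Fin N) (Fin N) ℝ) * A⁻¹)) j i else 0 := by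
      intro i
      rw [hstd', mul_assoc]
    simp only [Matrix.smul_apply, Matrix.sum_apply, smul_eq_mul, this]
    rw [Finset.sum_ite_eq Finset.univ k
      (fun i => ((A⁻¹)ᵀ * ((Matrix.of fun j k => ∫ ω, (phat i ω j - P i j) * (phat i ω k - P i k) ∂μ : Matrix (Fin N) (Fin N) ℝ) * A⁻¹)) j i), if_pos (Finset.mem_univ k)]
    simp only [Matrix.mul_apply, Matrix.transpose_apply, Finset.mul_sum]
    conv_lhs => rw [Finset.sum_comm]
    refine Finset.sum_congr rfl fun a _ => Finset.sum_congr rfl fun c _ => ?_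
    rw [hcovsym k c a]
    ring
end

section
/- Let P̂ be a random row-stochastic N×N matrix on a probability space, let γ ∈ (0,1), let P be a fixed row-stochastic matrix, and set A = I − γP, Âhat = I − γP̂, Ŷ = (A − Âhat)A^{-1} = γ(P − P̂)A^{-1}. Let b̂ be a square-integrable random vector independent of P̂ with E[b̂] = b, and let M ∈ ℝ^{N×N} be symmetric positive definite. Define v̂ = Âhat^{-1} b̂. Then: (i) E[bᵀ M A v̂] = E[bᵀ M (I − Ŷ)^{-1} b]; and (ii) E[v̂ᵀ Aᵀ M A v̂] = E[bᵀ (I − Ŷ)^{-T} M (I − Ŷ)^{-1} b] + E[tr(cov[b̂] · (I − Ŷ)^{-T} M (I − Ŷ)^{-1})], where cov[b̂] = E[(b̂ − b)(b̂ − b)ᵀ]. Consequently, whenever the denominator is nonzero, the optimal augmentation factor ε* = E[bᵀ M A v̂] / E[v̂ᵀ Aᵀ M A v̂] equals E[bᵀ M (I − Ŷ)^{-1} b] / (E[bᵀ (I − Ŷ)^{-T} M (I − Ŷ)^{-1} b] + E[tr(cov[b̂] (I − Ŷ)^{-T} M (I − Ŷ)^{-1})]). -/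
open MeasureTheory ProbabilityTheory Matrix BigOperators

attribute [local instance] Matrix.linftyOpNormedAddCommGroup Matrix.linftyOpNormedRing

namespace Stmt5Helper

variable {N : ℕ}

lemma entry_abs_le_norm (B : Matrix (Fin N) (Fin N) ℝ) (i j : Fin N) : |B i j| ≤ ‖B‖ := by
  rw [Matrix.linfty_opNorm_def]
  have h1 : ‖B i j‖₊ ≤ ∑ k, ‖B i k‖₊ :=
    Finset.single_le_sum (f := fun k => ‖B i k‖₊) (fun _ _ => zero_le) (Finset.mem_univ j)
  have h2 : (∑ k, ‖B i k‖₊) ≤ (Finset.univ : Finset (Fin N)).sup fun i => ∑ j, ‖B i j‖₊ :=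
    Finset.le_sup (f := fun i => ∑ j, ‖B i j‖₊) (Finset.mem_univ i)
  calc |B i j| = (‖B i j‖₊ : ℝ) := by simp [Real.norm_eq_abs]
    _ ≤ _ := NNReal.coe_le_coe.2 (h1.trans h2)

lemma norm_smul_stoch {γ : ℝ} (hγ0 : 0 ≤ γ) (Q : Matrix (Fin N) (Fin N) ℝ)
    (h0 : ∀ i j, 0 ≤ Q i j) (h1 : ∀ i, ∑ j, Q i j = 1) : ‖γ • Q‖ ≤ γ := by
  rw [Matrix.linfty_opNorm_def]
  have key : ∀ i : Fin N, (∑ j, ‖(γ • Q) i j‖₊) ≤ γ.toNNReal := by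
    intro i
    rw [← NNReal.coe_le_coe, NNReal.coe_sum, Real.coe_toNNReal _ hγ0]
    have : ∀ j, (‖(γ • Q) i j‖₊ : ℝ) = γ * Q i j := by
      intro j
      simp [Matrix.smul_apply, Real.norm_eq_abs, abs_mul, abs_of_nonneg hγ0,
        abs_of_nonneg (h0 i j)]
    rw [Finset.sum_congr rfl fun j _ => this j, ← Finset.mul_sum, h1 i, mul_one]
  calc ((Finset.univ.sup fun i => ∑ j, ‖(γ • Q) i j‖₊ : NNReal) : ℝ)
      ≤ (γ.toNNReal : ℝ) := NNReal.coe_le_coe.2 (Finset.sup_le fun i _ => key i)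
    _ = γ := Real.coe_toNNReal _ hγ0

lemma isUnit_det_one_sub {γ : ℝ} (hγ : γ ∈ Set.Ioo (0:ℝ) 1) (Q : Matrix (Fin N) (Fin N) ℝ)
    (h0 : ∀ i j, 0 ≤ Q i j) (h1 : ∀ i, ∑ j, Q i j = 1) :
    IsUnit (1 - γ • Q).det := by
  haveI : CompleteSpace (Matrix (Fin N) (Fin N) ℝ) := FiniteDimensional.complete ℝ _
  haveI : HasSummableGeomSeries (Matrix (Fin N) (Fin N) ℝ) :=
    @instHasSummableGeomSeriesOfCompleteSpace _ _ (Matrix.instCompleteSpace _ _ _)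
  have ht : ‖γ • Q‖ < 1 := lt_of_le_of_lt (norm_smul_stoch hγ.1.le Q h0 h1) hγ.2
  exact (Matrix.isUnit_iff_isUnit_det _).1 (isUnit_one_sub_of_norm_lt_one ht)

lemma norm_inv_one_sub_le {γ : ℝ} (hγ : γ ∈ Set.Ioo (0:ℝ) 1) (Q : Matrix (Fin N) (Fin N) ℝ)
    (h0 : ∀ i j, 0 ≤ Q i j) (h1 : ∀ i, ∑ j, Q i j = 1) :
    ‖(1 - γ • Q)⁻¹‖ ≤ ‖(1 : Matrix (Fin N) (Fin N) ℝ)‖ - 1 + (1 - γ)⁻¹ := by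
  haveI : CompleteSpace (Matrix (Fin N) (Fin N) ℝ) := FiniteDimensional.complete ℝ _
  haveI : HasSummableGeomSeries (Matrix (Fin N) (Fin N) ℝ) :=
    @instHasSummableGeomSeriesOfCompleteSpace _ _ (Matrix.instCompleteSpace _ _ _)
  have hb := norm_smul_stoch hγ.1.le Q h0 h1
  have ht : ‖γ • Q‖ < 1 := lt_of_le_of_lt hb hγ.2
  rw [Matrix.nonsing_inv_eq_ringInverse, ← geom_series_eq_inverse _ ht]
  refine (tsum_geometric_le_of_norm_lt_one _ ht).trans ?_
  have h2 : (1 - ‖γ • Q‖)⁻¹ ≤ (1 - γ)⁻¹ := by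
    apply inv_anti₀ (by linarith [hγ.2]) (by linarith)
  linarith

variable {α : Type*} [MeasurableSpace α]

lemma meas_det (f : α → Matrix (Fin N) (Fin N) ℝ)
    (hf : ∀ i j, Measurable fun a => f a i j) : Measurable fun a => (f a).det := by
  simp only [Matrix.det_apply']
  exact Finset.measurable_sum _ fun σ _ =>
    (Finset.measurable_prod _ fun i _ => hf _ _).const_mul _

lemma meas_inv_entry (f : α → Matrix (Fin N) (Fin N) ℝ)
    (hf : ∀ i j, Measurable fun a => f a i j) (i j : Fin N) :
    Measurable fun a => (f a)⁻¹ i j := by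
  simp only [Matrix.inv_def, Matrix.smul_apply, smul_eq_mul, Ring.inverse_eq_inv',
    Matrix.adjugate_apply]
  refine Measurable.mul ((meas_det f hf).inv) ?_
  refine meas_det (fun a => (f a).updateRow j (Pi.single i 1)) (fun i' j' => ?_)
  by_cases h : i' = j
  · simp only [Matrix.updateRow_apply, h, if_true]; exact measurable_const
  · simp only [Matrix.updateRow_apply, h, if_false]; exact hf i' j'

end Stmt5Helper

open Stmt5Helper in
/-- Let `P̂` be a random row-stochastic `N×N` matrix, `γ ∈ (0,1)`, `P` a fixed
row-stochastic matrix, `A = I − γP`, `Âhat = I − γP̂`, `Ŷ = (A − Âhat)A⁻¹ = γ(P − P̂)A⁻¹`.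
Let `b̂` be a square-integrable random vector independent of `P̂` with `E[b̂] = b`, and let `M`
be symmetric positive definite. Define `v̂ = Âhat⁻¹ b̂`. Then:
(i)  `E[bᵀ M A v̂] = E[bᵀ M (I − Ŷ)⁻¹ b]`;
(ii) `E[v̂ᵀ Aᵀ M A v̂] = E[bᵀ (I − Ŷ)⁻ᵀ M (I − Ŷ)⁻¹ b] + E[tr(cov[b̂] (I − Ŷ)⁻ᵀ M (I − Ŷ)⁻¹)]`;
and consequently, whenever the denominator is nonzero, the optimal augmentation factor
`ε* = E[bᵀ M A v̂] / E[v̂ᵀ Aᵀ M A v̂]` equals the corresponding ratio. -/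
theorem stmt5 {N : ℕ} {Ω : Type*} [MeasurableSpace Ω] (μ : Measure Ω) [IsProbabilityMeasure μ]
    (P : Matrix (Fin N) (Fin N) ℝ) (hP0 : ∀ i j, 0 ≤ P i j) (hP1 : ∀ i, ∑ j, P i j = 1)
    (γ : ℝ) (hγ : γ ∈ Set.Ioo (0 : ℝ) 1)
    (Phat : Ω → Fin N → Fin N → ℝ) (hPhatmeas : Measurable Phat)
    (hPhat0 : ∀ ω i j, 0 ≤ Phat ω i j) (hPhat1 : ∀ ω i, ∑ j, Phat ω i j = 1)
    (bhat : Ω → (Fin N → ℝ)) (hbmeas : Measurable bhat)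
    (hb2 : ∀ i, MemLp (fun ω => bhat ω i) 2 μ)
    (hindep : IndepFun bhat Phat μ)
    (b : Fin N → ℝ) (hbmean : ∀ i, ∫ ω, bhat ω i ∂μ = b i)
    (M : Matrix (Fin N) (Fin N) ℝ) (hM : M.PosDef) :
    letI A : Matrix (Fin N) (Fin N) ℝ := 1 - γ • P
    letI Ahat : Ω → Matrix (Fin N) (Fin N) ℝ := fun ω => 1 - γ • Matrix.of (Phat ω)
    letI Yhat : Ω → Matrix (Fin N) (Fin N) ℝ := fun ω => (A - Ahat ω) * A⁻¹
    letI vhat : Ω → Fin N → ℝ := fun ω => (Ahat ω)⁻¹ *ᵥ bhat ω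
    letI covb : Matrix (Fin N) (Fin N) ℝ :=
      Matrix.of fun i j => ∫ ω, (bhat ω i - b i) * (bhat ω j - b j) ∂μ
    (∫ ω, b ⬝ᵥ (M *ᵥ (A *ᵥ vhat ω)) ∂μ
        = ∫ ω, b ⬝ᵥ (M *ᵥ ((1 - Yhat ω)⁻¹ *ᵥ b)) ∂μ)
    ∧ (∫ ω, (A *ᵥ vhat ω) ⬝ᵥ (M *ᵥ (A *ᵥ vhat ω)) ∂μ
        = (∫ ω, ((1 - Yhat ω)⁻¹ *ᵥ b) ⬝ᵥ (M *ᵥ ((1 - Yhat ω)⁻¹ *ᵥ b)) ∂μ)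
          + ∫ ω, Matrix.trace (covb * (((1 - Yhat ω)⁻¹)ᵀ * M * (1 - Yhat ω)⁻¹)) ∂μ)
    ∧ ((∫ ω, (A *ᵥ vhat ω) ⬝ᵥ (M *ᵥ (A *ᵥ vhat ω)) ∂μ) ≠ 0 →
        (∫ ω, b ⬝ᵥ (M *ᵥ (A *ᵥ vhat ω)) ∂μ)
            / (∫ ω, (A *ᵥ vhat ω) ⬝ᵥ (M *ᵥ (A *ᵥ vhat ω)) ∂μ)
          = (∫ ω, b ⬝ᵥ (M *ᵥ ((1 - Yhat ω)⁻¹ *ᵥ b)) ∂μ)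
            / ((∫ ω, ((1 - Yhat ω)⁻¹ *ᵥ b) ⬝ᵥ (M *ᵥ ((1 - Yhat ω)⁻¹ *ᵥ b)) ∂μ)
              + ∫ ω, Matrix.trace (covb * (((1 - Yhat ω)⁻¹)ᵀ * M * (1 - Yhat ω)⁻¹)) ∂μ)) := by
  show _ ∧ _ ∧ _
  have hAdet : IsUnit (1 - γ • P).det := isUnit_det_one_sub hγ P hP0 hP1
  have hQdet : ∀ ω, IsUnit (1 - γ • Matrix.of (Phat ω)).det := fun ω =>
    isUnit_det_one_sub hγ _ (hPhat0 ω) (hPhat1 ω)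
  set F : (Fin N → Fin N → ℝ) → Matrix (Fin N) (Fin N) ℝ :=
    fun q => (1 - γ • P) * (1 - γ • Matrix.of q)⁻¹ with hF
  have hrw : ∀ ω, (1 - ((1 - γ • P) - (1 - γ • Matrix.of (Phat ω))) * (1 - γ • P)⁻¹)⁻¹
      = F (Phat ω) := by
    intro ω
    have h1 : (1 : Matrix (Fin N) (Fin N) ℝ)
        - ((1 - γ • P) - (1 - γ • Matrix.of (Phat ω))) * (1 - γ • P)⁻¹
        = (1 - γ • Matrix.of (Phat ω)) * (1 - γ • P)⁻¹ := by
      rw [Matrix.sub_mul, Matrix.mul_nonsing_inv _ hAdet, sub_sub_cancel]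
    rw [h1, Matrix.mul_inv_rev, Matrix.nonsing_inv_nonsing_inv _ hAdet, hF]
  have hmv : ∀ ω, (1 - γ • P) *ᵥ ((1 - γ • Matrix.of (Phat ω))⁻¹ *ᵥ bhat ω)
      = F (Phat ω) *ᵥ bhat ω := fun ω => (Matrix.mulVec_mulVec _ _ _)
  simp only [hrw, hmv]
  set c : (Fin N → Fin N → ℝ) → Fin N → ℝ := fun q => (b ᵥ* M) ᵥ* F q with hc
  set K : (Fin N → Fin N → ℝ) → Matrix (Fin N) (Fin N) ℝ := fun q => (F q)ᵀ * M * F q with hK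
  have hcx : ∀ (q : Fin N → Fin N → ℝ) (x : Fin N → ℝ),
      b ⬝ᵥ (M *ᵥ (F q *ᵥ x)) = ∑ j, c q j * x j := by
    intro q x
    rw [Matrix.dotProduct_mulVec, Matrix.dotProduct_mulVec]
    rfl
  have hKx : ∀ (q : Fin N → Fin N → ℝ) (x : Fin N → ℝ),
      (F q *ᵥ x) ⬝ᵥ (M *ᵥ (F q *ᵥ x)) = ∑ i, ∑ j, K q i j * (x i * x j) := by
    intro q x
    have h1 : (F q *ᵥ x) ⬝ᵥ (M *ᵥ (F q *ᵥ x)) = (x ᵥ* K q) ⬝ᵥ x := by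
      rw [Matrix.mulVec_mulVec, show F q *ᵥ x = x ᵥ* (F q)ᵀ from (Matrix.vecMul_transpose _ _).symm,
        Matrix.dotProduct_mulVec, Matrix.vecMul_vecMul]
      simp only [hK, Matrix.mul_assoc]
    rw [h1]
    simp only [Matrix.vecMul, dotProduct, Finset.sum_mul]
    rw [Finset.sum_comm]
    exact Finset.sum_congr rfl fun i _ => Finset.sum_congr rfl fun j _ => by ring
  have htr : ∀ q : Fin N → Fin N → ℝ,
      Matrix.trace ((Matrix.of fun i j => ∫ ω, (bhat ω i - b i) * (bhat ω j - b j) ∂μ)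
          * ((F q)ᵀ * M * F q))
        = ∑ i, ∑ j, (∫ ω, (bhat ω i - b i) * (bhat ω j - b j) ∂μ) * K q j i := by
    intro q
    simp only [Matrix.trace, Matrix.diag, Matrix.mul_apply, Matrix.of_apply, hK]
  simp only [hcx, hKx, htr]
  -- measurability
  have hent : ∀ i' j', Measurable fun q : Fin N → Fin N → ℝ => (1 - γ • Matrix.of q) i' j' := by
    intro i' j'
    have h : (fun q : Fin N → Fin N → ℝ => (1 - γ • Matrix.of q) i' j')
        = fun q => (1 : Matrix (Fin N) (Fin N) ℝ) i' j' - γ * q i' j' := by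
      funext q; simp [Matrix.sub_apply, Matrix.smul_apply, smul_eq_mul]
    rw [h]
    have hq : Measurable fun q : Fin N → Fin N → ℝ => q i' j' :=
      (measurable_pi_apply j').comp (measurable_pi_apply i')
    exact measurable_const.sub (hq.const_mul γ)
  have hFmeas : ∀ i j, Measurable fun q : Fin N → Fin N → ℝ => F q i j := by
    intro i j
    simp only [hF, Matrix.mul_apply]
    exact Finset.measurable_sum _ fun k _ =>
      (meas_inv_entry _ hent k j).const_mul ((1 - γ • P) i k)
  have hcmeas : ∀ j, Measurable fun q : Fin N → Fin N → ℝ => c q j := by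
    intro j
    simp only [hc, Matrix.vecMul, dotProduct]
    exact Finset.measurable_sum _ fun i _ => (hFmeas i j).const_mul _
  have hKmeas : ∀ i j, Measurable fun q : Fin N → Fin N → ℝ => K q i j := by
    intro i j
    simp only [hK, Matrix.mul_apply, Matrix.transpose_apply]
    exact Finset.measurable_sum _ fun k _ => ((Finset.measurable_sum _ fun a _ =>
      (hFmeas a i).mul_const (M a k)).mul (hFmeas k j))
  -- bounds
  obtain ⟨C, hC0, hCb⟩ : ∃ C, 0 ≤ C ∧ ∀ ω i j, |F (Phat ω) i j| ≤ C := by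
    refine ⟨max (‖(1 - γ • P : Matrix (Fin N) (Fin N) ℝ)‖ *
      (‖(1 : Matrix (Fin N) (Fin N) ℝ)‖ - 1 + (1 - γ)⁻¹)) 0, le_max_right _ _,
      fun ω i j => le_trans ?_ (le_max_left _ _)⟩
    calc |F (Phat ω) i j| ≤ ‖F (Phat ω)‖ := entry_abs_le_norm _ i j
      _ ≤ ‖(1 - γ • P : Matrix (Fin N) (Fin N) ℝ)‖ * ‖(1 - γ • Matrix.of (Phat ω))⁻¹‖ :=
          norm_mul_le _ _
      _ ≤ _ := mul_le_mul_of_nonneg_left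
          (norm_inv_one_sub_le hγ _ (hPhat0 ω) (hPhat1 ω)) (norm_nonneg _)
  have hcb : ∀ ω j, |c (Phat ω) j| ≤ (∑ i, |(b ᵥ* M) i|) * C := by
    intro ω j
    have he : c (Phat ω) j = ∑ i, (b ᵥ* M) i * F (Phat ω) i j := by
      simp only [hc, Matrix.vecMul, dotProduct]
    rw [he]
    calc |∑ i, (b ᵥ* M) i * F (Phat ω) i j| ≤ ∑ i, |(b ᵥ* M) i * F (Phat ω) i j| :=
        Finset.abs_sum_le_sum_abs _ _
      _ ≤ ∑ i, |(b ᵥ* M) i| * C := Finset.sum_le_sum fun i _ => by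
          rw [abs_mul]; exact mul_le_mul_of_nonneg_left (hCb ω i j) (abs_nonneg _)
      _ = _ := (Finset.sum_mul _ _ _).symm
  have hKb : ∀ ω i j, |K (Phat ω) i j| ≤ ∑ k, (∑ a, C * |M a k|) * C := by
    intro ω i j
    have he : K (Phat ω) i j = ∑ k, (∑ a, F (Phat ω) a i * M a k) * F (Phat ω) k j := by
      simp only [hK, Matrix.mul_apply, Matrix.transpose_apply]
    rw [he]
    calc |∑ k, (∑ a, F (Phat ω) a i * M a k) * F (Phat ω) k j|
        ≤ ∑ k, |(∑ a, F (Phat ω) a i * M a k) * F (Phat ω) k j| :=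
          Finset.abs_sum_le_sum_abs _ _
      _ ≤ ∑ k, (∑ a, C * |M a k|) * C := Finset.sum_le_sum fun k _ => by
          rw [abs_mul]
          refine mul_le_mul ?_ (hCb ω k j) (abs_nonneg _) ?_
          · refine (Finset.abs_sum_le_sum_abs _ _).trans (Finset.sum_le_sum fun a _ => ?_)
            rw [abs_mul]
            exact mul_le_mul_of_nonneg_right (hCb ω a i) (abs_nonneg _)
          · exact Finset.sum_nonneg fun a _ => mul_nonneg hC0 (abs_nonneg _)
  -- integrability
  have hbint : ∀ j, Integrable (fun ω => bhat ω j) μ := fun j => (hb2 j).integrable one_le_two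
  have hbb : ∀ i j, Integrable (fun ω => bhat ω i * bhat ω j) μ := by
    intro i j
    have h3 : (1 : ENNReal) / 1 = 1 / 2 + 1 / 2 := by
      rw [ENNReal.div_self one_ne_zero ENNReal.one_ne_top]
      exact (ENNReal.add_halves 1).symm
    have := memLp_one_iff_integrable.mp ((hb2 j).smul (hb2 i) (r := 1))
    exact this
  have hKPmeas : ∀ i j, Measurable fun ω => K (Phat ω) i j := fun i j =>
    (hKmeas i j).comp hPhatmeas
  have hcPmeas : ∀ j, Measurable fun ω => c (Phat ω) j := fun j => (hcmeas j).comp hPhatmeas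
  have hbdd_int : ∀ g : Ω → ℝ, Measurable g → ∀ Cg : ℝ, (∀ ω, |g ω| ≤ Cg) → Integrable g μ := by
    intro g hm Cg hbd
    exact (integrable_const Cg).mono' hm.aestronglyMeasurable
      (ae_of_all _ fun ω => by simpa [Real.norm_eq_abs] using hbd ω)
  have hIK : ∀ i j, Integrable (fun ω => K (Phat ω) i j) μ := fun i j =>
    hbdd_int _ (hKPmeas i j) _ (fun ω => hKb ω i j)
  have hIc : ∀ j, Integrable (fun ω => c (Phat ω) j) μ := fun j =>
    hbdd_int _ (hcPmeas j) _ (fun ω => hcb ω j)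
  -- independence
  have hInd : ∀ φ : (Fin N → Fin N → ℝ) → ℝ, Measurable φ → ∀ g : (Fin N → ℝ) → ℝ,
      Measurable g → ∫ ω, φ (Phat ω) * g (bhat ω) ∂μ
        = (∫ ω, φ (Phat ω) ∂μ) * ∫ ω, g (bhat ω) ∂μ := fun φ hφ g hg =>
    (hindep.symm.comp hφ hg).integral_fun_mul_eq_mul_integral ((hφ.comp hPhatmeas).aestronglyMeasurable)
      ((hg.comp hbmeas).aestronglyMeasurable)
  -- covariance identity
  have hcov : ∀ i j, (∫ ω, (bhat ω i - b i) * (bhat ω j - b j) ∂μ)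
      = (∫ ω, bhat ω i * bhat ω j ∂μ) - b i * b j := by
    intro i j
    have hptw : (fun ω => (bhat ω i - b i) * (bhat ω j - b j))
        = fun ω => bhat ω i * bhat ω j - b i * bhat ω j - b j * bhat ω i + b i * b j := by
      funext ω; ring
    have h1 : Integrable (fun ω => bhat ω i * bhat ω j - b i * bhat ω j) μ := by
      exact (hbb i j).sub ((hbint j).const_mul (b i))
    have h2 : Integrable (fun ω => bhat ω i * bhat ω j - b i * bhat ω j - b j * bhat ω i) μ := by
      exact h1.sub ((hbint i).const_mul (b j))
    rw [hptw, integral_add h2 (integrable_const _), integral_sub h1 ((hbint i).const_mul (b j)),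
      integral_sub (hbb i j) ((hbint j).const_mul (b i)),
      integral_const_mul, integral_const_mul, integral_const, hbmean i, hbmean j]
    simp only [measure_univ, ENNReal.toReal_one, one_smul, smul_eq_mul, probReal_univ]
    ring
  -- part (i)
  have hI1 : ∀ j, Integrable (fun ω => c (Phat ω) j * bhat ω j) μ := fun j =>
    (hbint j).bdd_mul (hcPmeas j).aestronglyMeasurable
      (c := (∑ i, |(b ᵥ* M) i|) * C) (ae_of_all _ fun ω => by simpa [Real.norm_eq_abs] using hcb ω j)
  have key1 : ∫ ω, ∑ j, c (Phat ω) j * bhat ω j ∂μ = ∫ ω, ∑ j, c (Phat ω) j * b j ∂μ := by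
    rw [integral_finset_sum _ fun j _ => hI1 j,
      integral_finset_sum _ fun j _ => (hIc j).mul_const (b j)]
    refine Finset.sum_congr rfl fun j _ => ?_
    rw [integral_mul_const]
    calc ∫ ω, c (Phat ω) j * bhat ω j ∂μ
        = (∫ ω, c (Phat ω) j ∂μ) * ∫ ω, bhat ω j ∂μ :=
          hInd _ (hcmeas j) (fun v => v j) (measurable_pi_apply j)
      _ = (∫ ω, c (Phat ω) j ∂μ) * b j := by rw [hbmean j]
  -- part (ii)
  have hI2 : ∀ i j, Integrable (fun ω => K (Phat ω) i j * (bhat ω i * bhat ω j)) μ := fun i j =>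
    (hbb i j).bdd_mul (hKPmeas i j).aestronglyMeasurable
      (c := ∑ k, (∑ a, C * |M a k|) * C) (ae_of_all _ fun ω => by simpa [Real.norm_eq_abs] using hKb ω i j)
  have hKsym : ∀ (q : Fin N → Fin N → ℝ) (i j : Fin N), K q j i = K q i j := by
    intro q i j
    have hMs : ∀ a k, M a k = M k a := fun a k => by
      conv_lhs => rw [← hM.1]
      simp [Matrix.conjTranspose_apply]
    simp only [hK, Matrix.mul_apply, Matrix.transpose_apply, Finset.sum_mul]
    rw [Finset.sum_comm]
    refine Finset.sum_congr rfl fun k _ => Finset.sum_congr rfl fun a _ => ?_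
    rw [hMs]
    ring
  have hdd : ∀ f : Ω → Fin N → Fin N → ℝ, (∀ i j, Integrable (fun ω => f ω i j) μ) →
      ∫ ω, ∑ i, ∑ j, f ω i j ∂μ = ∑ i, ∑ j, ∫ ω, f ω i j ∂μ := by
    intro f hf
    rw [integral_finset_sum _ fun i _ => integrable_finset_sum _ fun j _ => hf i j]
    exact Finset.sum_congr rfl fun i _ => integral_finset_sum _ fun j _ => hf i j
  have key2 : ∫ ω, ∑ i, ∑ j, K (Phat ω) i j * (bhat ω i * bhat ω j) ∂μ
      = ∫ ω, ∑ i, ∑ j, K (Phat ω) i j * (b i * b j) ∂μ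
        + ∫ ω, ∑ i, ∑ j, (∫ ω', (bhat ω' i - b i) * (bhat ω' j - b j) ∂μ)
            * K (Phat ω) j i ∂μ := by
    have e1 : ∫ ω, ∑ i, ∑ j, K (Phat ω) i j * (bhat ω i * bhat ω j) ∂μ
        = ∑ i, ∑ j, ∫ ω, K (Phat ω) i j * (bhat ω i * bhat ω j) ∂μ := hdd _ fun i j => hI2 i j
    have e2 : ∫ ω, ∑ i, ∑ j, K (Phat ω) i j * (b i * b j) ∂μ
        = ∑ i, ∑ j, ∫ ω, K (Phat ω) i j * (b i * b j) ∂μ :=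
      hdd _ fun i j => (hIK i j).mul_const _
    have e3 : ∫ ω, ∑ i, ∑ j, (∫ ω', (bhat ω' i - b i) * (bhat ω' j - b j) ∂μ)
          * K (Phat ω) j i ∂μ
        = ∑ i, ∑ j, ∫ ω, (∫ ω', (bhat ω' i - b i) * (bhat ω' j - b j) ∂μ)
          * K (Phat ω) j i ∂μ := hdd _ fun i j => (hIK j i).const_mul _
    rw [e1, e2, e3, ← Finset.sum_add_distrib]
    refine Finset.sum_congr rfl fun i _ => ?_
    rw [← Finset.sum_add_distrib]
    refine Finset.sum_congr rfl fun j _ => ?_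
    have hKint_sym : (∫ ω, K (Phat ω) j i ∂μ) = ∫ ω, K (Phat ω) i j ∂μ := by
      simp only [hKsym]
    calc ∫ ω, K (Phat ω) i j * (bhat ω i * bhat ω j) ∂μ
        = (∫ ω, K (Phat ω) i j ∂μ) * ∫ ω, bhat ω i * bhat ω j ∂μ :=
          hInd _ (hKmeas i j) (fun v => v i * v j)
            ((measurable_pi_apply i).mul (measurable_pi_apply j))
      _ = ∫ ω, K (Phat ω) i j * (b i * b j) ∂μ
          + (∫ ω', (bhat ω' i - b i) * (bhat ω' j - b j) ∂μ) * ∫ ω, K (Phat ω) j i ∂μ := by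
          rw [integral_mul_const, hKint_sym, hcov i j]; ring
      _ = ∫ ω, K (Phat ω) i j * (b i * b j) ∂μ
          + ∫ ω, (∫ ω', (bhat ω' i - b i) * (bhat ω' j - b j) ∂μ) * K (Phat ω) j i ∂μ := by
          rw [integral_const_mul]
  exact ⟨key1, key2, fun _ => by rw [key1, key2]⟩
end

section
/- Let P ∈ ℝ^{N×N} be row-stochastic with rows p_1ᵀ, …, p_Nᵀ, let γ ∈ (0,1), n a positive integer, and let {X_{ij} : 1 ≤ i ≤ N, 1 ≤ j ≤ n} be mutually independent random vectors, each X_{ij} taking values among the standard basis vectors e_1, …, e_N of ℝ^N with ℙ[X_{ij} = e_k] = P_{ik}. Let P̂ be the random matrix whose i-th row is (1/n)Σ_{j=1}^{n} X_{ij}ᵀ, and set A = I − γP, Ŷ = γ(P − P̂)A^{-1}. Let M ∈ ℝ^{N×N} be symmetric positive definite, b ∈ ℝ^N, and Σ ∈ ℝ^{N×N} symmetric positive semidefinite. Define B_i = (1/n)(diag(p_i) − p_i p_iᵀ), G = γ² A^{-T}(Σ_{i=1}^{N} M_{ii} B_i)A^{-1}, and H = γ²(Σ_{i=1}^{N} A^{-T}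 B_i A^{-1} diag(e_i))M + γ² M(Σ_{i=1}^{N} diag(e_i) A^{-T} B_i A^{-1}). Then E[Ŷᵀ M Ŷ] = G and E[M Ŷ² + (Ŷᵀ)² M] = H, and consequently the second-order factor ε° := E[bᵀ(M + (M Ŷ² + (Ŷᵀ)² M)/2) b] / (E[bᵀ(M + Ŷᵀ M Ŷ + M Ŷ² + (Ŷᵀ)² M) b] + E[tr(Σ (M + Ŷᵀ M Ŷ + M Ŷ² + (Ŷᵀ)² M))]) equals bᵀ(M + H/2)b / (bᵀ(M + G + H)b + tr(Σ(M + G + H))) whenever this denominator is nonzero. -/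
set_option linter.unusedSectionVars false
open MeasureTheory ProbabilityTheory Matrix BigOperators

section aux
variable {N : ℕ} {Ω : Type*} [MeasurableSpace Ω] (μ : Measure Ω) [IsProbabilityMeasure μ]
    (P : Matrix (Fin N) (Fin N) ℝ) {n : ℕ}
    (X : Fin N → Fin n → Ω → (Fin N → ℝ))

-- coordinate as indicator
lemma coord_eq (hXval : ∀ i j ω, ∃ k : Fin N, X i j ω = Pi.single k 1)
    (i : Fin N) (j : Fin n) (ω : Ω) (l : Fin N) :
    X i j ω l = if X i j ω = Pi.single l 1 then 1 else 0 := by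
  obtain ⟨k, hk⟩ := hXval i j ω
  by_cases h : X i j ω = Pi.single l 1
  · simp [h]
  · rw [if_neg h, hk]
    rcases eq_or_ne k l with rfl | hkl
    · exact absurd hk h
    · simp [Pi.single_apply, hkl]

lemma coord_mem (hXval : ∀ i j ω, ∃ k : Fin N, X i j ω = Pi.single k 1)
    (i : Fin N) (j : Fin n) (ω : Ω) (l : Fin N) :
    X i j ω l = 0 ∨ X i j ω l = 1 := by
  rw [coord_eq X hXval]; split <;> simp

lemma coord_mul_self (hXval : ∀ i j ω, ∃ k : Fin N, X i j ω = Pi.single k 1)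
    (i : Fin N) (j : Fin n) (ω : Ω) (l l' : Fin N) :
    X i j ω l * X i j ω l' = if l = l' then X i j ω l else 0 := by
  rcases eq_or_ne l l' with rfl | h
  · rw [if_pos rfl]
    rcases coord_mem X hXval i j ω l with h | h <;> simp [h]
  · rw [if_neg h]
    obtain ⟨k, hk⟩ := hXval i j ω
    rw [hk]
    rcases eq_or_ne l k with rfl | hlk
    · simp [Pi.single_apply, Ne.symm h]
    · simp [Pi.single_apply, hlk]

lemma coord_meas (hXmeas : ∀ i j, Measurable (X i j)) (i : Fin N) (j : Fin n) (l : Fin N) :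
    Measurable (fun ω => X i j ω l) := (measurable_pi_apply l).comp (hXmeas i j)

lemma coord_integral (hXmeas : ∀ i j, Measurable (X i j))
    (hXval : ∀ i j ω, ∃ k : Fin N, X i j ω = Pi.single k 1)
    (hXprob : ∀ i j k, μ {ω | X i j ω = Pi.single k 1} = ENNReal.ofReal (P i k))
    (hP0 : ∀ i j, 0 ≤ P i j)
    (i : Fin N) (j : Fin n) (l : Fin N) :
    ∫ ω, X i j ω l ∂μ = P i l := by
  have hms : MeasurableSet {ω | X i j ω = Pi.single l 1} :=
    (hXmeas i j) (measurableSet_singleton _)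
  have : (fun ω => X i j ω l) = Set.indicator {ω | X i j ω = Pi.single l 1} 1 := by
    funext ω
    rw [coord_eq X hXval]
    by_cases h : X i j ω = Pi.single l 1 <;> simp [h, Set.indicator_apply]
  rw [this, integral_indicator_one hms, measureReal_def, hXprob, ENNReal.toReal_ofReal (hP0 i l)]


lemma coord_bound (hXval : ∀ i j ω, ∃ k : Fin N, X i j ω = Pi.single k 1)
    (i : Fin N) (j : Fin n) (ω : Ω) (l : Fin N) :
    0 ≤ X i j ω l ∧ X i j ω l ≤ 1 := by
  rcases coord_mem X hXval i j ω l with h | h <;> simp [h]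

/-- the centered deviation `d i l ω = P i l - n⁻¹ ∑ j, X i j ω l`. -/
lemma d_bound (hXval : ∀ i j ω, ∃ k : Fin N, X i j ω = Pi.single k 1)
    (hP0 : ∀ i j, 0 ≤ P i j) (hP1 : ∀ i, ∑ j, P i j = 1) (hn : 0 < n)
    (i : Fin N) (l : Fin N) (ω : Ω) :
    |P i l - (n : ℝ)⁻¹ * ∑ j, X i j ω l| ≤ 1 := by
  have hPl0 : 0 ≤ P i l := hP0 i l
  have hPl1 : P i l ≤ 1 := by
    rw [← hP1 i]
    exact Finset.single_le_sum (fun k _ => hP0 i k) (Finset.mem_univ l)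
  have h0 : 0 ≤ (n : ℝ)⁻¹ * ∑ j, X i j ω l := by
    apply mul_nonneg (by positivity)
    exact Finset.sum_nonneg fun j _ => (coord_bound X hXval i j ω l).1
  have h1 : (n : ℝ)⁻¹ * ∑ j, X i j ω l ≤ 1 := by
    have : (∑ j, X i j ω l) ≤ n := by
      calc (∑ j : Fin n, X i j ω l) ≤ ∑ j : Fin n, 1 :=
        Finset.sum_le_sum fun j _ => (coord_bound X hXval i j ω l).2
      _ = n := by simp
    rw [inv_mul_le_iff₀ (by positivity)]
    linarith
  rw [abs_le]; constructor <;> linarith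

lemma d_meas (hXmeas : ∀ i j, Measurable (X i j)) (i l : Fin N) :
    Measurable (fun ω => P i l - (n : ℝ)⁻¹ * ∑ j, X i j ω l) := by
  apply Measurable.sub measurable_const
  exact (Finset.measurable_sum _ fun j _ => coord_meas X hXmeas i j l).const_mul _

lemma d_integrable (hXmeas : ∀ i j, Measurable (X i j))
    (hXval : ∀ i j ω, ∃ k : Fin N, X i j ω = Pi.single k 1)
    (hP0 : ∀ i j, 0 ≤ P i j) (hP1 : ∀ i, ∑ j, P i j = 1) (hn : 0 < n) (i l : Fin N) :
    Integrable (fun ω => P i l - (n : ℝ)⁻¹ * ∑ j, X i j ω l) μ :=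
  (integrable_const 1).mono' (d_meas P X hXmeas i l).aestronglyMeasurable
    (ae_of_all _ fun ω => by simpa using d_bound P X hXval hP0 hP1 hn i l ω)

lemma dd_integrable (hXmeas : ∀ i j, Measurable (X i j))
    (hXval : ∀ i j ω, ∃ k : Fin N, X i j ω = Pi.single k 1)
    (hP0 : ∀ i j, 0 ≤ P i j) (hP1 : ∀ i, ∑ j, P i j = 1) (hn : 0 < n) (i i' l l' : Fin N) :
    Integrable (fun ω => (P i l - (n : ℝ)⁻¹ * ∑ j, X i j ω l)
      * (P i' l' - (n : ℝ)⁻¹ * ∑ j, X i' j ω l')) μ := by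
  apply (integrable_const 1).mono'
    ((d_meas P X hXmeas i l).mul (d_meas P X hXmeas i' l')).aestronglyMeasurable
  refine ae_of_all _ fun ω => ?_
  have := d_bound P X hXval hP0 hP1 hn i l ω
  have := d_bound P X hXval hP0 hP1 hn i' l' ω
  calc ‖(P i l - (n : ℝ)⁻¹ * ∑ j, X i j ω l) * (P i' l' - (n : ℝ)⁻¹ * ∑ j, X i' j ω l')‖ = |_| * |_| := by rw [norm_mul]; rfl
  _ ≤ 1 * 1 := by apply mul_le_mul <;> first | assumption | positivity
  _ = 1 := by ring


lemma coord_integrable (hXmeas : ∀ i j, Measurable (X i j))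
    (hXval : ∀ i j ω, ∃ k : Fin N, X i j ω = Pi.single k 1) (i : Fin N) (j : Fin n) (l : Fin N) :
    Integrable (fun ω => X i j ω l) μ :=
  (integrable_const 1).mono' (coord_meas X hXmeas i j l).aestronglyMeasurable
    (ae_of_all _ fun ω => by
      rcases coord_mem X hXval i j ω l with h | h <;> simp [h])

lemma cbar_integral (hXmeas : ∀ i j, Measurable (X i j))
    (hXval : ∀ i j ω, ∃ k : Fin N, X i j ω = Pi.single k 1)
    (hXprob : ∀ i j k, μ {ω | X i j ω = Pi.single k 1} = ENNReal.ofReal (P i k))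
    (hP0 : ∀ i j, 0 ≤ P i j) (i : Fin N) (j : Fin n) (l : Fin N) :
    ∫ ω, (P i l - X i j ω l) ∂μ = 0 := by
  rw [integral_sub (integrable_const _) (coord_integrable μ X hXmeas hXval i j l),
    integral_const, coord_integral μ P X hXmeas hXval hXprob hP0]
  simp

lemma cbar_integrable (hXmeas : ∀ i j, Measurable (X i j))
    (hXval : ∀ i j ω, ∃ k : Fin N, X i j ω = Pi.single k 1)
    (hP0 : ∀ i j, 0 ≤ P i j) (hP1 : ∀ i, ∑ j, P i j = 1) (i : Fin N) (j : Fin n) (l : Fin N) :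
    Integrable (fun ω => P i l - X i j ω l) μ :=
  ((integrable_const _).sub (coord_integrable μ X hXmeas hXval i j l))

lemma cbar_mul_integrable (hXmeas : ∀ i j, Measurable (X i j))
    (hXval : ∀ i j ω, ∃ k : Fin N, X i j ω = Pi.single k 1)
    (hP0 : ∀ i j, 0 ≤ P i j) (hP1 : ∀ i, ∑ j, P i j = 1)
    (i i' : Fin N) (j j' : Fin n) (l l' : Fin N) :
    Integrable (fun ω => (P i l - X i j ω l) * (P i' l' - X i' j' ω l')) μ := by
  have hm : Measurable (fun ω => (P i l - X i j ω l) * (P i' l' - X i' j' ω l')) :=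
    (measurable_const.sub (coord_meas X hXmeas i j l)).mul
      (measurable_const.sub (coord_meas X hXmeas i' j' l'))
  apply (integrable_const 1).mono' hm.aestronglyMeasurable
  refine ae_of_all _ fun ω => ?_
  have hb : ∀ (a b : Fin N) (c : Fin n) (e : Fin N), |P a b - X a c ω e| ≤ 1 := by
    intro a e c f
    have h1 : 0 ≤ P a e := hP0 a e
    have h2 : P a e ≤ 1 := by
      rw [← hP1 a]; exact Finset.single_le_sum (fun k _ => hP0 a k) (Finset.mem_univ e)
    have h3 := (coord_bound X hXval a c ω f).1
    have h4 := (coord_bound X hXval a c ω f).2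
    rw [abs_le]; constructor <;> linarith
  calc ‖_‖ = |P i l - X i j ω l| * |P i' l' - X i' j' ω l'| := by rw [norm_mul]; rfl
  _ ≤ 1 * 1 := mul_le_mul (hb _ _ _ _) (hb _ _ _ _) (abs_nonneg _) zero_le_one
  _ = 1 := by ring

lemma cbar_mul_integral (hXmeas : ∀ i j, Measurable (X i j))
    (hXval : ∀ i j ω, ∃ k : Fin N, X i j ω = Pi.single k 1)
    (hXprob : ∀ i j k, μ {ω | X i j ω = Pi.single k 1} = ENNReal.ofReal (P i k))
    (hXindep : iIndepFun (fun p : Fin N × Fin n => X p.1 p.2) μ)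
    (hP0 : ∀ i j, 0 ≤ P i j) (hP1 : ∀ i, ∑ j, P i j = 1)
    (i i' : Fin N) (j j' : Fin n) (l l' : Fin N) :
    ∫ ω, (P i l - X i j ω l) * (P i' l' - X i' j' ω l') ∂μ
      = if (i, j) = (i', j') then (if l = l' then P i l else 0) - P i l * P i' l' else 0 := by
  by_cases hp : (i, j) = (i', j')
  · obtain ⟨rfl, rfl⟩ : i = i' ∧ j = j' := Prod.ext_iff.mp hp
    rw [if_pos rfl]
    have hpt : ∀ ω, (P i l - X i j ω l) * (P i l' - X i j ω l')
        = P i l * P i l' - P i l * X i j ω l' - P i l' * X i j ω l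
          + (if l = l' then X i j ω l else 0) := by
      intro ω
      rw [← coord_mul_self X hXval i j ω l l']
      ring
    simp_rw [hpt]
    rw [integral_add, integral_sub, integral_sub, integral_const, integral_const_mul,
      integral_const_mul, coord_integral μ P X hXmeas hXval hXprob hP0,
      coord_integral μ P X hXmeas hXval hXprob hP0]
    · rcases eq_or_ne l l' with rfl | h
      · simp only [eq_self_iff_true, if_true]
        rw [coord_integral μ P X hXmeas hXval hXprob hP0]
        simp only [measure_univ, ENNReal.toReal_one, probReal_univ, one_smul]
        ring
      · simp_rw [if_neg h]
        rw [integral_zero]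
        simp only [measure_univ, ENNReal.toReal_one, probReal_univ, one_smul]
        ring
    · exact integrable_const _
    · exact (coord_integrable μ X hXmeas hXval i j l').const_mul _
    · exact ((integrable_const _).sub ((coord_integrable μ X hXmeas hXval i j l').const_mul _))
    · exact (coord_integrable μ X hXmeas hXval i j l).const_mul _
    · exact (((integrable_const _).sub ((coord_integrable μ X hXmeas hXval i j l').const_mul _)).sub
        ((coord_integrable μ X hXmeas hXval i j l).const_mul _))
    · rcases eq_or_ne l l' with rfl | h
      · simpa using coord_integrable μ X hXmeas hXval i j l
      · simp [if_neg h]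
  · rw [if_neg hp]
    have hind : IndepFun (fun ω => P i l - X i j ω l) (fun ω => P i' l' - X i' j' ω l') μ := by
      have h0 : IndepFun (X i j) (X i' j') μ := hXindep.indepFun hp
      exact h0.comp (measurable_const.sub (measurable_pi_apply l))
        (measurable_const.sub (measurable_pi_apply l'))
    have := hind.integral_mul_eq_mul_integral
      (cbar_integrable μ P X hXmeas hXval hP0 hP1 i j l).aestronglyMeasurable
      (cbar_integrable μ P X hXmeas hXval hP0 hP1 i' j' l').aestronglyMeasurable
    rw [cbar_integral μ P X hXmeas hXval hXprob hP0,
      cbar_integral μ P X hXmeas hXval hXprob hP0] at this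
    rw [show (fun ω => P i l - X i j ω l) * (fun ω => P i' l' - X i' j' ω l')
        = fun ω => (P i l - X i j ω l) * (P i' l' - X i' j' ω l') from rfl] at this
    rw [this]; ring


lemma dd_integral (hXmeas : ∀ i j, Measurable (X i j))
    (hXval : ∀ i j ω, ∃ k : Fin N, X i j ω = Pi.single k 1)
    (hXprob : ∀ i j k, μ {ω | X i j ω = Pi.single k 1} = ENNReal.ofReal (P i k))
    (hXindep : iIndepFun (fun p : Fin N × Fin n => X p.1 p.2) μ)
    (hP0 : ∀ i j, 0 ≤ P i j) (hP1 : ∀ i, ∑ j, P i j = 1) (hn : 0 < n) (i i' l l' : Fin N) :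
    ∫ ω, (P i l - (n : ℝ)⁻¹ * ∑ j, X i j ω l) * (P i' l' - (n : ℝ)⁻¹ * ∑ j, X i' j ω l') ∂μ
      = if i = i' then (n : ℝ)⁻¹ * ((if l = l' then P i l else 0) - P i l * P i' l') else 0 := by
  have hnne : (n : ℝ) ≠ 0 := Nat.cast_ne_zero.mpr hn.ne'
  have hd : ∀ (a e : Fin N) (ω : Ω), P a e - (n : ℝ)⁻¹ * ∑ j, X a j ω e
      = (n : ℝ)⁻¹ * ∑ j, (P a e - X a j ω e) := by
    intro a e ω
    rw [Finset.sum_sub_distrib, Finset.sum_const, Finset.card_univ, Fintype.card_fin,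
      nsmul_eq_mul, mul_sub, ← mul_assoc, inv_mul_cancel₀ hnne, one_mul]
  have hpt : ∀ ω, (P i l - (n : ℝ)⁻¹ * ∑ j, X i j ω l)
      * (P i' l' - (n : ℝ)⁻¹ * ∑ j, X i' j ω l')
      = ((n : ℝ)⁻¹ * (n : ℝ)⁻¹) * ∑ j, ∑ j', (P i l - X i j ω l) * (P i' l' - X i' j' ω l') := by
    intro ω
    rw [hd, hd, ← Finset.sum_mul_sum]
    ring
  simp_rw [hpt]
  rw [integral_const_mul, integral_finset_sum _ (fun j _ => integrable_finset_sum _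
    (fun j' _ => cbar_mul_integrable μ P X hXmeas hXval hP0 hP1 i i' j j' l l'))]
  simp_rw [integral_finset_sum _ (fun j' _ => cbar_mul_integrable μ P X hXmeas hXval hP0 hP1 i i' _ j' l l'),
    cbar_mul_integral μ P X hXmeas hXval hXprob hXindep hP0 hP1 i i' _ _ l l']
  rcases eq_or_ne i i' with rfl | hii
  · simp only [Prod.mk.injEq, true_and, if_pos rfl]
    simp only [Finset.sum_ite_eq, Finset.mem_univ, if_true]
    rw [Finset.sum_const, Finset.card_univ, Fintype.card_fin, nsmul_eq_mul]
    field_simp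
  · simp [Prod.mk.injEq, hii]


lemma quad_integrable (hXmeas : ∀ i j, Measurable (X i j))
    (hXval : ∀ i j ω, ∃ k : Fin N, X i j ω = Pi.single k 1)
    (hP0 : ∀ i j, 0 ≤ P i j) (hP1 : ∀ i, ∑ j, P i j = 1) (hn : 0 < n)
    (c : Fin N → Fin N → Fin N → Fin N → ℝ) :
    Integrable (fun ω => ∑ i, ∑ l, ∑ l', ∑ i', c i i' l l'
      * ((P i l - (n : ℝ)⁻¹ * ∑ j, X i j ω l) * (P i' l' - (n : ℝ)⁻¹ * ∑ j, X i' j ω l'))) μ := by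
  refine integrable_finset_sum _ fun i _ => integrable_finset_sum _ fun l _ =>
    integrable_finset_sum _ fun l' _ => integrable_finset_sum _ fun i' _ => ?_
  exact (dd_integrable μ P X hXmeas hXval hP0 hP1 hn i i' l l').const_mul _

lemma quad_integral (hXmeas : ∀ i j, Measurable (X i j))
    (hXval : ∀ i j ω, ∃ k : Fin N, X i j ω = Pi.single k 1)
    (hXprob : ∀ i j k, μ {ω | X i j ω = Pi.single k 1} = ENNReal.ofReal (P i k))
    (hXindep : iIndepFun (fun p : Fin N × Fin n => X p.1 p.2) μ)
    (hP0 : ∀ i j, 0 ≤ P i j) (hP1 : ∀ i, ∑ j, P i j = 1) (hn : 0 < n)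
    (c : Fin N → Fin N → Fin N → Fin N → ℝ) :
    ∫ ω, (∑ i, ∑ l, ∑ l', ∑ i', c i i' l l'
      * ((P i l - (n : ℝ)⁻¹ * ∑ j, X i j ω l) * (P i' l' - (n : ℝ)⁻¹ * ∑ j, X i' j ω l'))) ∂μ
      = ∑ i, ∑ l, ∑ l', c i i l l'
        * ((n : ℝ)⁻¹ * ((if l = l' then P i l else 0) - P i l * P i l')) := by
  have hI : ∀ (i i' l l' : Fin N), Integrable (fun ω => c i i' l l'
      * ((P i l - (n : ℝ)⁻¹ * ∑ j, X i j ω l) * (P i' l' - (n : ℝ)⁻¹ * ∑ j, X i' j ω l'))) μ :=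
    fun i i' l l' => (dd_integrable μ P X hXmeas hXval hP0 hP1 hn i i' l l').const_mul _
  rw [integral_finset_sum _ (fun i _ => integrable_finset_sum _ fun l _ =>
    integrable_finset_sum _ fun l' _ => integrable_finset_sum _ fun i' _ => hI i i' l l')]
  refine Finset.sum_congr rfl fun i _ => ?_
  rw [integral_finset_sum _ (fun l _ =>
    integrable_finset_sum _ fun l' _ => integrable_finset_sum _ fun i' _ => hI i i' l l')]
  refine Finset.sum_congr rfl fun l _ => ?_
  rw [integral_finset_sum _ (fun l' _ => integrable_finset_sum _ fun i' _ => hI i i' l l')]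
  refine Finset.sum_congr rfl fun l' _ => ?_
  rw [integral_finset_sum _ (fun i' _ => hI i i' l l')]
  simp_rw [integral_const_mul,
    dd_integral μ P X hXmeas hXval hXprob hXindep hP0 hP1 hn i _ l l',
    mul_ite, mul_zero, Finset.sum_ite_eq, Finset.mem_univ, if_true]


lemma push_in2 {f : Fin N → Fin N → Fin N → ℝ} :
    ∑ a, ∑ b, ∑ c, f a b c = ∑ b, ∑ c, ∑ a, f a b c := by
  rw [Finset.sum_comm]
  exact Finset.sum_congr rfl fun b _ => Finset.sum_comm

lemma push_in3 {f : Fin N → Fin N → Fin N → Fin N → ℝ} :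
    ∑ a, ∑ b, ∑ c, ∑ d, f a b c d = ∑ b, ∑ c, ∑ d, ∑ a, f a b c d := by
  rw [Finset.sum_comm]
  exact Finset.sum_congr rfl fun b _ => Finset.sum_comm.trans
    (Finset.sum_congr rfl fun c _ => Finset.sum_comm)

end aux

section main
variable {N : ℕ} {Ω : Type*} [MeasurableSpace Ω] (μ : Measure Ω) [IsProbabilityMeasure μ]
    (P : Matrix (Fin N) (Fin N) ℝ) {n : ℕ}
    (X : Fin N → Fin n → Ω → (Fin N → ℝ)) (γ : ℝ)
    (M : Matrix (Fin N) (Fin N) ℝ)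

lemma entry1 (ω : Ω) (V : Matrix (Fin N) (Fin N) ℝ) (j k : Fin N) :
    ((((γ • (P - Matrix.of fun i l => (n : ℝ)⁻¹ * ∑ j, X i j ω l)) * V))ᵀ * M
      * ((γ • (P - Matrix.of fun i l => (n : ℝ)⁻¹ * ∑ j, X i j ω l)) * V)) j k
    = ∑ i, ∑ l, ∑ l', ∑ i', (γ * V l j * M i i' * (γ * V l' k))
        * ((P i l - (n : ℝ)⁻¹ * ∑ j', X i j' ω l) * (P i' l' - (n : ℝ)⁻¹ * ∑ j', X i' j' ω l')) := by
  conv_rhs => rw [push_in3]; rw [push_in3]; rw [Finset.sum_comm]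
  simp only [Matrix.mul_apply, Matrix.transpose_apply, Matrix.smul_apply, Matrix.sub_apply,
    Matrix.of_apply, smul_eq_mul, Finset.sum_mul, Finset.mul_sum]
  refine Finset.sum_congr rfl fun i' _ => Finset.sum_congr rfl fun i _ =>
    Finset.sum_congr rfl fun l _ => Finset.sum_congr rfl fun l' _ => by ring


lemma entry2 (ω : Ω) (V : Matrix (Fin N) (Fin N) ℝ) (j k : Fin N) :
    (M * ((γ • (P - Matrix.of fun i l => (n : ℝ)⁻¹ * ∑ j, X i j ω l)) * V) ^ 2) j k
    = ∑ i, ∑ l, ∑ l', ∑ i', (M j i * (γ * V l i') * (γ * V l' k))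
        * ((P i l - (n : ℝ)⁻¹ * ∑ j', X i j' ω l) * (P i' l' - (n : ℝ)⁻¹ * ∑ j', X i' j' ω l')) := by
  conv_rhs => enter [2, i]; rw [push_in2, Finset.sum_comm]
  rw [sq]
  simp only [Matrix.mul_apply, Matrix.transpose_apply, Matrix.smul_apply, Matrix.sub_apply,
    Matrix.of_apply, smul_eq_mul, Finset.sum_mul, Finset.mul_sum]
  refine Finset.sum_congr rfl fun i' _ => Finset.sum_congr rfl fun i _ =>
    Finset.sum_congr rfl fun l _ => Finset.sum_congr rfl fun l' _ => by ring

lemma entry3 (ω : Ω) (V : Matrix (Fin N) (Fin N) ℝ) (j k : Fin N) :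
    ((((γ • (P - Matrix.of fun i l => (n : ℝ)⁻¹ * ∑ j, X i j ω l)) * V))ᵀ ^ 2 * M) j k
    = ∑ i, ∑ l, ∑ l', ∑ i', ((γ * V l j) * (γ * V l' i) * M i' k)
        * ((P i l - (n : ℝ)⁻¹ * ∑ j', X i j' ω l) * (P i' l' - (n : ℝ)⁻¹ * ∑ j', X i' j' ω l')) := by
  conv_rhs => rw [push_in3, push_in3, push_in3]; enter [2, a, 2, c]; rw [Finset.sum_comm]
  rw [sq]
  simp only [Matrix.mul_apply, Matrix.transpose_apply, Matrix.smul_apply, Matrix.sub_apply,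
    Matrix.of_apply, smul_eq_mul, Finset.sum_mul, Finset.mul_sum]
  refine Finset.sum_congr rfl fun i' _ => Finset.sum_congr rfl fun i _ =>
    Finset.sum_congr rfl fun l _ => Finset.sum_congr rfl fun l' _ => by ring


lemma Gentry (V : Matrix (Fin N) (Fin N) ℝ) (j k : Fin N) :
    (γ ^ 2 • (Vᵀ * (∑ i, M i i • ((n : ℝ)⁻¹ • (Matrix.diagonal (P i)
        - Matrix.vecMulVec (P i) (P i)))) * V)) j k
    = ∑ i, ∑ l, ∑ l', (γ * V l j * M i i * (γ * V l' k))
        * ((n : ℝ)⁻¹ * ((if l = l' then P i l else 0) - P i l * P i l')) := by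
  simp only [Matrix.smul_apply, Matrix.mul_apply, Matrix.transpose_apply, Matrix.sum_apply,
    Matrix.sub_apply, Matrix.diagonal_apply, Matrix.vecMulVec_apply, Matrix.of_apply,
    smul_eq_mul, Finset.sum_mul, Finset.mul_sum]
  conv_rhs => enter [2, i]; rw [Finset.sum_comm]
  refine Finset.sum_congr rfl fun a _ => Finset.sum_congr rfl fun c _ =>
    Finset.sum_congr rfl fun d _ => by ring


lemma Hentry (V : Matrix (Fin N) (Fin N) ℝ) (j k : Fin N) :
    (γ ^ 2 • ((∑ i, Vᵀ * ((n : ℝ)⁻¹ • (Matrix.diagonal (P i) - Matrix.vecMulVec (P i) (P i)))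
          * V * Matrix.single i i (1 : ℝ)) * M)
      + γ ^ 2 • (M * ∑ i, Matrix.single i i (1 : ℝ) * Vᵀ
          * ((n : ℝ)⁻¹ • (Matrix.diagonal (P i) - Matrix.vecMulVec (P i) (P i))) * V)) j k
    = ∑ i, ∑ l, ∑ l', (M j i * (γ * V l i) * (γ * V l' k) + γ * V l j * (γ * V l' i) * M i k)
        * ((n : ℝ)⁻¹ * ((if l = l' then P i l else 0) - P i l * P i l')) := by
  have hCE : ∀ (C : Matrix (Fin N) (Fin N) ℝ) (i a c : Fin N),
      (C * Matrix.single i i (1 : ℝ)) a c = if c = i then C a i else 0 := by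
    intro C i a c
    rcases eq_or_ne c i with rfl | h
    · simp
    · simp [h]
  have hEC : ∀ (C : Matrix (Fin N) (Fin N) ℝ) (i a c : Fin N),
      (Matrix.single i i (1 : ℝ) * C) a c = if a = i then C i c else 0 := by
    intro C i a c
    rcases eq_or_ne a i with rfl | h
    · simp
    · simp [h]
  have hA : ∀ i : Fin N,
      ((Vᵀ * ((n : ℝ)⁻¹ • (Matrix.diagonal (P i) - Matrix.vecMulVec (P i) (P i))) * V
        * Matrix.single i i (1 : ℝ)) * M) j k
      = (Vᵀ * ((n : ℝ)⁻¹ • (Matrix.diagonal (P i) - Matrix.vecMulVec (P i) (P i))) * V) j i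
          * M i k := by
    intro i
    rw [Matrix.mul_apply]
    simp only [hCE, ite_mul, zero_mul]
    rw [Finset.sum_ite_eq' Finset.univ i]
    simp
  have hB : ∀ i : Fin N,
      (M * (Matrix.single i i (1 : ℝ) * Vᵀ
        * ((n : ℝ)⁻¹ • (Matrix.diagonal (P i) - Matrix.vecMulVec (P i) (P i))) * V)) j k
      = M j i * (Vᵀ * (((n : ℝ)⁻¹ • (Matrix.diagonal (P i) - Matrix.vecMulVec (P i) (P i)))
          * V)) i k := by
    intro i
    rw [Matrix.mul_apply]
    simp only [Matrix.mul_assoc, hEC, mul_ite, mul_zero]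
    rw [Finset.sum_ite_eq' Finset.univ i]
    simp
  simp only [Matrix.add_apply, Matrix.smul_apply, smul_eq_mul]
  rw [Matrix.sum_mul, Matrix.sum_apply, Matrix.mul_sum, Matrix.sum_apply]
  simp only [hA, hB]
  conv_rhs => simp only [add_mul, Finset.sum_add_distrib]
  conv_rhs => rw [add_comm]
  congr 1
  · rw [Finset.mul_sum]
    refine Finset.sum_congr rfl fun i _ => ?_
    conv_rhs => rw [Finset.sum_comm]
    simp only [Matrix.mul_apply, Matrix.transpose_apply, Matrix.smul_apply, Matrix.sub_apply,
      Matrix.diagonal_apply, Matrix.vecMulVec_apply, Matrix.of_apply, smul_eq_mul,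
      Finset.sum_mul, Finset.mul_sum]
    refine Finset.sum_congr rfl fun a _ => Finset.sum_congr rfl fun c _ => by ring
  · rw [Finset.mul_sum]
    refine Finset.sum_congr rfl fun i _ => ?_
    simp only [Matrix.mul_apply, Matrix.transpose_apply, Matrix.smul_apply, Matrix.sub_apply,
      Matrix.diagonal_apply, Matrix.vecMulVec_apply, Matrix.of_apply, smul_eq_mul,
      Finset.sum_mul, Finset.mul_sum]
    refine Finset.sum_congr rfl fun a _ => Finset.sum_congr rfl fun c _ => by ring

end main

/-- Multinomial sampling model: `P` row-stochastic with rows `p_i`,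
`γ ∈ (0,1)`, `n ≥ 1`, and `{X_{ij}}` mutually independent random vectors taking values among
the standard basis vectors of `ℝ^N` with `ℙ[X_{ij} = e_k] = P_{ik}`. `P̂` has `i`-th row
`(1/n) Σ_j X_{ij}ᵀ`, `A = I − γP`, `Ŷ = γ(P − P̂)A⁻¹`. With
`B_i = (1/n)(diag(p_i) − p_i p_iᵀ)`, `G = γ² A⁻ᵀ(Σ_i M_{ii} B_i)A⁻¹`, and
`H = γ²(Σ_i A⁻ᵀ B_i A⁻¹ diag(e_i))M + γ² M(Σ_i diag(e_i) A⁻ᵀ B_i A⁻¹)`, one has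
`E[Ŷᵀ M Ŷ] = G`, `E[M Ŷ² + (Ŷᵀ)² M] = H`, and the second-order factor `ε°` equals
`bᵀ(M + H/2)b / (bᵀ(M + G + H)b + tr(Σ(M + G + H)))` whenever this denominator is nonzero. -/
theorem stmt6 {N : ℕ} {Ω : Type*} [MeasurableSpace Ω] (μ : Measure Ω) [IsProbabilityMeasure μ]
    (P : Matrix (Fin N) (Fin N) ℝ) (hP0 : ∀ i j, 0 ≤ P i j) (hP1 : ∀ i, ∑ j, P i j = 1)
    (γ : ℝ) (hγ : γ ∈ Set.Ioo (0 : ℝ) 1)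
    (n : ℕ) (hn : 0 < n)
    (X : Fin N → Fin n → Ω → (Fin N → ℝ))
    (hXmeas : ∀ i j, Measurable (X i j))
    (hXval : ∀ i j ω, ∃ k : Fin N, X i j ω = Pi.single k 1)
    (hXprob : ∀ i j k, μ {ω | X i j ω = Pi.single k 1} = ENNReal.ofReal (P i k))
    (hXindep : iIndepFun (fun p : Fin N × Fin n => X p.1 p.2) μ)
    (M : Matrix (Fin N) (Fin N) ℝ) (hM : M.PosDef)
    (b : Fin N → ℝ)
    (S : Matrix (Fin N) (Fin N) ℝ) (hS : S.PosSemidef) :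
    letI A : Matrix (Fin N) (Fin N) ℝ := 1 - γ • P
    letI Phat : Ω → Matrix (Fin N) (Fin N) ℝ :=
      fun ω => Matrix.of fun i l => (n : ℝ)⁻¹ * ∑ j, X i j ω l
    letI Yhat : Ω → Matrix (Fin N) (Fin N) ℝ := fun ω => (γ • (P - Phat ω)) * A⁻¹
    letI B : Fin N → Matrix (Fin N) (Fin N) ℝ :=
      fun i => (n : ℝ)⁻¹ • (Matrix.diagonal (P i) - Matrix.vecMulVec (P i) (P i))
    letI G : Matrix (Fin N) (Fin N) ℝ := γ ^ 2 • ((A⁻¹)ᵀ * (∑ i, M i i • B i) * A⁻¹)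
    letI H : Matrix (Fin N) (Fin N) ℝ :=
      γ ^ 2 • ((∑ i, (A⁻¹)ᵀ * B i * A⁻¹ * Matrix.single i i (1 : ℝ)) * M)
        + γ ^ 2 • (M * ∑ i, Matrix.single i i (1 : ℝ) * (A⁻¹)ᵀ * B i * A⁻¹)
    ((Matrix.of fun j k => ∫ ω, ((Yhat ω)ᵀ * M * Yhat ω) j k ∂μ) = G)
    ∧ ((Matrix.of fun j k => ∫ ω, (M * Yhat ω ^ 2 + (Yhat ω)ᵀ ^ 2 * M) j k ∂μ) = H)
    ∧ (b ⬝ᵥ ((M + G + H) *ᵥ b) + Matrix.trace (S * (M + G + H)) ≠ 0 →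
        (∫ ω, b ⬝ᵥ ((M + (2 : ℝ)⁻¹ • (M * Yhat ω ^ 2 + (Yhat ω)ᵀ ^ 2 * M)) *ᵥ b) ∂μ)
          / ((∫ ω, b ⬝ᵥ
                ((M + (Yhat ω)ᵀ * M * Yhat ω + M * Yhat ω ^ 2 + (Yhat ω)ᵀ ^ 2 * M) *ᵥ b) ∂μ)
            + ∫ ω, Matrix.trace
                (S * (M + (Yhat ω)ᵀ * M * Yhat ω + M * Yhat ω ^ 2 + (Yhat ω)ᵀ ^ 2 * M)) ∂μ)
          = (b ⬝ᵥ ((M + (2 : ℝ)⁻¹ • H) *ᵥ b))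
            / (b ⬝ᵥ ((M + G + H) *ᵥ b) + Matrix.trace (S * (M + G + H)))) := by
  classical
  set V : Matrix (Fin N) (Fin N) ℝ := (1 - γ • P)⁻¹ with hVdef
  -- entry-level integrability and values for Q1 = ŶᵀMŶ
  have hQ1int : ∀ j k : Fin N, Integrable (fun ω =>
      ((((γ • (P - Matrix.of fun i l => (n : ℝ)⁻¹ * ∑ j, X i j ω l)) * V))ᵀ * M
        * ((γ • (P - Matrix.of fun i l => (n : ℝ)⁻¹ * ∑ j, X i j ω l)) * V)) j k) μ := by
    intro j k
    exact (quad_integrable μ P X hXmeas hXval hP0 hP1 hn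
      (fun i i' l l' => γ * V l j * M i i' * (γ * V l' k))).congr
      (ae_of_all _ fun ω => (entry1 P X γ M ω V j k).symm)
  have hQ1val : ∀ j k : Fin N, (∫ ω,
      ((((γ • (P - Matrix.of fun i l => (n : ℝ)⁻¹ * ∑ j, X i j ω l)) * V))ᵀ * M
        * ((γ • (P - Matrix.of fun i l => (n : ℝ)⁻¹ * ∑ j, X i j ω l)) * V)) j k ∂μ)
      = (γ ^ 2 • (Vᵀ * (∑ i, M i i • ((n : ℝ)⁻¹ • (Matrix.diagonal (P i)
          - Matrix.vecMulVec (P i) (P i)))) * V)) j k := by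
    intro j k
    simp_rw [entry1 P X γ M _ V j k]
    rw [quad_integral μ P X hXmeas hXval hXprob hXindep hP0 hP1 hn
      (fun i i' l l' => γ * V l j * M i i' * (γ * V l' k)), Gentry P γ M V j k]
  have hQ2int : ∀ j k : Fin N, Integrable (fun ω =>
      (M * ((γ • (P - Matrix.of fun i l => (n : ℝ)⁻¹ * ∑ j, X i j ω l)) * V) ^ 2
        + (((γ • (P - Matrix.of fun i l => (n : ℝ)⁻¹ * ∑ j, X i j ω l)) * V))ᵀ ^ 2 * M) j k) μ := by
    intro j k
    refine ((quad_integrable μ P X hXmeas hXval hP0 hP1 hn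
      (fun i i' l l' => M j i * (γ * V l i') * (γ * V l' k))).add
      (quad_integrable μ P X hXmeas hXval hP0 hP1 hn
      (fun i i' l l' => γ * V l j * (γ * V l' i) * M i' k))).congr
      (ae_of_all _ fun ω => ?_)
    simp only [Pi.add_apply, Matrix.add_apply, entry2 P X γ M ω V j k,
      entry3 P X γ M ω V j k]
  have hQ2val : ∀ j k : Fin N, (∫ ω,
      (M * ((γ • (P - Matrix.of fun i l => (n : ℝ)⁻¹ * ∑ j, X i j ω l)) * V) ^ 2
        + (((γ • (P - Matrix.of fun i l => (n : ℝ)⁻¹ * ∑ j, X i j ω l)) * V))ᵀ ^ 2 * M) j k ∂μ)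
      = (γ ^ 2 • ((∑ i, Vᵀ * ((n : ℝ)⁻¹ • (Matrix.diagonal (P i) - Matrix.vecMulVec (P i) (P i)))
            * V * Matrix.single i i (1 : ℝ)) * M)
        + γ ^ 2 • (M * ∑ i, Matrix.single i i (1 : ℝ) * Vᵀ
            * ((n : ℝ)⁻¹ • (Matrix.diagonal (P i) - Matrix.vecMulVec (P i) (P i))) * V)) j k := by
    intro j k
    simp_rw [Matrix.add_apply]
    rw [integral_add
      ((quad_integrable μ P X hXmeas hXval hP0 hP1 hn
        (fun i i' l l' => M j i * (γ * V l i') * (γ * V l' k))).congr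
        (ae_of_all _ fun ω => (entry2 P X γ M ω V j k).symm))
      ((quad_integrable μ P X hXmeas hXval hP0 hP1 hn
        (fun i i' l l' => γ * V l j * (γ * V l' i) * M i' k)).congr
        (ae_of_all _ fun ω => (entry3 P X γ M ω V j k).symm))]
    simp_rw [entry2 P X γ M _ V j k, entry3 P X γ M _ V j k]
    rw [quad_integral μ P X hXmeas hXval hXprob hXindep hP0 hP1 hn
      (fun i i' l l' => M j i * (γ * V l i') * (γ * V l' k)),
      quad_integral μ P X hXmeas hXval hXprob hXindep hP0 hP1 hn
      (fun i i' l l' => γ * V l j * (γ * V l' i) * M i' k),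
      ← Matrix.add_apply, Hentry P γ M V j k]
    simp only [add_mul, Finset.sum_add_distrib]
  -- scalar linearity
  have lin : ∀ (C : Ω → Matrix (Fin N) (Fin N) ℝ) (C0 : Matrix (Fin N) (Fin N) ℝ),
      (∀ j k, Integrable (fun ω => C ω j k) μ) → (∀ j k, (∫ ω, C ω j k ∂μ) = C0 j k) →
      ((∫ ω, b ⬝ᵥ (C ω *ᵥ b) ∂μ) = b ⬝ᵥ (C0 *ᵥ b))
        ∧ ((∫ ω, Matrix.trace (S * C ω) ∂μ) = Matrix.trace (S * C0)) := by
    intro C C0 hint hval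
    constructor
    · simp only [dotProduct, Matrix.mulVec, Finset.mul_sum]
      rw [integral_finset_sum _ (fun j _ => integrable_finset_sum _ fun k _ =>
        ((hint j k).mul_const _).const_mul _)]
      refine Finset.sum_congr rfl fun j _ => ?_
      rw [integral_finset_sum _ (fun k _ => ((hint j k).mul_const _).const_mul _)]
      refine Finset.sum_congr rfl fun k _ => ?_
      rw [integral_const_mul, integral_mul_const, hval]
    · simp only [Matrix.trace, Matrix.diag, Matrix.mul_apply, Finset.mul_sum]
      rw [integral_finset_sum _ (fun a _ => integrable_finset_sum _ fun k _ =>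
        (hint k a).const_mul (S a k))]
      refine Finset.sum_congr rfl fun a _ => ?_
      rw [integral_finset_sum _ (fun k _ => (hint k a).const_mul (S a k))]
      refine Finset.sum_congr rfl fun k _ => ?_
      rw [integral_const_mul, hval]
  refine ⟨?_, ?_, ?_⟩
  · exact Matrix.ext fun j k => hQ1val j k
  · exact Matrix.ext fun j k => hQ2val j k
  · intro hne
    have hint1 : ∀ j k : Fin N, Integrable (fun ω =>
        (M + (((γ • (P - Matrix.of fun i l => (n : ℝ)⁻¹ * ∑ j, X i j ω l)) * V))ᵀ * M
            * ((γ • (P - Matrix.of fun i l => (n : ℝ)⁻¹ * ∑ j, X i j ω l)) * V)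
          + M * ((γ • (P - Matrix.of fun i l => (n : ℝ)⁻¹ * ∑ j, X i j ω l)) * V) ^ 2
          + (((γ • (P - Matrix.of fun i l => (n : ℝ)⁻¹ * ∑ j, X i j ω l)) * V))ᵀ ^ 2 * M) j k) μ := by
      intro j k
      refine (((integrable_const (M j k)).add (hQ1int j k)).add (hQ2int j k)).congr
        (ae_of_all _ fun ω => ?_)
      simp only [Pi.add_apply, Matrix.add_apply]
      ring
    have hval1 : ∀ j k : Fin N, (∫ ω,
        (M + (((γ • (P - Matrix.of fun i l => (n : ℝ)⁻¹ * ∑ j, X i j ω l)) * V))ᵀ * M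
            * ((γ • (P - Matrix.of fun i l => (n : ℝ)⁻¹ * ∑ j, X i j ω l)) * V)
          + M * ((γ • (P - Matrix.of fun i l => (n : ℝ)⁻¹ * ∑ j, X i j ω l)) * V) ^ 2
          + (((γ • (P - Matrix.of fun i l => (n : ℝ)⁻¹ * ∑ j, X i j ω l)) * V))ᵀ ^ 2 * M) j k ∂μ)
        = (M + γ ^ 2 • (Vᵀ * (∑ i, M i i • ((n : ℝ)⁻¹ • (Matrix.diagonal (P i)
              - Matrix.vecMulVec (P i) (P i)))) * V)
          + (γ ^ 2 • ((∑ i, Vᵀ * ((n : ℝ)⁻¹ • (Matrix.diagonal (P i) - Matrix.vecMulVec (P i) (P i)))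
              * V * Matrix.single i i (1 : ℝ)) * M)
            + γ ^ 2 • (M * ∑ i, Matrix.single i i (1 : ℝ) * Vᵀ
              * ((n : ℝ)⁻¹ • (Matrix.diagonal (P i) - Matrix.vecMulVec (P i) (P i))) * V))) j k := by
      intro j k
      have hpt : ∀ ω : Ω,
          (M + (((γ • (P - Matrix.of fun i l => (n : ℝ)⁻¹ * ∑ j, X i j ω l)) * V))ᵀ * M
              * ((γ • (P - Matrix.of fun i l => (n : ℝ)⁻¹ * ∑ j, X i j ω l)) * V)
            + M * ((γ • (P - Matrix.of fun i l => (n : ℝ)⁻¹ * ∑ j, X i j ω l)) * V) ^ 2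
            + (((γ • (P - Matrix.of fun i l => (n : ℝ)⁻¹ * ∑ j, X i j ω l)) * V))ᵀ ^ 2 * M) j k
          = M j k + ((((γ • (P - Matrix.of fun i l => (n : ℝ)⁻¹ * ∑ j, X i j ω l)) * V))ᵀ * M
              * ((γ • (P - Matrix.of fun i l => (n : ℝ)⁻¹ * ∑ j, X i j ω l)) * V)) j k
            + (M * ((γ • (P - Matrix.of fun i l => (n : ℝ)⁻¹ * ∑ j, X i j ω l)) * V) ^ 2
              + (((γ • (P - Matrix.of fun i l => (n : ℝ)⁻¹ * ∑ j, X i j ω l)) * V))ᵀ ^ 2 * M) j k := by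
        intro ω
        simp only [Matrix.add_apply]
        ring
      simp_rw [hpt]
      have hMQ1 : Integrable (fun ω => M j k
          + ((((γ • (P - Matrix.of fun i l => (n : ℝ)⁻¹ * ∑ j, X i j ω l)) * V))ᵀ * M
            * ((γ • (P - Matrix.of fun i l => (n : ℝ)⁻¹ * ∑ j, X i j ω l)) * V)) j k) μ :=
        (integrable_const (M j k)).add (hQ1int j k)
      rw [integral_add hMQ1 (hQ2int j k),
        integral_add (integrable_const (M j k)) (hQ1int j k), integral_const,
        hQ1val j k, hQ2val j k]
      simp only [measure_univ, ENNReal.toReal_one, probReal_univ, one_smul, Matrix.add_apply]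
    have hint2 : ∀ j k : Fin N, Integrable (fun ω =>
        (M + (2 : ℝ)⁻¹ • (M * ((γ • (P - Matrix.of fun i l => (n : ℝ)⁻¹ * ∑ j, X i j ω l)) * V) ^ 2
          + (((γ • (P - Matrix.of fun i l => (n : ℝ)⁻¹ * ∑ j, X i j ω l)) * V))ᵀ ^ 2 * M)) j k) μ := by
      intro j k
      refine ((integrable_const (M j k)).add ((hQ2int j k).const_mul (2 : ℝ)⁻¹)).congr
        (ae_of_all _ fun ω => ?_)
      simp only [Pi.add_apply, Matrix.add_apply, Matrix.smul_apply, smul_eq_mul]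
    have hval2 : ∀ j k : Fin N, (∫ ω,
        (M + (2 : ℝ)⁻¹ • (M * ((γ • (P - Matrix.of fun i l => (n : ℝ)⁻¹ * ∑ j, X i j ω l)) * V) ^ 2
          + (((γ • (P - Matrix.of fun i l => (n : ℝ)⁻¹ * ∑ j, X i j ω l)) * V))ᵀ ^ 2 * M)) j k ∂μ)
        = (M + (2 : ℝ)⁻¹ • (γ ^ 2 • ((∑ i, Vᵀ * ((n : ℝ)⁻¹ • (Matrix.diagonal (P i)
              - Matrix.vecMulVec (P i) (P i))) * V * Matrix.single i i (1 : ℝ)) * M)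
            + γ ^ 2 • (M * ∑ i, Matrix.single i i (1 : ℝ) * Vᵀ
              * ((n : ℝ)⁻¹ • (Matrix.diagonal (P i) - Matrix.vecMulVec (P i) (P i))) * V))) j k := by
      intro j k
      have hpt : ∀ ω : Ω,
          (M + (2 : ℝ)⁻¹ • (M * ((γ • (P - Matrix.of fun i l => (n : ℝ)⁻¹ * ∑ j, X i j ω l)) * V) ^ 2
            + (((γ • (P - Matrix.of fun i l => (n : ℝ)⁻¹ * ∑ j, X i j ω l)) * V))ᵀ ^ 2 * M)) j k
          = M j k + (2 : ℝ)⁻¹ * ((M * ((γ • (P - Matrix.of fun i l => (n : ℝ)⁻¹ * ∑ j, X i j ω l)) * V) ^ 2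
            + (((γ • (P - Matrix.of fun i l => (n : ℝ)⁻¹ * ∑ j, X i j ω l)) * V))ᵀ ^ 2 * M) j k) := by
        intro ω
        simp only [Matrix.add_apply, Matrix.smul_apply, smul_eq_mul]
      simp_rw [hpt]
      rw [integral_add (integrable_const (M j k)) ((hQ2int j k).const_mul (2 : ℝ)⁻¹), integral_const,
        integral_const_mul, hQ2val j k]
      simp only [measure_univ, ENNReal.toReal_one, probReal_univ, one_smul, Matrix.add_apply,
        Matrix.smul_apply, smul_eq_mul]
      ring
    have hd := lin _ _ hint1 hval1
    have hn2 := lin _ _ hint2 hval2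
    beta_reduce
    rw [hn2.1, hd.1, hd.2]
end

section
/- Let P ∈ ℝ^{N×N} be row-stochastic with rows p_1ᵀ, …, p_Nᵀ, γ ∈ (0,1), n a positive integer, A = I − γP, B_i = (1/n)(diag(p_i) − p_i p_iᵀ), G = γ² A^{-T}(Σ_{i=1}^{N} B_i)A^{-1}, H = γ²(Σ_{i=1}^{N} A^{-T} B_i A^{-1} diag(e_i)) + γ²(Σ_{i=1}^{N} diag(e_i) A^{-T} B_i A^{-1}), and for b ∈ ℝ^N, b ≠ 0, and symmetric positive semidefinite Σ ∈ ℝ^{N×N} define θ(b,P) = bᵀ(I + H/2)b / (bᵀ(I + G + H)b + tr(Σ(I + G + H))). If n ≥ 16γ²/(1 − γ)², then θ(b,P) ≤ 1 + (8γ²/(1 − γ)²)·(1/n). -/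
open Matrix BigOperators

section stmt11aux

variable {N : ℕ}

private lemma sum_mulVec' (f : Fin N → Matrix (Fin N) (Fin N) ℝ) (v : Fin N → ℝ) :
    (∑ i, f i) *ᵥ v = ∑ i, f i *ᵥ v := by
  ext j
  simp only [Matrix.mulVec, dotProduct, Matrix.sum_apply, Finset.sum_apply, Finset.sum_mul]
  rw [Finset.sum_comm]

private lemma dotProduct_sum' {K : ℕ} (u : Fin N → ℝ) (f : Fin K → Fin N → ℝ) :
    u ⬝ᵥ (∑ i, f i) = ∑ i, u ⬝ᵥ f i := by
  simp only [dotProduct, Finset.sum_apply, Finset.mul_sum]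
  rw [Finset.sum_comm]

private lemma bilin (M C : Matrix (Fin N) (Fin N) ℝ) (u w : Fin N → ℝ) :
    u ⬝ᵥ ((Mᵀ * C * M) *ᵥ w) = (M *ᵥ u) ⬝ᵥ (C *ᵥ (M *ᵥ w)) := by
  rw [← Matrix.mulVec_mulVec, ← Matrix.mulVec_mulVec, Matrix.dotProduct_mulVec,
    Matrix.vecMul_transpose]

private lemma stdE_mulVec (i : Fin N) (v : Fin N → ℝ) :
    (Matrix.single i i (1:ℝ)) *ᵥ v = Pi.single i (v i) := by
  ext j
  simp [Matrix.mulVec, dotProduct, Matrix.single, Pi.single_apply, ite_and]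
  by_cases h : j = i <;> simp [h, Ne.symm]

private lemma quadBform (p v : Fin N → ℝ) :
    v ⬝ᵥ ((Matrix.diagonal p - Matrix.vecMulVec p p) *ᵥ v)
      = (∑ j, p j * v j ^ 2) - (∑ j, p j * v j) ^ 2 := by
  simp only [Matrix.sub_mulVec, dotProduct_sub]
  congr 1
  · simp only [dotProduct, Matrix.mulVec_diagonal]
    exact Finset.sum_congr rfl fun j _ => by ring
  · simp only [dotProduct, Matrix.mulVec, Matrix.vecMulVec_apply]
    rw [pow_two, Finset.sum_mul]
    exact Finset.sum_congr rfl fun j _ => by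
      rw [Finset.mul_sum, Finset.mul_sum]
      exact Finset.sum_congr rfl fun k _ => by ring

private lemma quadB_CS (p v : Fin N → ℝ) (hp0 : ∀ j, 0 ≤ p j) (hp1 : ∑ j, p j = 1) :
    (∑ j, p j * v j) ^ 2 ≤ ∑ j, p j * v j ^ 2 := by
  have := Finset.sum_sq_le_sum_mul_sum_of_sq_eq_mul Finset.univ
    (r := fun j => p j * v j) (f := p) (g := fun j => p j * v j ^ 2)
    (fun i _ => hp0 i) (fun i _ => mul_nonneg (hp0 i) (sq_nonneg _))
    (fun i _ => by ring)
  simpa [hp1] using this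

private lemma symmB (p : Fin N → ℝ) (c : ℝ) :
    (c • (Matrix.diagonal p - Matrix.vecMulVec p p))ᵀ
      = c • (Matrix.diagonal p - Matrix.vecMulVec p p) := by
  rw [Matrix.transpose_smul, Matrix.transpose_sub, Matrix.diagonal_transpose]
  congr 1
  ext i j
  simp [Matrix.vecMulVec_apply, mul_comm]

private lemma symm_dot (B : Matrix (Fin N) (Fin N) ℝ) (hB : Bᵀ = B) (u w : Fin N → ℝ) :
    u ⬝ᵥ (B *ᵥ w) = w ⬝ᵥ (B *ᵥ u) := by
  rw [Matrix.dotProduct_mulVec]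
  conv_lhs => rw [← hB]
  rw [Matrix.vecMul_transpose, dotProduct_comm]

private lemma stoch_bound (P : Matrix (Fin N) (Fin N) ℝ) (hP0 : ∀ i j, 0 ≤ P i j)
    (hP1 : ∀ i, ∑ j, P i j = 1) (x : Fin N → ℝ) (M : ℝ) (hM : ∀ k, |x k| ≤ M)
    (i : Fin N) : |(P *ᵥ x) i| ≤ M := by
  calc |(P *ᵥ x) i| = |∑ k, P i k * x k| := rfl
    _ ≤ ∑ k, |P i k * x k| := Finset.abs_sum_le_sum_abs _ _
    _ ≤ ∑ k, P i k * M := by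
        refine Finset.sum_le_sum fun k _ => ?_
        rw [abs_mul, abs_of_nonneg (hP0 i k)]
        exact mul_le_mul_of_nonneg_left (hM k) (hP0 i k)
    _ = M := by rw [← Finset.sum_mul, hP1 i, one_mul]

private lemma A_det_ne (P : Matrix (Fin N) (Fin N) ℝ) (hP0 : ∀ i j, 0 ≤ P i j)
    (hP1 : ∀ i, ∑ j, P i j = 1) (γ : ℝ) (hγ : γ ∈ Set.Ioo (0:ℝ) 1) :
    ((1 : Matrix (Fin N) (Fin N) ℝ) - γ • P).det ≠ 0 := by
  intro hdet
  obtain ⟨v, hv0, hvA⟩ := Matrix.exists_mulVec_eq_zero_iff.mpr hdet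
  have hv : v = γ • (P *ᵥ v) := by
    have : (1:Matrix (Fin N) (Fin N) ℝ) *ᵥ v - (γ • P) *ᵥ v = 0 := by
      rw [← Matrix.sub_mulVec]; exact hvA
    rw [Matrix.one_mulVec, Matrix.smul_mulVec, sub_eq_zero] at this
    exact this
  obtain ⟨j0, hj0⟩ := Function.ne_iff.mp hv0
  have hne : Finset.univ.Nonempty (α := Fin N) := ⟨j0, Finset.mem_univ _⟩
  obtain ⟨j, -, hj⟩ := Finset.exists_max_image Finset.univ (fun j => |v j|) hne
  have hjpos : 0 < |v j| := lt_of_lt_of_le (abs_pos.mpr hj0) (hj j0 (Finset.mem_univ _))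
  have : |v j| ≤ γ * |v j| := by
    conv_lhs => rw [hv]
    rw [Pi.smul_apply, smul_eq_mul, abs_mul, abs_of_nonneg (le_of_lt hγ.1)]
    exact mul_le_mul_of_nonneg_left
      (stoch_bound P hP0 hP1 v (|v j|) (fun k => hj k (Finset.mem_univ _)) j) (le_of_lt hγ.1)
  nlinarith [hγ.2]

private lemma A_mul_inv (P : Matrix (Fin N) (Fin N) ℝ) (hP0 : ∀ i j, 0 ≤ P i j)
    (hP1 : ∀ i, ∑ j, P i j = 1) (γ : ℝ) (hγ : γ ∈ Set.Ioo (0:ℝ) 1) :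
    ((1 : Matrix (Fin N) (Fin N) ℝ) - γ • P) * (1 - γ • P)⁻¹ = 1 :=
  Matrix.mul_nonsing_inv _ (isUnit_iff_ne_zero.mpr (A_det_ne P hP0 hP1 γ hγ))

private lemma inv_entry_bound (P : Matrix (Fin N) (Fin N) ℝ) (hP0 : ∀ i j, 0 ≤ P i j)
    (hP1 : ∀ i, ∑ j, P i j = 1) (γ : ℝ) (hγ : γ ∈ Set.Ioo (0:ℝ) 1) (j i : Fin N) :
    |((1 : Matrix (Fin N) (Fin N) ℝ) - γ • P)⁻¹ j i| ≤ 1 / (1 - γ) := by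
  set A : Matrix (Fin N) (Fin N) ℝ := 1 - γ • P with hA
  have hAA : A * A⁻¹ = 1 := A_mul_inv P hP0 hP1 γ hγ
  have h1 : A⁻¹ - γ • (P * A⁻¹) = 1 := by
    have h2 : (1 - γ • P) * A⁻¹ = 1 := by rw [← hA]; exact hAA
    rwa [Matrix.sub_mul, Matrix.one_mul, Matrix.smul_mul] at h2
  have hinv : A⁻¹ = 1 + γ • (P * A⁻¹) := by
    rw [← sub_eq_iff_eq_add.mp h1]
  have hne : Finset.univ.Nonempty (α := Fin N) := ⟨i, Finset.mem_univ _⟩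
  set Mx : ℝ := Finset.univ.sup' hne (fun k => |A⁻¹ k i|) with hMx
  have hle : ∀ k, |A⁻¹ k i| ≤ Mx :=
    fun k => Finset.le_sup' (fun k => |A⁻¹ k i|) (Finset.mem_univ k)
  have hrec : Mx ≤ 1 + γ * Mx := by
    refine Finset.sup'_le _ _ fun k _ => ?_
    have : A⁻¹ k i = (1 : Matrix (Fin N) (Fin N) ℝ) k i + γ * (P *ᵥ fun l => A⁻¹ l i) k := by
      conv_lhs => rw [hinv]
      simp [Matrix.add_apply, Matrix.mul_apply, Matrix.mulVec, dotProduct]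
    rw [this]
    calc |(1 : Matrix (Fin N) (Fin N) ℝ) k i + γ * (P *ᵥ fun l => A⁻¹ l i) k|
        ≤ |(1 : Matrix (Fin N) (Fin N) ℝ) k i| + |γ * (P *ᵥ fun l => A⁻¹ l i) k| := abs_add_le _ _
      _ ≤ 1 + γ * Mx := by
          gcongr
          · rcases eq_or_ne k i with h | h <;> simp [Matrix.one_apply, h]
          · rw [abs_mul, abs_of_nonneg (le_of_lt hγ.1)]
            exact mul_le_mul_of_nonneg_left (stoch_bound P hP0 hP1 _ Mx hle k) (le_of_lt hγ.1)
  have hMle : Mx ≤ 1 / (1 - γ) := by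
    have h1γ : 0 < 1 - γ := by linarith [hγ.2]
    rw [le_div_iff₀ h1γ]; nlinarith
  exact le_trans (hle j) hMle

private lemma quadG_eq (Ai : Matrix (Fin N) (Fin N) ℝ) (Bm : Fin N → Matrix (Fin N) (Fin N) ℝ)
    (c : ℝ) (v : Fin N → ℝ) :
    v ⬝ᵥ ((c • (Aiᵀ * (∑ i, Bm i) * Ai)) *ᵥ v)
      = c * ∑ i, (Ai *ᵥ v) ⬝ᵥ (Bm i *ᵥ (Ai *ᵥ v)) := by
  rw [Matrix.smul_mulVec, dotProduct_smul, bilin, sum_mulVec', dotProduct_sum']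
  rfl

private lemma quadH_eq (Ai : Matrix (Fin N) (Fin N) ℝ) (Bm : Fin N → Matrix (Fin N) (Fin N) ℝ)
    (c : ℝ) (v : Fin N → ℝ) :
    v ⬝ᵥ ((c • (∑ i, Aiᵀ * Bm i * Ai * Matrix.single i i (1 : ℝ))
        + c • (∑ i, Matrix.single i i (1 : ℝ) * Aiᵀ * Bm i * Ai)) *ᵥ v)
      = c * ∑ i, v i * ((Ai *ᵥ v) ⬝ᵥ (Bm i *ᵥ (Ai *ᵥ Pi.single i 1)))
        + c * ∑ i, v i * ((Ai *ᵥ Pi.single i 1) ⬝ᵥ (Bm i *ᵥ (Ai *ᵥ v))) := by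
  rw [Matrix.add_mulVec, dotProduct_add, Matrix.smul_mulVec,
    Matrix.smul_mulVec, dotProduct_smul, dotProduct_smul,
    sum_mulVec', sum_mulVec', dotProduct_sum', dotProduct_sum']
  congr 2
  · refine Finset.sum_congr rfl fun i _ => ?_
    rw [← Matrix.mulVec_mulVec, stdE_mulVec, bilin]
    have : Ai *ᵥ Pi.single i (v i) = v i • (Ai *ᵥ Pi.single i 1) := by
      ext j; simp [Matrix.mulVec_single]; ring
    rw [this, Matrix.mulVec_smul, dotProduct_smul, smul_eq_mul]
  · refine Finset.sum_congr rfl fun i _ => ?_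
    have hassoc : Matrix.single i i (1:ℝ) * Aiᵀ * Bm i * Ai
        = Matrix.single i i (1:ℝ) * (Aiᵀ * Bm i * Ai) := by
      simp only [Matrix.mul_assoc]
    rw [hassoc, ← Matrix.mulVec_mulVec, stdE_mulVec, dotProduct_single]
    have h2 : ((Aiᵀ * Bm i * Ai) *ᵥ v) i = Pi.single i (1:ℝ) ⬝ᵥ ((Aiᵀ * Bm i * Ai) *ᵥ v) := by
      rw [single_dotProduct, one_mul]
    rw [h2, bilin]

private lemma psd_cross (B : Matrix (Fin N) (Fin N) ℝ)
    (hsym : ∀ u w, u ⬝ᵥ (B *ᵥ w) = w ⬝ᵥ (B *ᵥ u))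
    (hpos : ∀ w, 0 ≤ w ⬝ᵥ (B *ᵥ w)) (u w : Fin N → ℝ) :
    |u ⬝ᵥ (B *ᵥ w)| ≤ (u ⬝ᵥ (B *ᵥ u)) + 4⁻¹ * (w ⬝ᵥ (B *ᵥ w)) := by
  have e : ∀ (c : ℝ), (c • u + w) ⬝ᵥ (B *ᵥ (c • u + w))
      = c^2 * (u ⬝ᵥ (B *ᵥ u)) + 2*c*(u ⬝ᵥ (B *ᵥ w)) + (w ⬝ᵥ (B *ᵥ w)) := by
    intro c
    simp only [Matrix.mulVec_add, Matrix.mulVec_smul, dotProduct_add,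
      add_dotProduct, smul_dotProduct, dotProduct_smul, smul_eq_mul]
    rw [hsym w u]
    ring
  have h1 := hpos ((2:ℝ) • u + w)
  have h2 := hpos ((-2:ℝ) • u + w)
  rw [e 2] at h1
  rw [e (-2)] at h2
  rw [abs_le]
  constructor <;> nlinarith

private lemma smul_quad (B : Matrix (Fin N) (Fin N) ℝ) (c : ℝ) (u : Fin N → ℝ) :
    (c • u) ⬝ᵥ (B *ᵥ (c • u)) = c^2 * (u ⬝ᵥ (B *ᵥ u)) := by
  simp only [Matrix.mulVec_smul, smul_dotProduct, dotProduct_smul, smul_eq_mul]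
  ring

private lemma trace_form (C M : Matrix (Fin N) (Fin N) ℝ) :
    Matrix.trace ((Cᴴ * C) * M) = ∑ k, (fun j => C k j) ⬝ᵥ (M *ᵥ fun j => C k j) := by
  rw [Matrix.mul_assoc, Matrix.trace_mul_comm]
  simp only [Matrix.trace, Matrix.diag, Matrix.mul_apply, Matrix.conjTranspose_apply,
    star_trivial, Matrix.mulVec, dotProduct, Finset.sum_mul, Finset.mul_sum]
  refine Finset.sum_congr rfl fun k _ => ?_
  rw [Finset.sum_comm]
  exact Finset.sum_congr rfl fun j _ => Finset.sum_congr rfl fun l _ => by ring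

end stmt11aux

set_option maxHeartbeats 2000000 in
theorem stmt11_aux {N : ℕ}
    (P : Matrix (Fin N) (Fin N) ℝ) (hP0 : ∀ i j, 0 ≤ P i j) (hP1 : ∀ i, ∑ j, P i j = 1)
    (γ : ℝ) (hγ : γ ∈ Set.Ioo (0 : ℝ) 1)
    (n : ℕ) (hn : 0 < n)
    (b : Fin N → ℝ) (hb : b ≠ 0)
    (S : Matrix (Fin N) (Fin N) ℝ) (hS : S.PosSemidef)
    (hsample : 16 * γ ^ 2 / (1 - γ) ^ 2 ≤ (n : ℝ))
    (B : Fin N → Matrix (Fin N) (Fin N) ℝ)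
    (hB : B = fun i => (n : ℝ)⁻¹ • (Matrix.diagonal (P i) - Matrix.vecMulVec (P i) (P i)))
    (G H : Matrix (Fin N) (Fin N) ℝ)
    (hG : G = γ ^ 2 • (((1 - γ • P)⁻¹)ᵀ * (∑ i, B i) * (1 - γ • P)⁻¹))
    (hH : H = γ ^ 2 • (∑ i, ((1 - γ • P)⁻¹)ᵀ * B i * (1 - γ • P)⁻¹ * Matrix.single i i (1 : ℝ))
        + γ ^ 2 • (∑ i, Matrix.single i i (1 : ℝ) * ((1 - γ • P)⁻¹)ᵀ * B i * (1 - γ • P)⁻¹)) :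
    (b ⬝ᵥ ((1 + (2 : ℝ)⁻¹ • H) *ᵥ b))
        / (b ⬝ᵥ ((1 + G + H) *ᵥ b) + Matrix.trace (S * (1 + G + H)))
      ≤ 1 + 8 * γ ^ 2 / (1 - γ) ^ 2 * (1 / n) := by
  have hγ0 : 0 < γ := hγ.1
  have h1γ : 0 < 1 - γ := by have := hγ.2; linarith
  have hnR : (0:ℝ) < n := Nat.cast_pos.mpr hn
  set Ai : Matrix (Fin N) (Fin N) ℝ := (1 - γ • P)⁻¹ with hAi
  set ε : ℝ := γ^2/((1-γ)^2*n) with hε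
  have hε0 : 0 ≤ ε := by positivity
  have hε16 : ε ≤ 1/16 := by
    rw [hε, div_le_div_iff₀ (by positivity) (by norm_num)]
    have := (div_le_iff₀ (pow_pos h1γ 2)).mp hsample
    nlinarith
  have hεeq : γ^2 * ((n:ℝ)⁻¹ * (1/(1-γ))^2) = ε := by
    rw [hε]; field_simp
  -- B facts
  have hsymB : ∀ i, (B i)ᵀ = B i := by intro i; rw [hB]; exact symmB _ _
  have hsymd : ∀ i (u w : Fin N → ℝ), u ⬝ᵥ (B i *ᵥ w) = w ⬝ᵥ (B i *ᵥ u) :=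
    fun i => symm_dot _ (hsymB i)
  have hBq : ∀ i (w : Fin N → ℝ), w ⬝ᵥ (B i *ᵥ w)
      = (n:ℝ)⁻¹ * ((∑ j, P i j * w j ^ 2) - (∑ j, P i j * w j)^2) := by
    intro i w
    rw [hB]
    simp only
    rw [Matrix.smul_mulVec, dotProduct_smul, smul_eq_mul, quadBform]
  have hBpos : ∀ i (w : Fin N → ℝ), 0 ≤ w ⬝ᵥ (B i *ᵥ w) := by
    intro i w
    rw [hBq]
    have hcs := quadB_CS (P i) w (hP0 i) (hP1 i)
    have h0 : (0:ℝ) ≤ (∑ j, P i j * w j ^ 2) - (∑ j, P i j * w j)^2 := by linarith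
    exact mul_nonneg (by positivity) h0
  -- columns of Ai
  have hz : ∀ i : Fin N, Ai *ᵥ Pi.single i 1 = fun j => Ai j i := by
    intro i; rw [Matrix.mulVec_single]; funext j; simp
  have hzbd : ∀ i j, |Ai j i| ≤ 1/(1-γ) := fun i j => inv_entry_bound P hP0 hP1 γ hγ j i
  have hBz : ∀ i, ((fun j => Ai j i) ⬝ᵥ (B i *ᵥ fun j => Ai j i))
      ≤ (n:ℝ)⁻¹ * (1/(1-γ))^2 := by
    intro i
    rw [hBq]
    have h1 : (∑ j, P i j * (Ai j i) ^2) ≤ (1/(1-γ))^2 := by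
      calc (∑ j, P i j * Ai j i ^2) ≤ ∑ j, P i j * (1/(1-γ))^2 := by
            refine Finset.sum_le_sum fun j _ => ?_
            refine mul_le_mul_of_nonneg_left ?_ (hP0 i j)
            rw [← sq_abs]
            exact pow_le_pow_left₀ (abs_nonneg _) (hzbd i j) 2
        _ = (1/(1-γ))^2 := by rw [← Finset.sum_mul, hP1 i, one_mul]
    have h2 : (0:ℝ) ≤ (∑ j, P i j * Ai j i)^2 := sq_nonneg _
    have h3 : (∑ j, P i j * Ai j i ^2) - (∑ j, P i j * Ai j i)^2 ≤ (1/(1-γ))^2 := by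
      linarith
    exact mul_le_mul_of_nonneg_left h3 (by positivity)
  -- quadratic forms
  have hGq : ∀ v : Fin N → ℝ, v ⬝ᵥ (G *ᵥ v) = γ^2 * ∑ i, (Ai *ᵥ v) ⬝ᵥ (B i *ᵥ (Ai *ᵥ v)) := by
    intro v; rw [hG]; exact quadG_eq Ai B (γ^2) v
  have hGpos : ∀ v, 0 ≤ v ⬝ᵥ (G *ᵥ v) := by
    intro v; rw [hGq]
    exact mul_nonneg (sq_nonneg γ) (Finset.sum_nonneg fun i _ => hBpos i _)
  have hvvsum : ∀ v : Fin N → ℝ, v ⬝ᵥ v = ∑ i, (v i)^2 := by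
    intro v; simp [dotProduct, sq]
  have hHbd : ∀ v : Fin N → ℝ, |v ⬝ᵥ (H *ᵥ v)| ≤ 2*ε*(v ⬝ᵥ v) + 2⁻¹ * (v ⬝ᵥ (G *ᵥ v)) := by
    intro v
    rw [hH, quadH_eq Ai B (γ^2) v]
    have hterm1 : ∀ i, v i * ((Ai *ᵥ v) ⬝ᵥ (B i *ᵥ (Ai *ᵥ Pi.single i 1)))
        = (v i • fun j => Ai j i) ⬝ᵥ (B i *ᵥ (Ai *ᵥ v)) := by
      intro i
      rw [hz i, hsymd i (Ai *ᵥ v) (fun j => Ai j i), smul_dotProduct, smul_eq_mul]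
    have hterm2 : ∀ i, v i * ((Ai *ᵥ Pi.single i 1) ⬝ᵥ (B i *ᵥ (Ai *ᵥ v)))
        = (v i • fun j => Ai j i) ⬝ᵥ (B i *ᵥ (Ai *ᵥ v)) := by
      intro i
      rw [hz i, smul_dotProduct, smul_eq_mul]
    simp only [hterm1, hterm2]
    have hkey : ∀ i, |(v i • fun j => Ai j i) ⬝ᵥ (B i *ᵥ (Ai *ᵥ v))|
        ≤ (v i)^2 * ((n:ℝ)⁻¹ * (1/(1-γ))^2) + 4⁻¹ * ((Ai *ᵥ v) ⬝ᵥ (B i *ᵥ (Ai *ᵥ v))) := by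
      intro i
      refine le_trans (psd_cross (B i) (hsymd i) (hBpos i) _ _) ?_
      rw [smul_quad]
      have h1 := hBz i
      have h2 := sq_nonneg (v i)
      nlinarith
    have habs : |γ^2 * (∑ i, (v i • fun j => Ai j i) ⬝ᵥ (B i *ᵥ (Ai *ᵥ v)))
          + γ^2 * (∑ i, (v i • fun j => Ai j i) ⬝ᵥ (B i *ᵥ (Ai *ᵥ v)))|
        ≤ 2*γ^2 * ∑ i, |(v i • fun j => Ai j i) ⬝ᵥ (B i *ᵥ (Ai *ᵥ v))| := by
      have he : γ^2 * (∑ i, (v i • fun j => Ai j i) ⬝ᵥ (B i *ᵥ (Ai *ᵥ v)))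
          + γ^2 * (∑ i, (v i • fun j => Ai j i) ⬝ᵥ (B i *ᵥ (Ai *ᵥ v)))
          = 2*γ^2 * (∑ i, (v i • fun j => Ai j i) ⬝ᵥ (B i *ᵥ (Ai *ᵥ v))) := by ring
      rw [he, abs_mul, abs_of_nonneg (by positivity : (0:ℝ) ≤ 2*γ^2)]
      exact mul_le_mul_of_nonneg_left (Finset.abs_sum_le_sum_abs _ _) (by positivity)
    refine le_trans habs ?_
    calc 2*γ^2 * ∑ i, |(v i • fun j => Ai j i) ⬝ᵥ (B i *ᵥ (Ai *ᵥ v))|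
        ≤ 2*γ^2 * ∑ i, ((v i)^2 * ((n:ℝ)⁻¹ * (1/(1-γ))^2)
            + 4⁻¹ * ((Ai *ᵥ v) ⬝ᵥ (B i *ᵥ (Ai *ᵥ v)))) := by
          exact mul_le_mul_of_nonneg_left (Finset.sum_le_sum fun i _ => hkey i) (by positivity)
      _ = 2*ε*(v ⬝ᵥ v) + 2⁻¹ * (v ⬝ᵥ (G *ᵥ v)) := by
          rw [Finset.sum_add_distrib, ← Finset.sum_mul, ← Finset.mul_sum, hGq, hvvsum, ← hεeq]
          ring
  have hquad : ∀ v : Fin N → ℝ,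
      (1 - 2*ε)*(v ⬝ᵥ v) + 2⁻¹*(v ⬝ᵥ (G *ᵥ v)) ≤ v ⬝ᵥ ((1 + G + H) *ᵥ v) := by
    intro v
    have hexp : v ⬝ᵥ ((1 + G + H) *ᵥ v) = v ⬝ᵥ v + v ⬝ᵥ (G *ᵥ v) + v ⬝ᵥ (H *ᵥ v) := by
      rw [Matrix.add_mulVec, Matrix.add_mulVec, Matrix.one_mulVec, dotProduct_add,
        dotProduct_add]
    have hH1 := (abs_le.mp (hHbd v)).1
    rw [hexp]
    linarith
  have hTpos : 0 ≤ Matrix.trace (S * (1 + G + H)) := by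
    obtain ⟨C, hC⟩ : ∃ C : Matrix (Fin N) (Fin N) ℝ, S = Cᴴ * C := by
      open scoped MatrixOrder in exact CStarAlgebra.nonneg_iff_eq_star_mul_self.mp hS.nonneg
    rw [hC, trace_form]
    refine Finset.sum_nonneg fun k _ => ?_
    have hvv0 : (0:ℝ) ≤ (fun j => C k j) ⬝ᵥ (fun j => C k j) :=
      Finset.sum_nonneg fun j _ => mul_self_nonneg _
    have h1 := hquad (fun j => C k j)
    have h2 := hGpos (fun j => C k j)
    nlinarith
  have hnum : b ⬝ᵥ ((1 + (2:ℝ)⁻¹ • H) *ᵥ b) = b ⬝ᵥ b + 2⁻¹ * (b ⬝ᵥ (H *ᵥ b)) := by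
    rw [Matrix.add_mulVec, Matrix.one_mulVec, dotProduct_add,
      Matrix.smul_mulVec, dotProduct_smul, smul_eq_mul]
  have hden : b ⬝ᵥ ((1 + G + H) *ᵥ b) = b ⬝ᵥ b + b ⬝ᵥ (G *ᵥ b) + b ⬝ᵥ (H *ᵥ b) := by
    rw [Matrix.add_mulVec, Matrix.add_mulVec, Matrix.one_mulVec, dotProduct_add,
      dotProduct_add]
  have hQ : 0 < b ⬝ᵥ b := by
    have h0 : 0 ≤ b ⬝ᵥ b := Finset.sum_nonneg fun j _ => mul_self_nonneg _
    have hne : b ⬝ᵥ b ≠ 0 := fun h => hb (dotProduct_self_eq_zero.mp h)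
    exact lt_of_le_of_ne h0 (Ne.symm hne)
  have hHb := abs_le.mp (hHbd b)
  have hgb := hGpos b
  have hdenpos : 0 < b ⬝ᵥ ((1 + G + H) *ᵥ b) + Matrix.trace (S * (1 + G + H)) := by
    have h1 := hquad b
    nlinarith
  rw [div_le_iff₀ hdenpos]
  have hrhs : 1 + 8 * γ ^ 2 / (1 - γ) ^ 2 * (1 / n) = 1 + 8 * ε := by
    rw [hε]; field_simp
  rw [hrhs, hnum, hden]
  nlinarith [hHb.1, hHb.2, hgb, hQ, hTpos, hε0, hε16,
    mul_nonneg hε0 hgb, mul_nonneg hε0 hQ.le, mul_nonneg hε0 hTpos,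
    mul_nonneg (by linarith : (0:ℝ) ≤ 1/16 - ε) (mul_nonneg hε0 hQ.le),
    mul_nonneg hε0 (by linarith [hHb.1] : 0 ≤ b ⬝ᵥ (H *ᵥ b) + 2*ε*(b ⬝ᵥ b) + 2⁻¹*(b ⬝ᵥ (G *ᵥ b)))]

/-- In the setting of Statement 10 (residual norm `M = I`), if
`n ≥ 16γ²/(1−γ)²`, then for `b ≠ 0` and PSD `Σ`,
`θ(b,P) ≤ 1 + (8γ²/(1−γ)²)·(1/n)`. -/
theorem stmt11 {N : ℕ}
    (P : Matrix (Fin N) (Fin N) ℝ) (hP0 : ∀ i j, 0 ≤ P i j) (hP1 : ∀ i, ∑ j, P i j = 1)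
    (γ : ℝ) (hγ : γ ∈ Set.Ioo (0 : ℝ) 1)
    (n : ℕ) (hn : 0 < n)
    (b : Fin N → ℝ) (hb : b ≠ 0)
    (S : Matrix (Fin N) (Fin N) ℝ) (hS : S.PosSemidef)
    (hsample : 16 * γ ^ 2 / (1 - γ) ^ 2 ≤ (n : ℝ)) :
    letI A : Matrix (Fin N) (Fin N) ℝ := 1 - γ • P
    letI B : Fin N → Matrix (Fin N) (Fin N) ℝ :=
      fun i => (n : ℝ)⁻¹ • (Matrix.diagonal (P i) - Matrix.vecMulVec (P i) (P i))
    letI G : Matrix (Fin N) (Fin N) ℝ := γ ^ 2 • ((A⁻¹)ᵀ * (∑ i, B i) * A⁻¹)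
    letI H : Matrix (Fin N) (Fin N) ℝ :=
      γ ^ 2 • (∑ i, (A⁻¹)ᵀ * B i * A⁻¹ * Matrix.single i i (1 : ℝ))
        + γ ^ 2 • (∑ i, Matrix.single i i (1 : ℝ) * (A⁻¹)ᵀ * B i * A⁻¹)
    (b ⬝ᵥ ((1 + (2 : ℝ)⁻¹ • H) *ᵥ b))
        / (b ⬝ᵥ ((1 + G + H) *ᵥ b) + Matrix.trace (S * (1 + G + H)))
      ≤ 1 + 8 * γ ^ 2 / (1 - γ) ^ 2 * (1 / n) := by
  exact stmt11_aux P hP0 hP1 γ hγ n hn b hb S hS hsample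
    (fun i => (n : ℝ)⁻¹ • (Matrix.diagonal (P i) - Matrix.vecMulVec (P i) (P i))) rfl
    _ _ rfl rfl
end

section
/- Let P ∈ ℝ^{N×N} be row-stochastic with rows p_1ᵀ, …, p_Nᵀ, γ ∈ (0,1), n a positive integer, A = I − γP, B_i = (1/n)(diag(p_i) − p_i p_iᵀ), G = γ² A^{-T}(Σ_{i=1}^{N} B_i)A^{-1}, H = γ²(Σ_{i=1}^{N} A^{-T} B_i A^{-1} diag(e_i)) + γ²(Σ_{i=1}^{N} diag(e_i) A^{-T} B_i A^{-1}), and for b ∈ ℝ^N, b ≠ 0, and symmetric positive semidefinite Σ ∈ ℝ^{N×N} define θ(b,P) = bᵀ(I + H/2)b / (bᵀ(I + G + H)b + tr(Σ(I + G + H))). Let p_M = max_{i,j} P_{ij}, b_M = max_i |b_i|, and τ = (p_M/n)·(γ²/(1 − γ)²)·((1 − γ) + γ·√N·b_M/‖b‖₂)². If τ ≤ 1/2, then θ(b,P) ≤ 1 + τ. -/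
open Matrix BigOperators

lemma sum_sq_le_sq_sum' {ι : Type*} (s : Finset ι) (f : ι → ℝ) (hf : ∀ i ∈ s, 0 ≤ f i) :
    ∑ i ∈ s, (f i)^2 ≤ (∑ i ∈ s, f i)^2 := by
  have h : ∀ i ∈ s, (f i)^2 ≤ f i * ∑ j ∈ s, f j := by
    intro i hi
    have h1 : f i ≤ ∑ j ∈ s, f j := Finset.single_le_sum hf hi
    have := hf i hi
    nlinarith
  calc ∑ i ∈ s, (f i)^2 ≤ ∑ i ∈ s, f i * ∑ j ∈ s, f j := Finset.sum_le_sum h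
    _ = (∑ i ∈ s, f i)^2 := by rw [← Finset.sum_mul]; ring

lemma weighted_cs' {ι : Type*} (s : Finset ι) (p t : ι → ℝ) (hp : ∀ i ∈ s, 0 ≤ p i) :
    (∑ i ∈ s, p i * t i)^2 ≤ (∑ i ∈ s, p i) * ∑ i ∈ s, p i * (t i)^2 := by
  have h := Finset.sum_mul_sq_le_sq_mul_sq s (fun i => Real.sqrt (p i))
    (fun i => Real.sqrt (p i) * t i)
  have e1 : ∀ i ∈ s, Real.sqrt (p i) * (Real.sqrt (p i) * t i) = p i * t i := by
    intro i hi; rw [← mul_assoc, Real.mul_self_sqrt (hp i hi)]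
  have e2 : ∀ i ∈ s, (Real.sqrt (p i))^2 = p i := fun i hi => Real.sq_sqrt (hp i hi)
  have e3 : ∀ i ∈ s, (Real.sqrt (p i) * t i)^2 = p i * (t i)^2 := by
    intro i hi; rw [mul_pow, Real.sq_sqrt (hp i hi)]
  rw [Finset.sum_congr rfl e1, Finset.sum_congr rfl e2, Finset.sum_congr rfl e3] at h
  exact h

lemma stmt12_det {N : ℕ} [NeZero N] (P : Matrix (Fin N) (Fin N) ℝ)
    (hP0 : ∀ i j, 0 ≤ P i j) (hP1 : ∀ i, ∑ j, P i j = 1)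
    {γ : ℝ} (h0 : 0 < γ) (h1 : γ < 1) : IsUnit (1 - γ • P).det := by
  rw [isUnit_iff_ne_zero]
  intro hdet
  obtain ⟨v, hv0, hv⟩ := Matrix.exists_mulVec_eq_zero_iff.mpr hdet
  obtain ⟨i, -, hi⟩ := Finset.exists_mem_eq_sup' (s := (Finset.univ : Finset (Fin N)))
    Finset.univ_nonempty (fun i : Fin N => |v i|)
  have hvi : ∀ j, |v j| ≤ |v i| := fun j => by
    rw [← hi]; exact Finset.le_sup' (fun i : Fin N => |v i|) (Finset.mem_univ j)
  have hcomp : v i - γ * ∑ j, P i j * v j = 0 := by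
    have h := congrFun hv i
    simp only [Matrix.sub_mulVec, Matrix.smul_mulVec, Matrix.one_mulVec,
      Pi.sub_apply, Pi.smul_apply, smul_eq_mul, Pi.zero_apply] at h
    simpa [Matrix.mulVec, dotProduct] using h
  have habs : |∑ j, P i j * v j| ≤ |v i| := by
    calc |∑ j, P i j * v j| ≤ ∑ j, |P i j * v j| := Finset.abs_sum_le_sum_abs _ _
      _ ≤ ∑ j, P i j * |v i| := by
          refine Finset.sum_le_sum fun j _ => ?_
          rw [abs_mul, abs_of_nonneg (hP0 i j)]
          exact mul_le_mul_of_nonneg_left (hvi j) (hP0 i j)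
      _ = |v i| := by rw [← Finset.sum_mul, hP1 i, one_mul]
  have hle : |v i| ≤ γ * |v i| := by
    calc |v i| = γ * |∑ j, P i j * v j| := by
          rw [show v i = γ * ∑ j, P i j * v j by linarith, abs_mul, abs_of_pos h0]
      _ ≤ γ * |v i| := mul_le_mul_of_nonneg_left habs h0.le
  have hvi0 : |v i| = 0 := by nlinarith [abs_nonneg (v i)]
  apply hv0
  funext j
  have h2 : |v j| = 0 := le_antisymm (by linarith [hvi j]) (abs_nonneg _)
  simpa using h2

noncomputable def Bqf {N : ℕ} (n : ℕ) (P : Matrix (Fin N) (Fin N) ℝ) (i : Fin N) (x y : Fin N → ℝ) : ℝ :=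
  (n : ℝ)⁻¹ * ((∑ j, P i j * (x j * y j)) -
    (∑ j, P i j * x j) * (∑ j, P i j * y j))

set_option maxHeartbeats 1000000 in
lemma stmt12_main {N : ℕ} [NeZero N]
    (P : Matrix (Fin N) (Fin N) ℝ) (hP0 : ∀ i j, 0 ≤ P i j) (hP1 : ∀ i, ∑ j, P i j = 1)
    {γ : ℝ} (hγ0 : 0 < γ) (hγ1 : γ < 1)
    {n : ℕ} (hn : 0 < n)
    {b : Fin N → ℝ} (hb : b ≠ 0)
    {S : Matrix (Fin N) (Fin N) ℝ} (hS : S.PosSemidef)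
    {pM bM τ : ℝ}
    (hpM : ∀ i j, P i j ≤ pM) (hpM1 : pM ≤ 1)
    (hbM : ∀ i, |b i| ≤ bM)
    (Bm : Fin N → Matrix (Fin N) (Fin N) ℝ)
    (hB : ∀ i, Bm i = (n : ℝ)⁻¹ • (Matrix.diagonal (P i) - Matrix.vecMulVec (P i) (P i)))
    (Q : Matrix (Fin N) (Fin N) ℝ) (hQ : Q = (1 - γ • P)⁻¹)
    (G : Matrix (Fin N) (Fin N) ℝ) (hG : G = γ ^ 2 • (Qᵀ * (∑ i, Bm i) * Q))
    (H : Matrix (Fin N) (Fin N) ℝ)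
    (hH : H = γ ^ 2 • (∑ i, Qᵀ * Bm i * Q * Matrix.single i i (1 : ℝ))
        + γ ^ 2 • (∑ i, Matrix.single i i (1 : ℝ) * Qᵀ * Bm i * Q))
    (hτeq : τ = pM / n * (γ ^ 2 / (1 - γ) ^ 2) *
      ((1 - γ) + γ * Real.sqrt N * bM / Real.sqrt (∑ i, b i ^ 2)) ^ 2)
    (hτ : τ ≤ 1 / 2) :
    (b ⬝ᵥ ((1 + (2 : ℝ)⁻¹ • H) *ᵥ b))
        / (b ⬝ᵥ ((1 + G + H) *ᵥ b) + Matrix.trace (S * (1 + G + H)))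
      ≤ 1 + τ := by
  have hn0 : (0:ℝ) < n := Nat.cast_pos.mpr hn
  have h1γ : (0:ℝ) < 1 - γ := by linarith
  have hdet : IsUnit (1 - γ • P).det := stmt12_det P hP0 hP1 hγ0 hγ1
  have hAQ : (1 - γ • P) * Q = 1 := by rw [hQ]; exact Matrix.mul_nonsing_inv _ hdet
  have hQA : Q * (1 - γ • P) = 1 := by rw [hQ]; exact Matrix.nonsing_inv_mul _ hdet
  have hpM0 : 0 ≤ pM := le_trans (hP0 (Classical.arbitrary _) (Classical.arbitrary _))
    (hpM _ _)
  have hbM0 : 0 ≤ bM := le_trans (abs_nonneg _) (hbM (Classical.arbitrary _))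
  have hnb2 : 0 < ∑ i, b i ^ 2 := by
    rcases Function.ne_iff.mp hb with ⟨i, hi⟩
    have hi2 : b i ≠ 0 := by simpa using hi
    have hbi : 0 < b i ^ 2 := by positivity
    exact Finset.sum_pos' (fun j _ => sq_nonneg _) ⟨i, Finset.mem_univ i, hbi⟩
  -- Neumann-type identities
  have hQ1 : Q = 1 + γ • (P * Q) := by
    have e : Q - γ • (P * Q) = 1 := by
      rw [← hAQ, Matrix.sub_mul, Matrix.one_mul, Matrix.smul_mul]
    rw [← e]; abel
  have hQ2 : Q = 1 + γ • (Q * P) := by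
    have e : Q - γ • (Q * P) = 1 := by
      rw [← hQA, Matrix.mul_sub, Matrix.mul_one, Matrix.mul_smul]
    rw [← e]; abel
  have hQ1e : ∀ j i, Q j i = (if j = i then 1 else 0) + γ * ∑ c, P j c * Q c i := by
    intro j i
    conv_lhs => rw [hQ1]
    simp [Matrix.add_apply, Matrix.one_apply, Matrix.smul_apply, Matrix.mul_apply,
      smul_eq_mul]
  have hQ2e : ∀ j i, Q j i = (if j = i then 1 else 0) + γ * ∑ c, Q j c * P c i := by
    intro j i
    conv_lhs => rw [hQ2]
    simp [Matrix.add_apply, Matrix.one_apply, Matrix.smul_apply, Matrix.mul_apply,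
      smul_eq_mul]
  -- row ℓ¹ bound
  have hrow : ∀ j, ∑ i, |Q j i| ≤ (1 - γ)⁻¹ := by
    obtain ⟨j₀, -, hj₀⟩ := Finset.exists_mem_eq_sup' (s := (Finset.univ : Finset (Fin N)))
      Finset.univ_nonempty (fun j : Fin N => ∑ i, |Q j i|)
    have hR : ∀ j, ∑ i, |Q j i| ≤ ∑ i, |Q j₀ i| := fun j => by
      rw [← hj₀]; exact Finset.le_sup' (fun j : Fin N => ∑ i, |Q j i|) (Finset.mem_univ j)
    have key : ∑ i, |Q j₀ i| ≤ 1 + γ * ∑ i, |Q j₀ i| := by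
      calc ∑ i, |Q j₀ i|
          ≤ ∑ i, ((if j₀ = i then 1 else 0) + γ * ∑ c, P j₀ c * |Q c i|) := by
            refine Finset.sum_le_sum fun i _ => ?_
            calc |Q j₀ i| = |(if j₀ = i then 1 else 0) + γ * ∑ c, P j₀ c * Q c i| := by
                  rw [← hQ1e j₀ i]
              _ ≤ |if j₀ = i then 1 else 0| + |γ * ∑ c, P j₀ c * Q c i| := abs_add_le _ _
              _ ≤ (if j₀ = i then 1 else 0) + γ * ∑ c, P j₀ c * |Q c i| := by
                  refine add_le_add (le_of_eq (by split_ifs <;> simp)) ?_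
                  rw [abs_mul, abs_of_pos hγ0]
                  refine mul_le_mul_of_nonneg_left ?_ hγ0.le
                  calc |∑ c, P j₀ c * Q c i| ≤ ∑ c, |P j₀ c * Q c i| :=
                        Finset.abs_sum_le_sum_abs _ _
                    _ = ∑ c, P j₀ c * |Q c i| := Finset.sum_congr rfl fun c _ => by
                        rw [abs_mul, abs_of_nonneg (hP0 _ _)]
        _ = 1 + γ * ∑ c, P j₀ c * (∑ i, |Q c i|) := by
            rw [Finset.sum_add_distrib, Finset.sum_ite_eq Finset.univ j₀ (fun _ => (1:ℝ))]
            simp only [Finset.mem_univ, if_true]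
            congr 1
            rw [← Finset.mul_sum]
            congr 1
            rw [Finset.sum_comm]
            exact Finset.sum_congr rfl fun c _ => by rw [Finset.mul_sum]
        _ ≤ 1 + γ * ∑ c, P j₀ c * (∑ i, |Q j₀ i|) := by
            refine add_le_add_right (mul_le_mul_of_nonneg_left
              (Finset.sum_le_sum fun c _ => mul_le_mul_of_nonneg_left (hR c) (hP0 _ _))
              hγ0.le) 1
        _ = 1 + γ * ∑ i, |Q j₀ i| := by rw [← Finset.sum_mul, hP1 j₀, one_mul]
    intro j
    refine le_trans (hR j) ?_
    rw [inv_eq_one_div, le_div_iff₀ h1γ]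
    nlinarith
  -- entry bound
  set a : ℝ := γ * (pM * (1 - γ)⁻¹) with ha_def
  have ha0 : 0 ≤ a := by positivity
  have hq : ∀ j i, |Q j i| ≤ (if j = i then 1 else 0) + a := by
    intro j i
    calc |Q j i| = |(if j = i then 1 else 0) + γ * ∑ c, Q j c * P c i| := by
          rw [← hQ2e j i]
      _ ≤ |if j = i then 1 else 0| + |γ * ∑ c, Q j c * P c i| := abs_add_le _ _
      _ ≤ (if j = i then 1 else 0) + a := by
          refine add_le_add (le_of_eq (by split_ifs <;> simp)) ?_
          rw [abs_mul, abs_of_pos hγ0, ha_def]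
          refine mul_le_mul_of_nonneg_left ?_ hγ0.le
          calc |∑ c, Q j c * P c i| ≤ ∑ c, |Q j c * P c i| := Finset.abs_sum_le_sum_abs _ _
            _ ≤ ∑ c, |Q j c| * pM := by
                refine Finset.sum_le_sum fun c _ => ?_
                rw [abs_mul, abs_of_nonneg (hP0 _ _)]
                exact mul_le_mul_of_nonneg_left (hpM c i) (abs_nonneg _)
            _ = (∑ c, |Q j c|) * pM := by rw [Finset.sum_mul]
            _ ≤ (1 - γ)⁻¹ * pM := mul_le_mul_of_nonneg_right (hrow j) hpM0
            _ = pM * (1 - γ)⁻¹ := by ring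
  -- scalar bilinear form
  have hBf : ∀ i (x y : Fin N → ℝ), x ⬝ᵥ (Bm i *ᵥ y) = Bqf n P i x y := by
    intro i x y
    rw [hB i, Matrix.smul_mulVec, dotProduct_smul, smul_eq_mul]
    simp only [Bqf]
    congr 1
    rw [Matrix.sub_mulVec, dotProduct_sub]
    congr 1
    · simp only [dotProduct, Matrix.mulVec_diagonal]
      exact Finset.sum_congr rfl fun j _ => by ring
    · simp only [dotProduct, Matrix.mulVec, Matrix.vecMulVec_apply]
      rw [Finset.sum_mul]
      refine Finset.sum_congr rfl fun j _ => ?_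
      rw [Finset.mul_sum, Finset.mul_sum]
      exact Finset.sum_congr rfl fun k _ => by ring
  have Bqnn : ∀ i x, 0 ≤ Bqf n P i x x := by
    intro i x
    simp only [Bqf]
    have h := weighted_cs' Finset.univ (P i) x (fun j _ => hP0 i j)
    rw [hP1 i, one_mul] at h
    have e : ∑ j, P i j * (x j * x j) = ∑ j, P i j * (x j)^2 :=
      Finset.sum_congr rfl fun j _ => by ring
    have hn' : (0:ℝ) ≤ (n : ℝ)⁻¹ := by positivity
    nlinarith
  have Bqle : ∀ i x, Bqf n P i x x ≤ (n : ℝ)⁻¹ * ∑ j, P i j * (x j)^2 := by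
    intro i x
    simp only [Bqf]
    have e : ∑ j, P i j * (x j * x j) = ∑ j, P i j * (x j)^2 :=
      Finset.sum_congr rfl fun j _ => by ring
    have hn' : (0:ℝ) ≤ (n : ℝ)⁻¹ := by positivity
    nlinarith [mul_self_nonneg (∑ j, P i j * x j)]
  have Bqsym : ∀ i x y, Bqf n P i x y = Bqf n P i y x := by
    intro i x y
    simp only [Bqf]
    have e : ∑ j, P i j * (x j * y j) = ∑ j, P i j * (y j * x j) :=
      Finset.sum_congr rfl fun j _ => by ring
    rw [e]; ring
  have Bqexp : ∀ i (y z : Fin N → ℝ) (c : ℝ),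
      Bqf n P i (fun j => y j + c * z j) (fun j => y j + c * z j)
        = Bqf n P i y y + 2 * c * Bqf n P i z y + c^2 * Bqf n P i z z := by
    intro i y z c
    simp only [Bqf]
    have e1 : ∑ j, P i j * ((y j + c * z j) * (y j + c * z j))
        = (∑ j, P i j * (y j * y j)) + 2 * c * (∑ j, P i j * (z j * y j))
          + c^2 * ∑ j, P i j * (z j * z j) := by
      rw [Finset.mul_sum, Finset.mul_sum, ← Finset.sum_add_distrib, ← Finset.sum_add_distrib]
      exact Finset.sum_congr rfl fun j _ => by ring
    have e2 : ∑ j, P i j * (y j + c * z j) = (∑ j, P i j * y j) + c * ∑ j, P i j * z j := by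
      rw [Finset.mul_sum, ← Finset.sum_add_distrib]
      exact Finset.sum_congr rfl fun j _ => by ring
    rw [e1, e2]; ring
  set u : Fin N → (Fin N → ℝ) := fun i j => Q j i with hu_def
  -- sum helpers
  have hmulsum : ∀ (M : Fin N → Matrix (Fin N) (Fin N) ℝ) (x : Fin N → ℝ),
      (∑ i, M i) *ᵥ x = ∑ i, (M i *ᵥ x) := by
    intro M x
    ext k
    simp only [Matrix.mulVec, dotProduct, Matrix.sum_apply, Finset.sum_apply,
      Finset.sum_mul]
    exact Finset.sum_comm
  have hdotsum : ∀ (x : Fin N → ℝ) (w : Fin N → (Fin N → ℝ)),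
      x ⬝ᵥ (∑ i, w i) = ∑ i, x ⬝ᵥ w i := by
    intro x w
    simp only [dotProduct, Finset.sum_apply, Finset.mul_sum]
    exact Finset.sum_comm
  -- quadratic forms of G and H
  have hdotG : ∀ x : Fin N → ℝ, x ⬝ᵥ (G *ᵥ x) = γ^2 * ∑ i, Bqf n P i (Q *ᵥ x) (Q *ᵥ x) := by
    intro x
    rw [hG, Matrix.smul_mulVec, dotProduct_smul, smul_eq_mul]
    congr 1
    rw [← Matrix.mulVec_mulVec, ← Matrix.mulVec_mulVec, Matrix.dotProduct_mulVec,
      Matrix.vecMul_transpose, hmulsum, hdotsum]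
    exact Finset.sum_congr rfl fun i _ => hBf i _ _
  have hdotH : ∀ x : Fin N → ℝ,
      x ⬝ᵥ (H *ᵥ x) = 2 * γ^2 * ∑ i, x i * Bqf n P i (u i) (Q *ᵥ x) := by
    intro x
    have claim1 : ∀ i, x ⬝ᵥ ((Qᵀ * Bm i * Q * Matrix.single i i (1:ℝ)) *ᵥ x)
        = x i * Bqf n P i (u i) (Q *ᵥ x) := by
      intro i
      rw [← Matrix.mulVec_mulVec, ← Matrix.mulVec_mulVec, ← Matrix.mulVec_mulVec,
        Matrix.dotProduct_mulVec, Matrix.vecMul_transpose]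
      have hE : Matrix.single i i (1:ℝ) *ᵥ x = Pi.single i (x i) := by
        ext k
        simp only [Matrix.mulVec, dotProduct, Matrix.single,
          Matrix.of_apply, Pi.single_apply, boole_mul, ite_mul, zero_mul, one_mul]
        by_cases hik : i = k
        · subst hik; simp
        · simp [hik, Ne.symm hik]
      rw [hE]
      have e2 : Q *ᵥ Pi.single i (x i) = x i • u i := by
        ext j; simp [Matrix.mulVec, dotProduct, Pi.single_apply, hu_def, mul_comm]
      rw [e2, Matrix.mulVec_smul, dotProduct_smul, smul_eq_mul, hBf, Bqsym]
    have claim2 : ∀ i, x ⬝ᵥ ((Matrix.single i i (1:ℝ) * Qᵀ * Bm i * Q) *ᵥ x)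
        = x i * Bqf n P i (u i) (Q *ᵥ x) := by
      intro i
      rw [← Matrix.mulVec_mulVec, ← Matrix.mulVec_mulVec, ← Matrix.mulVec_mulVec]
      have hxE : ∀ w : Fin N → ℝ, x ⬝ᵥ (Matrix.single i i (1:ℝ) *ᵥ w) = x i * w i := by
        intro w
        simp only [Matrix.mulVec, dotProduct, Matrix.single,
          Matrix.of_apply, Finset.mul_sum]
        have hsum1 : ∀ x1, (∑ x2, x x1 * ((if i = x1 ∧ i = x2 then (1:ℝ) else 0) * w x2))
            = if i = x1 then x x1 * w i else 0 := by
          intro x1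
          by_cases h : i = x1
          · subst h
            simp [Finset.sum_ite_eq]
          · simp [h]
        rw [Finset.sum_congr rfl (fun x1 _ => hsum1 x1), Finset.sum_ite_eq]
        simp
      rw [hxE]
      have e3 : (Qᵀ *ᵥ (Bm i *ᵥ (Q *ᵥ x))) i = (u i) ⬝ᵥ (Bm i *ᵥ (Q *ᵥ x)) := by
        simp [Matrix.mulVec, dotProduct, Matrix.transpose_apply, hu_def]
      rw [e3, hBf]
    rw [hH, Matrix.add_mulVec, dotProduct_add, Matrix.smul_mulVec,
      Matrix.smul_mulVec, dotProduct_smul, dotProduct_smul, smul_eq_mul, smul_eq_mul,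
      hmulsum, hmulsum, hdotsum, hdotsum,
      Finset.sum_congr rfl (fun i _ => claim1 i), Finset.sum_congr rfl (fun i _ => claim2 i)]
    ring
  -- per-index key bound
  have hBquu : ∀ i, Bqf n P i (u i) (u i) ≤ (n : ℝ)⁻¹ * (pM * (1+a)^2 + a^2) := by
    intro i
    refine le_trans (Bqle i (u i)) ?_
    refine mul_le_mul_of_nonneg_left ?_ (by positivity)
    calc ∑ j, P i j * (u i j)^2
        ≤ ∑ j, P i j * ((if j = i then 1 else 0) + a)^2 := by
          refine Finset.sum_le_sum fun j _ => ?_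
          refine mul_le_mul_of_nonneg_left ?_ (hP0 i j)
          have h1 : |Q j i| ≤ (if j = i then 1 else 0) + a := hq j i
          have h2 : (u i j)^2 = |Q j i|^2 := (sq_abs (Q j i)).symm
          rw [h2]
          exact pow_le_pow_left₀ (abs_nonneg _) h1 2
      _ = ∑ j, (P i j * a^2 + (if j = i then P i j * ((1+a)^2 - a^2) else 0)) := by
          refine Finset.sum_congr rfl fun j _ => ?_
          split_ifs <;> ring
      _ = a^2 + P i i * ((1+a)^2 - a^2) := by
          rw [Finset.sum_add_distrib, ← Finset.sum_mul, hP1 i, one_mul,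
            Finset.sum_ite_eq' Finset.univ i (fun j => P i j * ((1+a)^2 - a^2))]
          simp
      _ ≤ pM * (1+a)^2 + a^2 := by nlinarith [hP0 i i, hpM i i, mul_nonneg hpM0 (sq_nonneg a),
            mul_le_mul_of_nonneg_right (hpM i i) (show (0:ℝ) ≤ 1 + 2*a by linarith)]
  have hcτ : γ^2 * pM / (↑n * (1-γ)^2) ≤ τ := by
    have hs0 : 0 < Real.sqrt (∑ i, b i ^2) := Real.sqrt_pos.mpr hnb2
    have hb2 : Real.sqrt (∑ i, b i^2) ≤ Real.sqrt N * bM := by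
      have h1 : (∑ i, b i^2) ≤ (N : ℝ) * bM^2 := by
        calc ∑ i, b i^2 ≤ ∑ _i : Fin N, bM^2 := by
              refine Finset.sum_le_sum fun i _ => ?_
              have := hbM i
              nlinarith [abs_nonneg (b i), sq_abs (b i)]
          _ = (N:ℝ) * bM^2 := by
              rw [Finset.sum_const, Finset.card_univ, Fintype.card_fin, nsmul_eq_mul]
      calc Real.sqrt (∑ i, b i^2) ≤ Real.sqrt ((N:ℝ) * bM^2) := Real.sqrt_le_sqrt h1
        _ = Real.sqrt N * bM := by
            rw [Real.sqrt_mul (Nat.cast_nonneg N), Real.sqrt_sq hbM0]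
    have hK1 : 1 ≤ (1-γ) + γ * Real.sqrt N * bM / Real.sqrt (∑ i, b i ^ 2) := by
      have h2 : 1 ≤ Real.sqrt N * bM / Real.sqrt (∑ i, b i ^2) :=
        (one_le_div hs0).mpr hb2
      have h3 : γ * 1 ≤ γ * (Real.sqrt N * bM / Real.sqrt (∑ i, b i ^2)) :=
        mul_le_mul_of_nonneg_left h2 hγ0.le
      have h4 : γ * Real.sqrt N * bM / Real.sqrt (∑ i, b i ^ 2)
          = γ * (Real.sqrt N * bM / Real.sqrt (∑ i, b i ^2)) := by ring
      rw [h4]; linarith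
    rw [hτeq]
    have hc0 : (0:ℝ) ≤ pM / n * (γ^2 / (1-γ)^2) := by positivity
    have hK2 : 1 ≤ ((1-γ) + γ * Real.sqrt N * bM / Real.sqrt (∑ i, b i ^ 2))^2 := by nlinarith
    have he : γ^2 * pM / (↑n * (1-γ)^2) = pM / n * (γ^2/(1-γ)^2) * 1 := by
      field_simp
    rw [he]
    exact mul_le_mul_of_nonneg_left hK2 hc0
  have hkey1 : ∀ i, γ^2 * Bqf n P i (u i) (u i) ≤ 1 := by
    intro i
    have h1 : γ^2 * Bqf n P i (u i) (u i) ≤ γ^2 * ((n : ℝ)⁻¹ * (pM * (1+a)^2 + a^2)) :=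
      mul_le_mul_of_nonneg_left (hBquu i) (sq_nonneg γ)
    have he : γ^2 * ((n : ℝ)⁻¹ * (pM * (1+a)^2 + a^2))
        = γ^2*pM/(↑n*(1-γ)^2) * ((1-γ) + γ*pM)^2 + γ^2*pM/(↑n*(1-γ)^2) * (γ^2*pM) := by
      rw [ha_def]
      field_simp
    have hc05 : γ^2*pM/(↑n*(1-γ)^2) ≤ 1/2 := le_trans hcτ hτ
    have hc0 : (0:ℝ) ≤ γ^2*pM/(↑n*(1-γ)^2) := by positivity
    have hx1 : ((1-γ) + γ*pM)^2 ≤ 1 := by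
      have t1 : γ * pM ≤ γ := by nlinarith
      have t0 : 0 ≤ (1-γ) + γ*pM := by nlinarith [mul_nonneg hγ0.le hpM0]
      nlinarith
    have hx2 : γ^2*pM ≤ 1 := by nlinarith
    nlinarith [mul_le_mul_of_nonneg_left hx1 hc0, mul_le_mul_of_nonneg_left hx2 hc0]
  -- weighted key bound
  have hs : γ^2 * ∑ i, (b i)^2 * Bqf n P i (u i) (u i) ≤ τ * ∑ i, b i ^ 2 := by
    have hs0pos : 0 < Real.sqrt (∑ i, b i ^ 2) := Real.sqrt_pos.mpr hnb2
    have hs0sq : (Real.sqrt (∑ i, b i ^ 2))^2 = ∑ i, b i ^ 2 := Real.sq_sqrt hnb2.le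
    set s0 : ℝ := Real.sqrt (∑ i, b i ^ 2) with hs0def
    set R : ℝ := Real.sqrt N * (bM * (1 - γ)⁻¹) with hRdef
    have hR0 : 0 ≤ R := mul_nonneg (Real.sqrt_nonneg _)
      (mul_nonneg hbM0 (by positivity))
    have hueq : ∀ (i j : Fin N), u i j = Q j i := fun _ _ => rfl
    have stepA : ∑ i, (b i)^2 * Bqf n P i (u i) (u i)
        ≤ (n:ℝ)⁻¹ * (pM * ∑ i, ∑ j, (Q j i * b i)^2) := by
      calc ∑ i, (b i)^2 * Bqf n P i (u i) (u i)
          ≤ ∑ i, (b i)^2 * ((n:ℝ)⁻¹ * ∑ j, P i j * (u i j)^2) :=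
            Finset.sum_le_sum fun i _ =>
              mul_le_mul_of_nonneg_left (Bqle i (u i)) (sq_nonneg _)
        _ ≤ ∑ i, (b i)^2 * ((n:ℝ)⁻¹ * ∑ j, pM * (u i j)^2) := by
            refine Finset.sum_le_sum fun i _ => ?_
            refine mul_le_mul_of_nonneg_left
              (mul_le_mul_of_nonneg_left ?_ (by positivity)) (sq_nonneg _)
            exact Finset.sum_le_sum fun j _ =>
              mul_le_mul_of_nonneg_right (hpM i j) (sq_nonneg _)
        _ = (n:ℝ)⁻¹ * (pM * ∑ i, ∑ j, (Q j i * b i)^2) := by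
            simp only [hueq, Finset.mul_sum]
            refine Finset.sum_congr rfl fun i _ => Finset.sum_congr rfl fun j _ => by ring
    have hrec : ∀ (j i : Fin N), Q j i * b i
        = (if j = i then b i else 0) + γ * ∑ c, P j c * (Q c i * b i) := by
      intro j i
      have h1 : Q j i * b i
          = ((if j = i then 1 else 0) + γ * ∑ c, P j c * Q c i) * b i := by
        rw [← hQ1e j i]
      rw [h1, add_mul, ite_mul, one_mul, zero_mul]
      congr 1
      rw [mul_assoc, Finset.sum_mul]
      congr 1
      exact Finset.sum_congr rfl fun c _ => by ring
    have expand_i : ∀ i, ∑ j, (Q j i * b i)^2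
        = (b i)^2 + 2*γ*(b i * ∑ c, P i c * (Q c i * b i))
          + γ^2 * ∑ j, (∑ c, P j c * (Q c i * b i))^2 := by
      intro i
      have per : ∀ j, (Q j i * b i)^2
          = (if j = i then (b i)^2 else 0)
            + (if j = i then 2*γ*(b i * ∑ c, P j c * (Q c i * b i)) else 0)
            + γ^2 * (∑ c, P j c * (Q c i * b i))^2 := by
        intro j
        rw [hrec j i]
        split_ifs with h <;> ring
      rw [Finset.sum_congr rfl (fun j _ => per j), Finset.sum_add_distrib,
        Finset.sum_add_distrib,
        Finset.sum_ite_eq' Finset.univ i (fun _ => (b i)^2),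
        Finset.sum_ite_eq' Finset.univ i
          (fun j => 2*γ*(b i * ∑ c, P j c * (Q c i * b i))), ← Finset.mul_sum]
      simp only [Finset.mem_univ, if_true]
    have rowsq : ∀ c, ∑ i, (Q c i * b i)^2 ≤ (bM * (1-γ)⁻¹)^2 := by
      intro c
      have h1 : ∀ i, (Q c i * b i)^2 ≤ (Q c i)^2 * bM^2 := by
        intro i
        have hb2 : (b i)^2 ≤ bM^2 := by nlinarith [hbM i, abs_nonneg (b i), sq_abs (b i)]
        calc (Q c i * b i)^2 = (Q c i)^2 * (b i)^2 := by ring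
          _ ≤ (Q c i)^2 * bM^2 := mul_le_mul_of_nonneg_left hb2 (sq_nonneg _)
      calc ∑ i, (Q c i * b i)^2 ≤ ∑ i, (Q c i)^2 * bM^2 :=
            Finset.sum_le_sum fun i _ => h1 i
        _ = (∑ i, (Q c i)^2) * bM^2 := (Finset.sum_mul _ _ _).symm
        _ ≤ ((1-γ)⁻¹)^2 * bM^2 := by
            refine mul_le_mul_of_nonneg_right ?_ (sq_nonneg _)
            have h2 : ∑ i, (Q c i)^2 = ∑ i, |Q c i|^2 :=
              Finset.sum_congr rfl fun i _ => (sq_abs _).symm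
            rw [h2]
            refine le_trans (sum_sq_le_sq_sum' Finset.univ _ (fun i _ => abs_nonneg _)) ?_
            exact pow_le_pow_left₀ (Finset.sum_nonneg fun i _ => abs_nonneg _) (hrow c) 2
        _ = (bM * (1-γ)⁻¹)^2 := by ring
    have SYb : ∑ i, ∑ j, (∑ c, P j c * (Q c i * b i))^2 ≤ (N:ℝ) * (bM * (1-γ)⁻¹)^2 := by
      have j1 : ∀ (i j : Fin N), (∑ c, P j c * (Q c i * b i))^2
          ≤ ∑ c, P j c * (Q c i * b i)^2 := by
        intro i j
        have h := weighted_cs' Finset.univ (P j) (fun c => Q c i * b i) (fun c _ => hP0 j c)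
        rw [hP1 j, one_mul] at h
        exact h
      calc ∑ i, ∑ j, (∑ c, P j c * (Q c i * b i))^2
          ≤ ∑ i, ∑ j, ∑ c, P j c * (Q c i * b i)^2 :=
            Finset.sum_le_sum fun i _ => Finset.sum_le_sum fun j _ => j1 i j
        _ = ∑ j, ∑ c, P j c * (∑ i, (Q c i * b i)^2) := by
            rw [Finset.sum_comm]
            refine Finset.sum_congr rfl fun j _ => ?_
            rw [Finset.sum_comm]
            refine Finset.sum_congr rfl fun c _ => ?_
            rw [Finset.mul_sum]
        _ ≤ ∑ j, ∑ c, P j c * (bM * (1-γ)⁻¹)^2 :=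
            Finset.sum_le_sum fun j _ => Finset.sum_le_sum fun c _ =>
              mul_le_mul_of_nonneg_left (rowsq c) (hP0 j c)
        _ = ∑ _j : Fin N, (bM * (1-γ)⁻¹)^2 := Finset.sum_congr rfl fun j _ => by
              rw [← Finset.sum_mul, hP1 j, one_mul]
        _ = (N:ℝ) * (bM * (1-γ)⁻¹)^2 := by
            rw [Finset.sum_const, Finset.card_univ, Fintype.card_fin, nsmul_eq_mul]
    have SXYb : ∑ i, b i * (∑ c, P i c * (Q c i * b i)) ≤ s0 * R := by
      have cs := Finset.sum_mul_sq_le_sq_mul_sq Finset.univ b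
        (fun i => ∑ c, P i c * (Q c i * b i))
      have hYii : ∑ i, (∑ c, P i c * (Q c i * b i))^2 ≤ (N:ℝ) * (bM * (1-γ)⁻¹)^2 := by
        refine le_trans ?_ SYb
        refine Finset.sum_le_sum fun i _ => ?_
        exact Finset.single_le_sum
          (f := fun j => (∑ c, P j c * (Q c i * b i))^2)
          (fun j _ => sq_nonneg _) (Finset.mem_univ i)
      have hsq : (∑ i, b i * (∑ c, P i c * (Q c i * b i)))^2
          ≤ (∑ i, b i ^2) * ((N:ℝ) * (bM * (1-γ)⁻¹)^2) := by
        refine le_trans cs ?_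
        exact mul_le_mul_of_nonneg_left hYii (Finset.sum_nonneg fun i _ => sq_nonneg _)
      have h2 : ∑ i, b i * (∑ c, P i c * (Q c i * b i))
          ≤ Real.sqrt ((∑ i, b i^2) * ((N:ℝ) * (bM * (1-γ)⁻¹)^2)) := by
        calc ∑ i, b i * (∑ c, P i c * (Q c i * b i))
            ≤ |∑ i, b i * (∑ c, P i c * (Q c i * b i))| := le_abs_self _
          _ = Real.sqrt ((∑ i, b i * (∑ c, P i c * (Q c i * b i)))^2) :=
              (Real.sqrt_sq_eq_abs _).symm
          _ ≤ _ := Real.sqrt_le_sqrt hsq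
      refine le_trans h2 (le_of_eq ?_)
      rw [Real.sqrt_mul hnb2.le, Real.sqrt_mul (Nat.cast_nonneg N),
        Real.sqrt_sq (mul_nonneg hbM0 (by positivity))]
    have m2b : ∑ i, ∑ j, (Q j i * b i)^2 ≤ (s0 + γ * R)^2 := by
      rw [Finset.sum_congr rfl (fun i _ => expand_i i), Finset.sum_add_distrib,
        Finset.sum_add_distrib]
      have t1 : ∑ i, 2*γ*(b i * ∑ c, P i c * (Q c i * b i))
          = 2*γ*∑ i, b i * ∑ c, P i c * (Q c i * b i) := by rw [Finset.mul_sum]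
      have t2 : ∑ i, γ^2 * ∑ j, (∑ c, P j c * (Q c i * b i))^2
          = γ^2 * ∑ i, ∑ j, (∑ c, P j c * (Q c i * b i))^2 := by rw [Finset.mul_sum]
      rw [t1, t2]
      have e1 : 2*γ*(∑ i, b i * ∑ c, P i c * (Q c i * b i)) ≤ 2*γ*(s0*R) :=
        mul_le_mul_of_nonneg_left SXYb (by positivity)
      have e2 : γ^2 * (∑ i, ∑ j, (∑ c, P j c * (Q c i * b i))^2) ≤ γ^2 * R^2 := by
        refine mul_le_mul_of_nonneg_left ?_ (sq_nonneg γ)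
        refine le_trans SYb (le_of_eq ?_)
        rw [hRdef, mul_pow (Real.sqrt (N:ℝ)) (bM*(1-γ)⁻¹) 2,
          Real.sq_sqrt (Nat.cast_nonneg N)]
      linarith [e1, e2, hs0sq.symm, sq_nonneg (s0 + γ*R)]
    have hfin : γ^2 * ((n:ℝ)⁻¹ * (pM * (s0 + γ*R)^2)) = τ * (∑ i, b i^2) := by
      rw [hτeq, hRdef, ← hs0sq]
      field_simp
    calc γ^2 * ∑ i, (b i)^2 * Bqf n P i (u i) (u i)
        ≤ γ^2 * ((n:ℝ)⁻¹ * (pM * ∑ i, ∑ j, (Q j i * b i)^2)) :=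
          mul_le_mul_of_nonneg_left stepA (sq_nonneg γ)
      _ ≤ γ^2 * ((n:ℝ)⁻¹ * (pM * (s0 + γ*R)^2)) := by
          refine mul_le_mul_of_nonneg_left (mul_le_mul_of_nonneg_left
            (mul_le_mul_of_nonneg_left m2b hpM0) (by positivity)) (sq_nonneg γ)
      _ = τ * ∑ i, b i^2 := hfin
  -- psd decomposition
  have hsplit : ∀ x : Fin N → ℝ,
      0 ≤ (∑ i, Bqf n P i (Q *ᵥ x) (Q *ᵥ x)) + 2 * (∑ i, x i * Bqf n P i (u i) (Q *ᵥ x))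
        + ∑ i, (x i)^2 * Bqf n P i (u i) (u i) := by
    intro x
    have e : ∀ i, Bqf n P i (Q *ᵥ x) (Q *ᵥ x) + 2 * (x i) * Bqf n P i (u i) (Q *ᵥ x)
        + (x i)^2 * Bqf n P i (u i) (u i)
        = Bqf n P i (fun j => (Q *ᵥ x) j + x i * u i j) (fun j => (Q *ᵥ x) j + x i * u i j) :=
      fun i => (Bqexp i (Q *ᵥ x) (u i) (x i)).symm
    have h : 0 ≤ ∑ i, (Bqf n P i (Q *ᵥ x) (Q *ᵥ x) + 2 * (x i) * Bqf n P i (u i) (Q *ᵥ x)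
        + (x i)^2 * Bqf n P i (u i) (u i)) := by
      rw [Finset.sum_congr rfl (fun i _ => e i)]
      exact Finset.sum_nonneg fun i _ => Bqnn i _
    rw [Finset.sum_add_distrib, Finset.sum_add_distrib] at h
    have e2 : ∑ i, 2 * (x i) * Bqf n P i (u i) (Q *ᵥ x)
        = 2 * ∑ i, x i * Bqf n P i (u i) (Q *ᵥ x) := by
      rw [Finset.mul_sum]; exact Finset.sum_congr rfl fun i _ => by ring
    rw [← e2]
    exact h
  have hquad : ∀ x : Fin N → ℝ, 0 ≤ x ⬝ᵥ ((1 + G + H) *ᵥ x) := by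
    intro x
    have e : x ⬝ᵥ ((1 + G + H) *ᵥ x)
        = (∑ i, (x i)^2) + γ^2 * (∑ i, Bqf n P i (Q *ᵥ x) (Q *ᵥ x))
          + 2 * γ^2 * ∑ i, x i * Bqf n P i (u i) (Q *ᵥ x) := by
      rw [Matrix.add_mulVec, Matrix.add_mulVec, dotProduct_add, dotProduct_add,
        Matrix.one_mulVec, hdotG, hdotH]
      congr 1
      congr 1
      simp [dotProduct, sq]
    rw [e]
    have h1 := hsplit x
    have h2 : γ^2 * (∑ i, (x i)^2 * Bqf n P i (u i) (u i)) ≤ ∑ i, (x i)^2 := by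
      rw [Finset.mul_sum]
      refine Finset.sum_le_sum fun i _ => ?_
      have := hkey1 i
      have h3 : (x i)^2 * (γ^2 * Bqf n P i (u i) (u i)) ≤ (x i)^2 * 1 :=
        mul_le_mul_of_nonneg_left (hkey1 i) (sq_nonneg _)
      nlinarith
    nlinarith [mul_nonneg (sq_nonneg γ) h1]
  have htr : 0 ≤ Matrix.trace (S * (1 + G + H)) := by
    obtain ⟨C, hC⟩ : ∃ C : Matrix (Fin N) (Fin N) ℝ, S = Cᴴ * C := by
      open scoped MatrixOrder in
      exact ⟨CFC.sqrt S, by rw [(CFC.sqrt_nonneg S).posSemidef.isHermitian.eq,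
        CFC.sqrt_mul_sqrt_self S hS.nonneg]⟩
    rw [hC, Matrix.mul_assoc, Matrix.trace_mul_comm]
    rw [Matrix.trace]
    refine Finset.sum_nonneg fun i _ => ?_
    have e : ((C * (1 + G + H)) * Cᴴ).diag i
        = (fun k => C i k) ⬝ᵥ ((1 + G + H) *ᵥ (fun k => C i k)) := by
      simp only [Matrix.diag_apply, Matrix.mul_apply, Matrix.conjTranspose_apply,
        dotProduct, Matrix.mulVec, star_trivial]
      have l1 : ∀ x, (∑ j, C i j * (1 + G + H) j x) * C i x
          = ∑ j, C i j * (1 + G + H) j x * C i x := fun x => Finset.sum_mul _ _ _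
      have l2 : ∀ k, C i k * (∑ j, (1 + G + H) k j * C i j)
          = ∑ j, C i k * ((1 + G + H) k j * C i j) := fun k => Finset.mul_sum _ _ _
      rw [Finset.sum_congr rfl (fun x _ => l1 x), Finset.sum_congr rfl (fun k _ => l2 k)]
      rw [Finset.sum_comm]
      exact Finset.sum_congr rfl fun j _ => Finset.sum_congr rfl fun k _ => by ring
    rw [e]
    exact hquad _
  -- assemble
  have hnum : b ⬝ᵥ ((1 + (2:ℝ)⁻¹ • H) *ᵥ b)
      = (∑ i, b i ^ 2) + (2:ℝ)⁻¹ * (2 * γ^2 * ∑ i, b i * Bqf n P i (u i) (Q *ᵥ b)) := by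
    rw [Matrix.add_mulVec, dotProduct_add, Matrix.one_mulVec, Matrix.smul_mulVec,
      dotProduct_smul, smul_eq_mul, hdotH]
    congr 1
    simp [dotProduct, sq]
  have hdenb : b ⬝ᵥ ((1 + G + H) *ᵥ b)
      = (∑ i, b i ^ 2) + γ^2 * (∑ i, Bqf n P i (Q *ᵥ b) (Q *ᵥ b))
        + 2 * γ^2 * ∑ i, b i * Bqf n P i (u i) (Q *ᵥ b) := by
    rw [Matrix.add_mulVec, Matrix.add_mulVec, dotProduct_add, dotProduct_add,
      Matrix.one_mulVec, hdotG, hdotH]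
    congr 1
    congr 1
    simp [dotProduct, sq]
  set n2 : ℝ := ∑ i, b i ^ 2 with hn2_def
  set gg : ℝ := ∑ i, Bqf n P i (Q *ᵥ b) (Q *ᵥ b) with hgg_def
  set hh : ℝ := ∑ i, b i * Bqf n P i (u i) (Q *ᵥ b) with hhh_def
  set ss : ℝ := ∑ i, (b i)^2 * Bqf n P i (u i) (u i) with hss_def
  set T0 : ℝ := Matrix.trace (S * (1 + G + H)) with hT0_def
  have hg0 : 0 ≤ gg := Finset.sum_nonneg fun i _ => Bqnn i _
  have hs0 : 0 ≤ ss := Finset.sum_nonneg fun i _ =>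
    mul_nonneg (sq_nonneg _) (Bqnn i _)
  have hτ0 : 0 ≤ τ := by
    rw [hτeq]
    have : (0:ℝ) ≤ pM / n := div_nonneg hpM0 hn0.le
    positivity
  have hghs : 0 ≤ gg + 2 * hh + ss := hsplit b
  have e5 : γ^2 * ss ≤ τ * n2 := hs
  have hden_pos : 0 < b ⬝ᵥ ((1 + G + H) *ᵥ b) + T0 := by
    rw [hdenb]
    linarith [mul_nonneg (sq_nonneg γ) hghs, e5, hs0, htr,
      mul_le_mul_of_nonneg_right hτ hnb2.le, hnb2]
  rw [div_le_iff₀ hden_pos, hnum, hdenb]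
  have e1 : 0 ≤ (1/2 + τ) * (γ^2 * (gg + 2*hh + ss)) :=
    mul_nonneg (by linarith) (mul_nonneg (sq_nonneg γ) hghs)
  have e2 : (1/2 + τ) * (γ^2 * ss) ≤ 1 * (γ^2 * ss) :=
    mul_le_mul_of_nonneg_right (by linarith) (mul_nonneg (sq_nonneg γ) hs0)
  have e3 : 0 ≤ τ * T0 := mul_nonneg hτ0 htr
  have e4 : 0 ≤ τ * (γ^2 * gg) := mul_nonneg hτ0 (mul_nonneg (sq_nonneg γ) hg0)
  linarith [mul_nonneg (sq_nonneg γ) hg0, htr, e1, e2, e3, e4, e5, hnb2]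

/-- In the setting of Statement 10 (residual norm `M = I`), with
`p_M = max_{i,j} P_{ij}`, `b_M = max_i |b_i|`, and
`τ = (p_M/n)·(γ²/(1−γ)²)·((1−γ) + γ√N·b_M/‖b‖₂)²`: if `τ ≤ 1/2`, then `θ(b,P) ≤ 1 + τ`. -/
theorem stmt12 {N : ℕ} [NeZero N]
    (P : Matrix (Fin N) (Fin N) ℝ) (hP0 : ∀ i j, 0 ≤ P i j) (hP1 : ∀ i, ∑ j, P i j = 1)
    (γ : ℝ) (hγ : γ ∈ Set.Ioo (0 : ℝ) 1)
    (n : ℕ) (hn : 0 < n)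
    (b : Fin N → ℝ) (hb : b ≠ 0)
    (S : Matrix (Fin N) (Fin N) ℝ) (hS : S.PosSemidef) :
    letI A : Matrix (Fin N) (Fin N) ℝ := 1 - γ • P
    letI B : Fin N → Matrix (Fin N) (Fin N) ℝ :=
      fun i => (n : ℝ)⁻¹ • (Matrix.diagonal (P i) - Matrix.vecMulVec (P i) (P i))
    letI G : Matrix (Fin N) (Fin N) ℝ := γ ^ 2 • ((A⁻¹)ᵀ * (∑ i, B i) * A⁻¹)
    letI H : Matrix (Fin N) (Fin N) ℝ :=
      γ ^ 2 • (∑ i, (A⁻¹)ᵀ * B i * A⁻¹ * Matrix.single i i (1 : ℝ))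
        + γ ^ 2 • (∑ i, Matrix.single i i (1 : ℝ) * (A⁻¹)ᵀ * B i * A⁻¹)
    letI pM : ℝ := Finset.univ.sup' Finset.univ_nonempty (fun i =>
      Finset.univ.sup' Finset.univ_nonempty (fun j => P i j))
    letI bM : ℝ := Finset.univ.sup' Finset.univ_nonempty (fun i => |b i|)
    letI τ : ℝ := pM / n * (γ ^ 2 / (1 - γ) ^ 2) *
      ((1 - γ) + γ * Real.sqrt N * bM / Real.sqrt (∑ i, b i ^ 2)) ^ 2
    τ ≤ 1 / 2 →
      (b ⬝ᵥ ((1 + (2 : ℝ)⁻¹ • H) *ᵥ b))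
          / (b ⬝ᵥ ((1 + G + H) *ᵥ b) + Matrix.trace (S * (1 + G + H)))
        ≤ 1 + τ := by
  obtain ⟨hγ0, hγ1⟩ := hγ
  intro hτ
  have hpM' : ∀ i j, P i j ≤ Finset.univ.sup' Finset.univ_nonempty (fun i =>
      Finset.univ.sup' Finset.univ_nonempty (fun j => P i j)) := by
    intro i j
    refine le_trans (Finset.le_sup' (fun j => P i j) (Finset.mem_univ j)) ?_
    exact Finset.le_sup' (fun i => Finset.univ.sup' Finset.univ_nonempty (fun j => P i j))
      (Finset.mem_univ i)
  have hpM1' : Finset.univ.sup' Finset.univ_nonempty (fun i =>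
      Finset.univ.sup' Finset.univ_nonempty (fun j => P i j)) ≤ 1 := by
    refine Finset.sup'_le _ _ fun i _ => Finset.sup'_le _ _ fun j _ => ?_
    calc P i j ≤ ∑ k, P i k := Finset.single_le_sum (fun k _ => hP0 i k) (Finset.mem_univ j)
      _ = 1 := hP1 i
  have hbM' : ∀ i, |b i| ≤ Finset.univ.sup' Finset.univ_nonempty (fun i => |b i|) :=
    fun i => Finset.le_sup' (fun i => |b i|) (Finset.mem_univ i)
  exact stmt12_main P hP0 hP1 hγ0 hγ1 hn hb hS hpM' hpM1' hbM'
    _ (fun i => rfl) _ rfl _ rfl _ rfl rfl hτ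
end

section
/- Let P ∈ ℝ^{N×N} be row-stochastic, γ ∈ (0,1), b ∈ ℝ^N, b_M = max_i |b_i|, and define k ∈ ℝ^N by k_i = (1/(1 − γ))·((1 − γ)|b_i| + γ b_M). Then ‖(I − γP)^{-1} b‖₂ ≤ ‖k‖₂, and moreover ‖k‖₂² = (1/(1 − γ)²)·((1 − γ)²‖b‖₂² + N γ² b_M² + 2γ(1 − γ) b_M ‖b‖₁). -/
open Matrix BigOperators

section Aux

variable {N : ℕ} [NeZero N]

private lemma aux_mulVec_abs_le (P : Matrix (Fin N) (Fin N) ℝ)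
    (hP0 : ∀ i j, 0 ≤ P i j) (hP1 : ∀ i, ∑ j, P i j = 1)
    (v : Fin N → ℝ) (i : Fin N) :
    |(P *ᵥ v) i| ≤ Finset.univ.sup' Finset.univ_nonempty (fun j => |v j|) := by
  set vM := Finset.univ.sup' Finset.univ_nonempty (fun j => |v j|) with hvM
  calc |(P *ᵥ v) i| = |∑ j, P i j * v j| := rfl
    _ ≤ ∑ j, |P i j * v j| := Finset.abs_sum_le_sum_abs _ _
    _ = ∑ j, P i j * |v j| := by
        refine Finset.sum_congr rfl fun j _ => ?_
        rw [abs_mul, abs_of_nonneg (hP0 i j)]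
    _ ≤ ∑ j, P i j * vM := by
        refine Finset.sum_le_sum fun j _ => ?_
        exact mul_le_mul_of_nonneg_left (Finset.le_sup' (fun j => |v j|) (Finset.mem_univ j)) (hP0 i j)
    _ = vM := by rw [← Finset.sum_mul, hP1 i, one_mul]

end Aux

/-- Let `P` be row-stochastic, `γ ∈ (0,1)`, `b ∈ ℝ^N`, `b_M = max_i |b_i|`,
and `k_i = (1/(1−γ))·((1−γ)|b_i| + γ b_M)`. Then `‖(I − γP)⁻¹ b‖₂ ≤ ‖k‖₂` and
`‖k‖₂² = (1/(1−γ)²)·((1−γ)²‖b‖₂² + Nγ²b_M² + 2γ(1−γ)b_M‖b‖₁)`. -/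
theorem stmt15 {N : ℕ} [NeZero N]
    (P : Matrix (Fin N) (Fin N) ℝ) (hP0 : ∀ i j, 0 ≤ P i j) (hP1 : ∀ i, ∑ j, P i j = 1)
    (γ : ℝ) (hγ : γ ∈ Set.Ioo (0 : ℝ) 1)
    (b : Fin N → ℝ) :
    letI bM : ℝ := Finset.univ.sup' Finset.univ_nonempty (fun i => |b i|)
    letI k : Fin N → ℝ := fun i => (1 / (1 - γ)) * ((1 - γ) * |b i| + γ * bM)
    Real.sqrt (∑ i, ((1 - γ • P)⁻¹ *ᵥ b) i ^ 2) ≤ Real.sqrt (∑ i, k i ^ 2)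
    ∧ ∑ i, k i ^ 2
        = (1 / (1 - γ) ^ 2) *
            ((1 - γ) ^ 2 * (∑ i, b i ^ 2) + N * γ ^ 2 * bM ^ 2
              + 2 * γ * (1 - γ) * bM * ∑ i, |b i|) := by
  obtain ⟨hγ0, hγ1⟩ := hγ
  have h1γ : (0 : ℝ) < 1 - γ := by linarith
  set bM := Finset.univ.sup' Finset.univ_nonempty (fun i => |b i|) with hbMdef
  set k : Fin N → ℝ := fun i => (1 / (1 - γ)) * ((1 - γ) * |b i| + γ * bM) with hkdef
  have hbM : ∀ i, |b i| ≤ bM := fun i => Finset.le_sup' (fun j => |b j|) (Finset.mem_univ i)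
  have hbM0 : 0 ≤ bM := le_trans (abs_nonneg _) (hbM ⟨0, Nat.pos_of_ne_zero (NeZero.ne N)⟩)
  -- invertibility
  have hdet : (1 - γ • P).det ≠ 0 := by
    intro h
    obtain ⟨v, hAv, hv⟩ := (Matrix.exists_mulVec_eq_zero_iff).mpr h
    set vM := Finset.univ.sup' Finset.univ_nonempty (fun j => |v j|) with hvMdef
    have hveq : ∀ i, v i = γ * (P *ᵥ v) i := by
      intro i
      have := congrFun hv i
      simp only [Matrix.sub_mulVec, Matrix.one_mulVec, Matrix.smul_mulVec,
        Pi.sub_apply, Pi.smul_apply, smul_eq_mul, Pi.zero_apply] at this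
      linarith
    have hvM0 : 0 ≤ vM :=
      le_trans (abs_nonneg _) (Finset.le_sup' (fun j => |v j|) (Finset.mem_univ ⟨0, Nat.pos_of_ne_zero (NeZero.ne N)⟩))
    have hle : vM ≤ γ * vM := by
      obtain ⟨i, _, hi⟩ := Finset.exists_mem_eq_sup' (Finset.univ_nonempty) (fun j => |v j|)
      have hiv : vM = |v i| := hvMdef.trans hi
      have h2 : |v i| ≤ γ * vM :=
        calc |v i| = γ * |(P *ᵥ v) i| := by rw [hveq i, abs_mul, abs_of_pos hγ0]
          _ ≤ γ * vM := by
              have := aux_mulVec_abs_le P hP0 hP1 v i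
              exact mul_le_mul_of_nonneg_left this (le_of_lt hγ0)
      linarith
    have hvM0' : vM ≤ 0 := by nlinarith
    apply hAv
    funext i
    have h1 : |v i| ≤ vM := Finset.le_sup' (fun j => |v j|) (Finset.mem_univ i)
    have : |v i| = 0 := le_antisymm (le_trans h1 hvM0') (abs_nonneg _)
    simpa using abs_eq_zero.mp this
  set x : Fin N → ℝ := (1 - γ • P)⁻¹ *ᵥ b with hxdef
  have hAx : (1 - γ • P) *ᵥ x = b := by
    rw [hxdef, Matrix.mulVec_mulVec, Matrix.mul_nonsing_inv _ (isUnit_iff_ne_zero.mpr hdet), Matrix.one_mulVec]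
  have hxeq : ∀ i, x i = b i + γ * (P *ᵥ x) i := by
    intro i
    have := congrFun hAx i
    simp only [Matrix.sub_mulVec, Matrix.one_mulVec, Matrix.smul_mulVec,
      Pi.sub_apply, Pi.smul_apply, smul_eq_mul] at this
    linarith
  set xM := Finset.univ.sup' Finset.univ_nonempty (fun j => |x j|) with hxMdef
  have hxMle : xM ≤ bM + γ * xM := by
    obtain ⟨i, _, hi⟩ := Finset.exists_mem_eq_sup' (Finset.univ_nonempty) (fun j => |x j|)
    have hix : xM = |x i| := hxMdef.trans hi
    have h2 : |x i| ≤ bM + γ * xM :=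
      calc |x i| = |b i + γ * (P *ᵥ x) i| := by rw [hxeq i]
        _ ≤ |b i| + |γ * (P *ᵥ x) i| := abs_add_le _ _
        _ ≤ bM + γ * xM := by
            refine add_le_add (hbM i) ?_
            rw [abs_mul, abs_of_pos hγ0]
            exact mul_le_mul_of_nonneg_left (aux_mulVec_abs_le P hP0 hP1 x i) (le_of_lt hγ0)
    linarith
  have hxMbound : xM ≤ bM / (1 - γ) := by
    rw [le_div_iff₀ h1γ]; nlinarith
  have hxk : ∀ i, |x i| ≤ k i := by
    intro i
    have h1 : |x i| ≤ |b i| + γ * xM := by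
      calc |x i| = |b i + γ * (P *ᵥ x) i| := by rw [hxeq i]
        _ ≤ |b i| + |γ * (P *ᵥ x) i| := abs_add_le _ _
        _ ≤ |b i| + γ * xM := by
            refine add_le_add_right ?_ _
            rw [abs_mul, abs_of_pos hγ0]
            exact mul_le_mul_of_nonneg_left (aux_mulVec_abs_le P hP0 hP1 x i) (le_of_lt hγ0)
    have h2 : k i = |b i| + γ * (bM / (1 - γ)) := by
      rw [hkdef]; field_simp
    rw [h2]
    have : γ * xM ≤ γ * (bM / (1 - γ)) := mul_le_mul_of_nonneg_left hxMbound (le_of_lt hγ0)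
    linarith
  constructor
  · apply Real.sqrt_le_sqrt
    refine Finset.sum_le_sum fun i _ => ?_
    calc x i ^ 2 = |x i| ^ 2 := (sq_abs _).symm
      _ ≤ k i ^ 2 := pow_le_pow_left₀ (abs_nonneg _) (hxk i) 2
  · have hterm : ∀ i, k i ^ 2
        = (1 / (1 - γ) ^ 2) * ((1 - γ) ^ 2 * b i ^ 2 + γ ^ 2 * bM ^ 2
            + 2 * γ * (1 - γ) * bM * |b i|) := by
      intro i
      rw [hkdef]
      field_simp
      linear_combination (1 - γ) ^ 2 * sq_abs (b i)
    calc ∑ i, k i ^ 2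
        = ∑ i, (1 / (1 - γ) ^ 2) * ((1 - γ) ^ 2 * b i ^ 2 + γ ^ 2 * bM ^ 2
            + 2 * γ * (1 - γ) * bM * |b i|) := Finset.sum_congr rfl fun i _ => hterm i
      _ = (1 / (1 - γ) ^ 2) *
            ((1 - γ) ^ 2 * (∑ i, b i ^ 2) + N * γ ^ 2 * bM ^ 2
              + 2 * γ * (1 - γ) * bM * ∑ i, |b i|) := by
          rw [← Finset.mul_sum]
          congr 1
          rw [Finset.sum_add_distrib, Finset.sum_add_distrib, ← Finset.mul_sum,
            Finset.sum_const, Finset.card_univ, Fintype.card_fin, nsmul_eq_mul,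
            ← Finset.mul_sum]
          ring
end

section
/- Let P ∈ ℝ^{N×N} be row-stochastic, γ ∈ (0,1), b ∈ ℝ^N, b_M = max_i |b_i|, and define k ∈ ℝ^N by k_i = (1/(1 − γ))·((1 − γ)|b_i| + γ b_M). Then Σ_{i=1}^{N} ‖(I − γP)^{-1} diag(e_i) b‖₂² ≤ ‖k‖₂² and Σ_{i=1}^{N} ‖(I − γP)^{-1} diag(e_i) b‖₂ ≤ √N·‖k‖₂. -/
open Matrix BigOperators

/-- Let `P` be row-stochastic, `γ ∈ (0,1)`, `b ∈ ℝ^N`, `b_M = max_i |b_i|`,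
and `k_i = (1/(1−γ))·((1−γ)|b_i| + γ b_M)`. Then
`Σ_i ‖(I − γP)⁻¹ diag(e_i) b‖₂² ≤ ‖k‖₂²` and `Σ_i ‖(I − γP)⁻¹ diag(e_i) b‖₂ ≤ √N·‖k‖₂`. -/
theorem stmt16 {N : ℕ} [NeZero N]
    (P : Matrix (Fin N) (Fin N) ℝ) (hP0 : ∀ i j, 0 ≤ P i j) (hP1 : ∀ i, ∑ j, P i j = 1)
    (γ : ℝ) (hγ : γ ∈ Set.Ioo (0 : ℝ) 1)
    (b : Fin N → ℝ) :
    letI bM : ℝ := Finset.univ.sup' Finset.univ_nonempty (fun i => |b i|)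
    letI k : Fin N → ℝ := fun i => (1 / (1 - γ)) * ((1 - γ) * |b i| + γ * bM)
    letI a : Fin N → Fin N → ℝ :=
      fun i => (1 - γ • P)⁻¹ *ᵥ (Matrix.single i i (1 : ℝ) *ᵥ b)
    (∑ i, ∑ j, a i j ^ 2 ≤ ∑ i, k i ^ 2)
    ∧ ∑ i, Real.sqrt (∑ j, a i j ^ 2) ≤ Real.sqrt N * Real.sqrt (∑ i, k i ^ 2) := by
  obtain ⟨hγ0, hγ1⟩ := hγ
  set bM : ℝ := Finset.univ.sup' Finset.univ_nonempty (fun i => |b i|) with hbMdef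
  set k : Fin N → ℝ := fun i => (1 / (1 - γ)) * ((1 - γ) * |b i| + γ * bM) with hkdef
  set a : Fin N → Fin N → ℝ :=
    fun i => (1 - γ • P)⁻¹ *ᵥ (Matrix.single i i (1 : ℝ) *ᵥ b) with haDef
  have h1γ : (0:ℝ) < 1 - γ := by linarith
  set A : Matrix (Fin N) (Fin N) ℝ := 1 - γ • P with hA
  have hPle1 : ∀ i, P i i ≤ 1 := by
    intro i
    calc P i i ≤ ∑ j, P i j := Finset.single_le_sum (fun j _ => hP0 i j) (Finset.mem_univ i)
    _ = 1 := hP1 i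
  have hdet : A.det ≠ 0 := by
    apply det_ne_zero_of_sum_row_lt_diag
    intro i
    have h1 : ∀ j ∈ Finset.univ.erase i, ‖A i j‖ = γ * P i j := by
      intro j hj
      have hji : j ≠ i := (Finset.mem_erase.mp hj).1
      simp only [hA, Matrix.sub_apply, Matrix.smul_apply, Matrix.one_apply,
        if_neg (Ne.symm hji), smul_eq_mul, Real.norm_eq_abs]
      rw [zero_sub, abs_neg, abs_of_nonneg (mul_nonneg hγ0.le (hP0 i j))]
    rw [Finset.sum_congr rfl h1]
    have h2 : ∑ j ∈ Finset.univ.erase i, γ * P i j = γ * (1 - P i i) := by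
      rw [← Finset.mul_sum]
      congr 1
      have := Finset.add_sum_erase Finset.univ (P i) (Finset.mem_univ i)
      rw [hP1 i] at this
      linarith
    rw [h2]
    have hAii : ‖A i i‖ = 1 - γ * P i i := by
      have hv : A i i = 1 - γ * P i i := by
        simp [hA, Matrix.sub_apply, Matrix.smul_apply, Matrix.one_apply_eq]
      rw [hv, Real.norm_eq_abs, abs_of_nonneg]
      nlinarith [hP0 i i, hPle1 i]
    rw [hAii]
    nlinarith [hP0 i i, hPle1 i]
  set M : Matrix (Fin N) (Fin N) ℝ := A⁻¹ with hMdef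
  have hM : A * M = 1 := Matrix.mul_nonsing_inv A (Ne.isUnit hdet)
  have key : ∀ j i, M j i = (if j = i then (1:ℝ) else 0) + γ * ∑ l, P j l * M l i := by
    intro j i
    have h := congrFun (congrFun hM j) i
    rw [Matrix.mul_apply, Matrix.one_apply] at h
    have h2 : ∑ l, A j l * M l i = M j i - γ * ∑ l, P j l * M l i := by
      rw [Finset.mul_sum]
      rw [show ∑ l, A j l * M l i
          = ∑ l, ((if j = l then (1:ℝ) else 0) * M l i - γ * (P j l * M l i)) by
        apply Finset.sum_congr rfl; intro l _
        simp only [hA, Matrix.sub_apply, Matrix.smul_apply, Matrix.one_apply, smul_eq_mul]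
        ring]
      rw [Finset.sum_sub_distrib]
      simp [Finset.sum_ite_eq]
    rw [h2] at h
    rw [← h]; ring
  -- the row `ℓ¹`-type quantity `f`
  set f : Fin N → ℝ := fun j => ∑ i, |M j i| * |b i| with hf
  have hbMle : ∀ i, |b i| ≤ bM := by
    intro i; rw [hbMdef]; exact Finset.le_sup' (fun i => |b i|) (Finset.mem_univ i)
  have hbM0 : 0 ≤ bM := by
    have i0 : Fin N := ⟨0, Nat.pos_of_ne_zero (NeZero.ne N)⟩
    exact le_trans (abs_nonneg (b i0)) (hbMle i0)
  have hf0 : ∀ j, 0 ≤ f j := fun j => Finset.sum_nonneg fun i _ => by positivity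
  set S : ℝ := Finset.univ.sup' Finset.univ_nonempty f with hSdef
  have hfS : ∀ j, f j ≤ S := by
    intro j; rw [hSdef]; exact Finset.le_sup' f (Finset.mem_univ j)
  have hstep : ∀ j, f j ≤ |b j| + γ * S := by
    intro j
    have h1 : f j ≤ ∑ i, ((if j = i then (1:ℝ) else 0) + γ * ∑ l, P j l * |M l i|) * |b i| := by
      apply Finset.sum_le_sum
      intro i _
      apply mul_le_mul_of_nonneg_right _ (abs_nonneg _)
      rw [key j i]
      calc |(if j = i then (1:ℝ) else 0) + γ * ∑ l, P j l * M l i|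
          ≤ |(if j = i then (1:ℝ) else 0)| + |γ * ∑ l, P j l * M l i| := abs_add_le _ _
        _ ≤ (if j = i then (1:ℝ) else 0) + γ * ∑ l, P j l * |M l i| := by
            gcongr
            · split <;> simp
            · rw [abs_mul, abs_of_pos hγ0]
              gcongr
              calc |∑ l, P j l * M l i| ≤ ∑ l, |P j l * M l i| := Finset.abs_sum_le_sum_abs _ _
                _ = ∑ l, P j l * |M l i| := by
                    apply Finset.sum_congr rfl; intro l _
                    rw [abs_mul, abs_of_nonneg (hP0 j l)]
    have h2 : ∑ i, ((if j = i then (1:ℝ) else 0) + γ * ∑ l, P j l * |M l i|) * |b i|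
        = |b j| + γ * ∑ l, P j l * f l := by
      rw [show ∑ i, ((if j = i then (1:ℝ) else 0) + γ * ∑ l, P j l * |M l i|) * |b i|
          = ∑ i, ((if j = i then |b i| else 0) + γ * ∑ l, P j l * (|M l i| * |b i|)) from
        Finset.sum_congr rfl fun i _ => by
          have hx : (γ * ∑ l, P j l * |M l i|) * |b i|
              = γ * ∑ l, P j l * (|M l i| * |b i|) := by
            rw [mul_assoc, Finset.sum_mul]
            congr 1
            apply Finset.sum_congr rfl; intro l _; ring
          rw [add_mul, hx]
          congr 1
          split <;> simp]
      rw [Finset.sum_add_distrib, Finset.sum_ite_eq, if_pos (Finset.mem_univ j),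
        ← Finset.mul_sum, Finset.sum_comm]
      congr 2
      apply Finset.sum_congr rfl; intro l _
      rw [hf, ← Finset.mul_sum]
    have h3 : ∑ l, P j l * f l ≤ S := by
      calc ∑ l, P j l * f l ≤ ∑ l, P j l * S := by
            apply Finset.sum_le_sum; intro l _
            exact mul_le_mul_of_nonneg_left (hfS l) (hP0 j l)
        _ = S := by rw [← Finset.sum_mul, hP1 j, one_mul]
    calc f j ≤ |b j| + γ * ∑ l, P j l * f l := h2 ▸ h1
      _ ≤ |b j| + γ * S := by nlinarith
  have hSbound : S ≤ bM / (1 - γ) := by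
    obtain ⟨j, -, hj⟩ := Finset.exists_mem_eq_sup' Finset.univ_nonempty f
    have h := hstep j
    rw [← hj] at h
    rw [le_div_iff₀ h1γ]
    nlinarith [hbMle j]
  have hfk : ∀ j, f j ≤ k j := by
    intro j
    have : k j = |b j| + γ * (bM / (1 - γ)) := by
      show (1 / (1 - γ)) * ((1 - γ) * |b j| + γ * bM) = _
      field_simp
    rw [this]
    have := hstep j
    nlinarith [hstep j, hSbound]
  -- expression for a
  have ha : ∀ i j, a i j = M j i * b i := by
    intro i j
    show (M *ᵥ (Matrix.single i i (1 : ℝ) *ᵥ b)) j = M j i * b i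
    have hv : (Matrix.single i i (1 : ℝ) *ᵥ b) = fun l => if l = i then b i else 0 := by
      funext l
      simp [Matrix.mulVec, dotProduct, Matrix.single, ite_and, Finset.sum_ite_eq,
        eq_comm]
    rw [hv]
    simp [Matrix.mulVec, dotProduct, Finset.sum_ite_eq, mul_ite]
  -- part 1
  have hk0 : ∀ j, 0 ≤ k j := fun j => le_trans (hf0 j) (hfk j)
  have part1 : ∑ i, ∑ j, a i j ^ 2 ≤ ∑ i, k i ^ 2 := by
    rw [Finset.sum_comm]
    apply Finset.sum_le_sum
    intro j _
    calc ∑ i, a i j ^ 2 = ∑ i, (|M j i| * |b i|) ^ 2 := by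
          apply Finset.sum_congr rfl; intro i _
          rw [ha i j, ← abs_mul, sq_abs]
      _ ≤ (∑ i, |M j i| * |b i|) ^ 2 :=
          Finset.sum_sq_le_sq_sum_of_nonneg (fun i _ => by positivity)
      _ = f j ^ 2 := rfl
      _ ≤ k j ^ 2 := by
          have := hfk j; have := hf0 j
          nlinarith
  refine ⟨part1, ?_⟩
  -- part 2
  have hs0 : ∀ i, 0 ≤ ∑ j, a i j ^ 2 := fun i => Finset.sum_nonneg fun j _ => sq_nonneg _
  have hT2 : (∑ i, Real.sqrt (∑ j, a i j ^ 2)) ^ 2 ≤ N * ∑ i, ∑ j, a i j ^ 2 := by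
    calc (∑ i, Real.sqrt (∑ j, a i j ^ 2)) ^ 2
        ≤ (Finset.univ.card : ℝ) * ∑ i, (Real.sqrt (∑ j, a i j ^ 2)) ^ 2 :=
          sq_sum_le_card_mul_sum_sq (s := (Finset.univ : Finset (Fin N)))
            (f := fun i => Real.sqrt (∑ j, a i j ^ 2))
      _ = N * ∑ i, ∑ j, a i j ^ 2 := by
          rw [Finset.card_univ, Fintype.card_fin]
          congr 1
          apply Finset.sum_congr rfl
          intro i _
          exact Real.sq_sqrt (hs0 i)
  have hT0 : 0 ≤ ∑ i, Real.sqrt (∑ j, a i j ^ 2) :=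
    Finset.sum_nonneg fun i _ => Real.sqrt_nonneg _
  calc ∑ i, Real.sqrt (∑ j, a i j ^ 2)
      = Real.sqrt ((∑ i, Real.sqrt (∑ j, a i j ^ 2)) ^ 2) := (Real.sqrt_sq hT0).symm
    _ ≤ Real.sqrt (N * ∑ i, ∑ j, a i j ^ 2) := Real.sqrt_le_sqrt hT2
    _ ≤ Real.sqrt (N * ∑ i, k i ^ 2) := by
        apply Real.sqrt_le_sqrt
        have : (0:ℝ) ≤ N := Nat.cast_nonneg N
        nlinarith [part1]
    _ = Real.sqrt N * Real.sqrt (∑ i, k i ^ 2) := Real.sqrt_mul (Nat.cast_nonneg N) _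
end
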